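/- arXiv:2209.05119 — 9 statements merged into one kernel-verified Lean document; each statement's English description precedes it below -/
import Mathlib

section
/- For any integers p > s ≥ 2, any strictly increasing injection h : {0,...,s-1} → {0,...,p-1}, and any positive integer n with s-ary expansion n = Σ_{i=0}^k ε_i s^i, define a_n = Σ_{i=0}^k h(ε_i) p^i. Then there exist constants 0 < c₁ ≤ c₂ such that c₁ ≤ a_n / n^{log_s p} ≤ c₂ for all n ≥ 1; that is, the growth order of a_n is n^{log_s p}. -/
open Real Filter Set MeasureTheory Topology
open scoped Classical ENNReal

/-- The Cantor-integer function: apply the digit map `h` to the `s`-ary digits of `n`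
and read the result in base `p`. -/
def cantorInt (p s : ℕ) (h : ℕ → ℕ) (n : ℕ) : ℕ :=
  (Nat.digits s n).foldr (fun d acc => h d + p * acc) 0

/-- `b n = a n / n ^ (log_s p)`. -/
noncomputable def cantorB (p s : ℕ) (h : ℕ → ℕ) (n : ℕ) : ℝ :=
  (cantorInt p s h n : ℝ) / (n : ℝ) ^ Real.logb s p

/-- `a(x) = a_⌊x⌋`. -/
noncomputable def cantorA (p s : ℕ) (h : ℕ → ℕ) (x : ℝ) : ℝ :=
  (cantorInt p s h ⌊x⌋₊ : ℝ)

lemma foldr_eq_ofDigits (p : ℕ) (h : ℕ → ℕ) (l : List ℕ) :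
    l.foldr (fun d acc => h d + p * acc) 0 = Nat.ofDigits p (l.map h) := by
  induction l with
  | nil => simp [Nat.ofDigits]
  | cons d tl ih => simp [Nat.ofDigits_cons, ih]

lemma cantorInt_eq (p s : ℕ) (h : ℕ → ℕ) (n : ℕ) :
    cantorInt p s h n = Nat.ofDigits p ((Nat.digits s n).map h) :=
  foldr_eq_ofDigits p h _

theorem stmt0 (p s : ℕ) (h : ℕ → ℕ) (hs : 2 ≤ s) (hp : s < p)
    (hmono : ∀ i j, i < j → j < s → h i < h j)
    (hrange : ∀ i, i < s → h i < p) :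
    ∃ c₁ c₂ : ℝ, 0 < c₁ ∧ c₁ ≤ c₂ ∧
      ∀ n : ℕ, 1 ≤ n → c₁ ≤ cantorB p s h n ∧ cantorB p s h n ≤ c₂ := by
  have hp3 : 3 ≤ p := by omega
  have hs1 : (1 : ℕ) < s := by omega
  have hp1 : (1 : ℕ) < p := by omega
  have hsR : (1 : ℝ) < (s : ℝ) := by exact_mod_cast hs1
  have hpR : (0 : ℝ) < (p : ℝ) := by positivity
  have hα : (0 : ℝ) ≤ Real.logb s p := by
    apply Real.logb_nonneg hsR
    exact_mod_cast hp1.le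
  -- s ^ α = p
  have hsp : (s : ℝ) ^ Real.logb s p = (p : ℝ) := by
    apply Real.rpow_logb (by positivity) (ne_of_gt hsR) hpR
  have key : ∀ m : ℕ, ((s : ℝ) ^ m : ℝ) ^ Real.logb s p = (p : ℝ) ^ m := by
    intro m
    rw [← Real.rpow_natCast (s : ℝ) m, ← Real.rpow_mul (by positivity), mul_comm,
      Real.rpow_mul (by positivity), hsp, Real.rpow_natCast]
  refine ⟨1 / p, p, by positivity, ?_, ?_⟩
  · rw [div_le_iff₀ hpR]
    have h3 : (3:ℝ) ≤ (p:ℝ) := by exact_mod_cast hp3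
    nlinarith
  intro n hn
  have hn0 : n ≠ 0 := by omega
  set L := Nat.digits s n with hL
  set k := L.length with hk
  have hLne : L ≠ [] := Nat.digits_ne_nil_iff_ne_zero.mpr hn0
  have hk1 : 1 ≤ k := List.length_pos_iff.mpr hLne
  -- numerator bounds
  have hub : cantorInt p s h n < p ^ k := by
    rw [cantorInt_eq]
    have hlen : (L.map h).length = k := by simp [hk]
    rw [← hlen]
    apply Nat.ofDigits_lt_base_pow_length hp1
    intro x hx
    obtain ⟨d, hd, rfl⟩ := List.mem_map.mp hx
    exact hrange d (Nat.digits_lt_base hs1 hd)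
  have hlb : p ^ k ≤ p * cantorInt p s h n := by
    rw [cantorInt_eq]
    obtain ⟨b, rfl⟩ : ∃ b, p = b + 2 := ⟨p - 2, by omega⟩
    have hmapne : L.map h ≠ [] := by simpa using hLne
    have hlast : (L.map h).getLast hmapne ≠ 0 := by
      rw [List.getLast_map]
      have hdmem : L.getLast hLne ∈ L := List.getLast_mem hLne
      have hdlt : L.getLast hLne < s := Nat.digits_lt_base hs1 hdmem
      have hdne : L.getLast hLne ≠ 0 := Nat.getLast_digit_ne_zero s hn0
      have : h 0 < h (L.getLast hLne) := hmono 0 _ (by omega) hdlt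
      omega
    have := Nat.pow_length_le_mul_ofDigits (b := b) hmapne hlast
    simpa [hk] using this
  -- n bounds
  have hnub : n < s ^ k := Nat.lt_base_pow_length_digits hs1
  have hnlb : s ^ (k - 1) ≤ n := by
    have h1 : s ^ k ≤ s * n := Nat.base_pow_length_digits_le s n hs1 hn0
    have h2 : s ^ k = s * s ^ (k - 1) := by
      rw [← pow_succ']
      congr 1
      omega
    have hs0 : 0 < s := by omega
    rw [h2] at h1
    exact Nat.le_of_mul_le_mul_left h1 hs0
  -- denominator bounds
  have hnR : (0:ℝ) < (n:ℝ) := by exact_mod_cast Nat.pos_of_ne_zero hn0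
  have hDub : (n : ℝ) ^ Real.logb s p ≤ (p : ℝ) ^ k := by
    rw [← key k]
    apply Real.rpow_le_rpow hnR.le _ hα
    exact_mod_cast hnub.le
  have hDlb : (p : ℝ) ^ (k - 1) ≤ (n : ℝ) ^ Real.logb s p := by
    rw [← key (k - 1)]
    apply Real.rpow_le_rpow (by positivity) _ hα
    exact_mod_cast hnlb
  have hD0 : (0:ℝ) < (n : ℝ) ^ Real.logb s p := Real.rpow_pos_of_pos hnR _
  have haub : (cantorInt p s h n : ℝ) ≤ (p : ℝ) ^ k := by
    exact_mod_cast hub.le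
  have halb' : (p : ℝ) ^ (k - 1) ≤ (cantorInt p s h n : ℝ) := by
    have h1 : (p : ℝ) ^ k ≤ (p:ℝ) * (cantorInt p s h n : ℝ) := by exact_mod_cast hlb
    have hpk : (p:ℝ) ^ k = (p:ℝ) * (p:ℝ) ^ (k-1) := by
      rw [← pow_succ']
      congr 1
      omega
    nlinarith
  have hpk1 : (0:ℝ) < (p:ℝ) ^ (k-1) := by positivity
  have hpkk : (p:ℝ) ^ k = (p:ℝ) * (p:ℝ) ^ (k-1) := by
    rw [← pow_succ']; congr 1; omega
  constructor
  · unfold cantorB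
    rw [div_le_div_iff₀ hpR hD0]
    calc 1 * ((n : ℝ) ^ Real.logb s p) ≤ (p:ℝ) ^ k := by simpa using hDub
      _ = (p:ℝ) * (p:ℝ) ^ (k-1) := hpkk
      _ ≤ (cantorInt p s h n : ℝ) * (p:ℝ) := by nlinarith
  · unfold cantorB
    rw [div_le_iff₀ hD0]
    calc (cantorInt p s h n : ℝ) ≤ (p:ℝ) ^ k := haub
      _ = (p:ℝ) * (p:ℝ) ^ (k-1) := hpkk
      _ ≤ (p:ℝ) * ((n : ℝ) ^ Real.logb s p) := by nlinarith
end

section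
/- Let b_n = a_n / n^{log_s p}. For any positive integer n and any positive integer ℓ with 1 - s^{-ℓ} > log_p s, one has b_{s^ℓ n + s^ℓ - 1} < b_n. -/
set_option maxHeartbeats 800000


open Real Filter Set MeasureTheory Topology
open scoped Classical ENNReal

/-- digits of `s^ℓ - 1` are `ℓ` copies of `s-1`. -/
lemma digits_pow_sub_one {s : ℕ} (hs : 2 ≤ s) (ℓ : ℕ) :
    Nat.digits s (s ^ ℓ - 1) = List.replicate ℓ (s - 1) := by
  induction ℓ with
  | zero => simp
  | succ ℓ ih =>
    have hk : 1 ≤ s ^ ℓ := Nat.one_le_pow _ _ (by omega)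
    have hsk : s ≤ s * s ^ ℓ := Nat.le_mul_of_pos_right s hk
    have hmul : s * (s ^ ℓ - 1) = s * s ^ ℓ - s := by
      rw [Nat.mul_sub, mul_one]
    have heq : s ^ (ℓ + 1) - 1 = (s - 1) + s * (s ^ ℓ - 1) := by
      rw [pow_succ, mul_comm (s ^ ℓ) s, hmul]; omega
    have hpos : 0 < s ^ (ℓ + 1) - 1 := by
      rw [heq]; omega
    rw [Nat.digits_def' (by omega : 1 < s) hpos, heq]
    have hmod : ((s - 1) + s * (s ^ ℓ - 1)) % s = s - 1 := by
      rw [Nat.add_mul_mod_self_left, Nat.mod_eq_of_lt (by omega)]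
    have hdiv : ((s - 1) + s * (s ^ ℓ - 1)) / s = s ^ ℓ - 1 := by
      rw [Nat.add_mul_div_left _ _ (by omega : 0 < s), Nat.div_eq_of_lt (by omega)]
      omega
    rw [hmod, hdiv, ih, List.replicate_succ]

lemma foldr_replicate_append (p : ℕ) (h : ℕ → ℕ) (d : ℕ) (ℓ : ℕ) (L : List ℕ) :
    (List.replicate ℓ d ++ L).foldr (fun d acc => h d + p * acc) 0 =
      h d * (∑ i ∈ Finset.range ℓ, p ^ i) +
        p ^ ℓ * L.foldr (fun d acc => h d + p * acc) 0 := by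
  induction ℓ with
  | zero => simp
  | succ ℓ ih =>
    rw [List.replicate_succ, List.cons_append, List.foldr_cons, ih, geom_sum_succ]
    ring

lemma le_h_of_lt {s : ℕ} (h : ℕ → ℕ) (hmono : ∀ i j, i < j → j < s → h i < h j) :
    ∀ d, d < s → d ≤ h d := by
  intro d
  induction d with
  | zero => intro _; exact Nat.zero_le _
  | succ d ih =>
    intro hd
    have h1 := hmono d (d + 1) (by omega) hd
    have h2 := ih (by omega)
    omega

lemma ofDigits_le_foldr {p s : ℕ} (h : ℕ → ℕ) (hps : s ≤ p)
    (hmono : ∀ i j, i < j → j < s → h i < h j) :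
    ∀ L : List ℕ, (∀ d ∈ L, d < s) →
      (Nat.ofDigits s L : ℕ) ≤ L.foldr (fun d acc => h d + p * acc) 0 := by
  intro L
  induction L with
  | nil => simp [Nat.ofDigits]
  | cons d L ih =>
    intro hmem
    rw [Nat.ofDigits_cons, List.foldr_cons]
    have h1 : d ≤ h d := le_h_of_lt h hmono d (hmem d (by simp))
    have h2 := ih (fun x hx => hmem x (by simp [hx]))
    calc d + s * Nat.ofDigits s L ≤ h d + p * L.foldr (fun d acc => h d + p * acc) 0 :=
          Nat.add_le_add h1 (Nat.mul_le_mul hps h2)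

lemma self_le_cantorInt {p s : ℕ} (h : ℕ → ℕ) (hs : 2 ≤ s) (hps : s ≤ p)
    (hmono : ∀ i j, i < j → j < s → h i < h j) (n : ℕ) :
    n ≤ cantorInt p s h n := by
  have := ofDigits_le_foldr (p := p) h hps hmono (Nat.digits s n)
    (fun d hd => Nat.digits_lt_base (by omega) hd)
  rwa [Nat.ofDigits_digits] at this

theorem stmt2 (p s : ℕ) (h : ℕ → ℕ) (hs : 2 ≤ s) (hp : s < p)
    (hmono : ∀ i j, i < j → j < s → h i < h j)
    (hrange : ∀ i, i < s → h i < p)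
    (n ℓ : ℕ) (hn : 1 ≤ n) (hℓ : 1 ≤ ℓ)
    (hcond : 1 - (s : ℝ) ^ (-(ℓ : ℝ)) > Real.logb p s) :
    cantorB p s h (s ^ ℓ * n + s ^ ℓ - 1) < cantorB p s h n := by
  have hsk : 1 ≤ s ^ ℓ := Nat.one_le_pow _ _ (by omega)
  set m : ℕ := s ^ ℓ * n + s ^ ℓ - 1 with hm
  -- digits of m
  have hdig : Nat.digits s m = List.replicate ℓ (s - 1) ++ Nat.digits s n := by
    have hlen : (Nat.digits s (s ^ ℓ - 1)).length = ℓ := by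
      rw [digits_pow_sub_one hs]; simp
    have := Nat.digits_append_digits (b := s) (n := s ^ ℓ - 1) (m := n) (by omega)
    rw [hlen, digits_pow_sub_one hs] at this
    have hmn : s ^ ℓ - 1 + s ^ ℓ * n = m := by
      have h1 : 1 ≤ s ^ ℓ * n := Nat.le_mul_of_pos_right _ hn |>.trans' hsk
      omega
    rw [hmn] at this
    exact this.symm
  set a : ℕ := cantorInt p s h n with ha
  have han : n ≤ a := self_le_cantorInt h hs (by omega) hmono n
  have ham : cantorInt p s h m =
      h (s - 1) * (∑ i ∈ Finset.range ℓ, p ^ i) + p ^ ℓ * a := by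
    rw [cantorInt, hdig, foldr_replicate_append]; rfl
  -- real setup
  have hs0 : (0:ℝ) < s := by positivity
  have hs1 : (1:ℝ) < s := by exact_mod_cast (by omega : 1 < s)
  have hp1 : (1:ℝ) < p := by exact_mod_cast (by omega : 1 < p)
  have hsp : (s:ℝ) < p := by exact_mod_cast hp
  have hlogs : 0 < Real.log s := Real.log_pos hs1
  have hlogp : 0 < Real.log p := Real.log_pos hp1
  set α : ℝ := Real.logb s p with hα
  have hαval : α = Real.log p / Real.log s := rfl
  have hα1 : 1 < α := by
    rw [hαval]
    rw [lt_div_iff₀ hlogs, one_mul]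
    exact Real.log_lt_log hs0 hsp
  have hα0 : 0 < α := by linarith
  -- ε
  set ε : ℝ := ((s:ℝ) ^ ℓ)⁻¹ with hε
  have hεeq : (s : ℝ) ^ (-(ℓ : ℝ)) = ε := by
    rw [Real.rpow_neg hs0.le, Real.rpow_natCast]
  have hε0 : 0 < ε := by positivity
  have hε1 : ε ≤ 1 := by
    rw [hε]
    apply inv_le_one_of_one_le₀
    exact_mod_cast hsk
  have hcond' : Real.log s / Real.log p < 1 - ε := by
    rw [hεeq] at hcond
    exact hcond
  have hαε : 1 < α * (1 - ε) := by
    have h1 : α * (Real.log s / Real.log p) = 1 := by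
      rw [hαval]; field_simp
    calc (1:ℝ) = α * (Real.log s / Real.log p) := h1.symm
      _ < α * (1 - ε) := by
          apply mul_lt_mul_of_pos_left hcond' hα0
  -- m as real
  have hm1 : 1 ≤ m := by
    have h1 : 1 ≤ s ^ ℓ * n := Nat.le_mul_of_pos_right _ hn |>.trans' hsk
    omega
  have hmR : (m:ℝ) = (s:ℝ) ^ ℓ * ((n:ℝ) + (1 - ε)) := by
    have h1 : (m:ℕ) + 1 = s ^ ℓ * n + s ^ ℓ := by
      have h2 : 1 ≤ s ^ ℓ * n := Nat.le_mul_of_pos_right _ hn |>.trans' hsk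
      omega
    have h3 : ((m:ℝ)) + 1 = (s:ℝ) ^ ℓ * (n:ℝ) + (s:ℝ) ^ ℓ := by
      exact_mod_cast congrArg (Nat.cast : ℕ → ℝ) h1
    have h4 : (s:ℝ) ^ ℓ * ε = 1 := by
      rw [hε]; field_simp
    nlinarith [h3, h4]
  -- rpow computations
  have hspow : ((s:ℝ) ^ ℓ) ^ α = (p:ℝ) ^ ℓ := by
    rw [← Real.rpow_natCast (s:ℝ) ℓ, ← Real.rpow_mul hs0.le, mul_comm,
      Real.rpow_mul hs0.le, Real.rpow_logb hs0 (by linarith) (by positivity),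
      Real.rpow_natCast]
  have hnpos : (0:ℝ) < n := by exact_mod_cast hn
  have hn1ε : (0:ℝ) ≤ (n:ℝ) + (1 - ε) := by linarith
  have hmrpow : (m:ℝ) ^ α = (p:ℝ) ^ ℓ * ((n:ℝ) + (1 - ε)) ^ α := by
    rw [hmR, Real.mul_rpow (by positivity) hn1ε, hspow]
  -- Bernoulli
  have hsplit : (n:ℝ) + (1 - ε) = (n:ℝ) * (1 + (1 - ε) / n) := by
    field_simp
  have ht0 : (0:ℝ) ≤ (1 - ε) / n := div_nonneg (by linarith) hnpos.le
  have hbern : (n:ℝ) ^ α * (1 + α * ((1 - ε) / n)) ≤ ((n:ℝ) + (1 - ε)) ^ α := by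
    rw [hsplit, Real.mul_rpow hnpos.le (by linarith)]
    apply mul_le_mul_of_nonneg_left _ (Real.rpow_nonneg hnpos.le _)
    exact one_add_mul_self_le_rpow_one_add (by linarith) hα1.le
  -- bound on a_m
  have hamR : (cantorInt p s h m : ℝ) ≤ (p:ℝ) ^ ℓ * a + ((p:ℝ) ^ ℓ - 1) := by
    have hhle : (h (s-1) : ℝ) ≤ (p:ℝ) - 1 := by
      have := hrange (s-1) (by omega)
      have : h (s-1) ≤ p - 1 := by omega
      have hcast : ((h (s-1) : ℕ) : ℝ) ≤ ((p - 1 : ℕ) : ℝ) := by exact_mod_cast this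
      rwa [Nat.cast_sub (by omega), Nat.cast_one] at hcast
    have hG : ((∑ i ∈ Finset.range ℓ, p ^ i : ℕ) : ℝ) =
        ∑ i ∈ Finset.range ℓ, (p:ℝ) ^ i := by push_cast; ring
    have hGmul : ((p:ℝ) - 1) * (∑ i ∈ Finset.range ℓ, (p:ℝ) ^ i) = (p:ℝ) ^ ℓ - 1 := by
      have := geom_sum_mul (x := (p:ℝ)) ℓ
      linarith [this]
    have hGpos : (0:ℝ) ≤ ∑ i ∈ Finset.range ℓ, (p:ℝ) ^ i := by positivity
    rw [ham]
    push_cast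
    linarith [mul_le_mul_of_nonneg_right hhle hGpos]
  -- main inequality
  have hnα : (0:ℝ) < (n:ℝ) ^ α := Real.rpow_pos_of_pos hnpos _
  have hmpos : (0:ℝ) < m := by exact_mod_cast hm1
  have hmα : (0:ℝ) < (m:ℝ) ^ α := Real.rpow_pos_of_pos hmpos _
  rw [cantorB, cantorB, div_lt_div_iff₀ hmα hnα]
  have haR : (1:ℝ) ≤ (a:ℝ) := by exact_mod_cast han.trans' hn
  have hnaR : (n:ℝ) ≤ (a:ℝ) := by exact_mod_cast han
  have hP1 : (1:ℝ) ≤ (p:ℝ) ^ ℓ := by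
    exact_mod_cast Nat.one_le_cast.mpr (Nat.one_le_pow ℓ p (by omega))
  -- key: n < a * (α * (1 - ε))
  have ha0 : (0:ℝ) < (a:ℝ) := by linarith
  have hkey : (n:ℝ) < (a:ℝ) * (α * (1 - ε)) := by
    have h1 : (a:ℝ) * 1 < (a:ℝ) * (α * (1 - ε)) := mul_lt_mul_of_pos_left hαε ha0
    linarith
  have hfrac : (1:ℝ) < (a:ℝ) * (α * ((1 - ε) / n)) := by
    have heq : (a:ℝ) * (α * ((1 - ε) / n)) = (a:ℝ) * (α * (1 - ε)) / n := by ring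
    rw [heq]
    exact (one_lt_div hnpos).mpr hkey
  calc (cantorInt p s h m : ℝ) * (n:ℝ) ^ α
      ≤ ((p:ℝ) ^ ℓ * a + ((p:ℝ) ^ ℓ - 1)) * (n:ℝ) ^ α :=
        mul_le_mul_of_nonneg_right hamR hnα.le
    _ < (a:ℝ) * ((p:ℝ) ^ ℓ * ((n:ℝ) ^ α * (1 + α * ((1 - ε) / n)))) := by
        have hPn : (0:ℝ) < (p:ℝ) ^ ℓ * (n:ℝ) ^ α := by positivity
        have hstep := mul_lt_mul_of_pos_left hfrac hPn
        nlinarith [hstep, hnα]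
    _ ≤ (a:ℝ) * ((p:ℝ) ^ ℓ * ((n:ℝ) + (1 - ε)) ^ α) := by
        apply mul_le_mul_of_nonneg_left _ (by linarith)
        apply mul_le_mul_of_nonneg_left _ (by positivity)
        exact hbern
    _ = (a:ℝ) * (m:ℝ) ^ α := by rw [hmrpow]
end

section
/- Let b_n = a_n / n^{log_s p}. Then for all n ≥ 1, b_n ≤ b_{sn}, with equality for all n if and only if h(0) = 0. Moreover there exists N such that for all n > N, b_{sn+s-1} < b_{sn+s-2} < ... < b_{sn+1} < b_n. -/
open Real Filter Set MeasureTheory Topology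
open scoped Classical ENNReal

/-- Digit recursion: `a(s·n + i) = h i + p · a(n)` for `1 ≤ n`, `i < s`. -/
lemma cantorInt_mul_add (p s : ℕ) (h : ℕ → ℕ) (hs : 2 ≤ s) {n i : ℕ}
    (hn : 1 ≤ n) (hi : i < s) :
    cantorInt p s h (s * n + i) = h i + p * cantorInt p s h n := by
  have hpos : 0 < s * n + i := by positivity
  have hdig : Nat.digits s (s * n + i) = i :: Nat.digits s n := by
    rw [Nat.digits_def' (by omega : 1 < s) hpos]
    congr 1
    · rw [Nat.mul_add_mod, Nat.mod_eq_of_lt hi]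
    · congr 1
      rw [Nat.mul_add_div (by omega), Nat.div_eq_of_lt hi]
      omega
  simp [cantorInt, hdig]

lemma cantorInt_lt_base (p s : ℕ) (h : ℕ → ℕ) (hs : 2 ≤ s) {n : ℕ}
    (h1 : 1 ≤ n) (h2 : n < s) : cantorInt p s h n = h n := by
  have hdig : Nat.digits s n = [n] := by
    rw [Nat.digits_def' (by omega : 1 < s) (by omega), Nat.mod_eq_of_lt h2,
      Nat.div_eq_of_lt h2]
    simp
  simp [cantorInt, hdig]

/-- Lower bound `p ^ log_s n ≤ a(n)`. -/
lemma pow_log_le_cantorInt (p s : ℕ) (h : ℕ → ℕ) (hs : 2 ≤ s) (hp : s < p)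
    (hmono : ∀ i j, i < j → j < s → h i < h j) :
    ∀ n : ℕ, 1 ≤ n → p ^ Nat.log s n ≤ cantorInt p s h n := by
  intro n
  induction n using Nat.strong_induction_on with
  | _ n ih =>
    intro hn
    rcases lt_or_ge n s with hns | hns
    · rw [cantorInt_lt_base p s h hs hn hns]
      have : Nat.log s n = 0 := Nat.log_eq_zero_iff.mpr (Or.inl hns)
      rw [this, pow_zero]
      have := hmono 0 n (by omega) hns
      omega
    · have hsplit : s * (n / s) + n % s = n := Nat.div_add_mod n s
      have hq1 : 1 ≤ n / s := Nat.one_le_div_iff (by omega) |>.mpr hns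
      have hqlt : n / s < n := Nat.div_lt_self (by omega) (by omega)
      have hrec : cantorInt p s h n = h (n % s) + p * cantorInt p s h (n / s) := by
        conv_lhs => rw [← Nat.div_add_mod n s]
        exact cantorInt_mul_add p s h hs hq1 (Nat.mod_lt _ (by omega))
      have hIH := ih (n / s) hqlt hq1
      have hlog : Nat.log s (n / s) = Nat.log s n - 1 := Nat.log_div_base s n
      have hlogpos : 0 < Nat.log s n := Nat.log_pos (by omega) hns
      have : p ^ Nat.log s n = p * p ^ (Nat.log s n - 1) := by
        rw [← pow_succ']
        congr 1
        omega
      rw [hlog] at hIH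
      rw [this, hrec]
      have := Nat.mul_le_mul_left p hIH
      omega

/-- Numeric helper: `s^L * (s + L) ≤ s * (s+1)^L`. -/
lemma pow_succ_lb (s : ℕ) : ∀ L : ℕ, s ^ L * (s + L) ≤ s * (s + 1) ^ L := by
  intro L
  induction L with
  | zero => simp
  | succ L ih =>
    have h1 : s * (s + 1) ^ (L + 1) = s * (s + 1) ^ L * (s + 1) := by ring
    have h2 : s ^ L * (s + L) * (s + 1) ≤ s * (s + 1) ^ L * (s + 1) :=
      Nat.mul_le_mul_right _ ih
    have h3 : s ^ (L + 1) * (s + (L + 1)) ≤ s ^ L * (s + L) * (s + 1) := by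
      ring_nf
      nlinarith [pow_nonneg (Nat.zero_le s) L]
    omega

/-- For `n ≥ s^(s^3)`, `s*(n+1) ≤ a(n)`. -/
lemma cantorInt_large (p s : ℕ) (h : ℕ → ℕ) (hs : 2 ≤ s) (hp : s < p)
    (hmono : ∀ i j, i < j → j < s → h i < h j) {n : ℕ}
    (hn : s ^ s ^ 3 ≤ n) : s * (n + 1) ≤ cantorInt p s h n := by
  have hn1 : 1 ≤ n := le_trans (Nat.one_le_pow _ _ (by omega)) hn
  set L := Nat.log s n with hL
  have hLge : s ^ 3 ≤ L := by
    rw [hL, Nat.le_log_iff_pow_le (by omega : 1 < s) (by omega)]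
    exact hn
  have hnlt : n < s ^ (L + 1) := Nat.lt_pow_succ_log_self (by omega) n
  -- s * (s+1)^L ≥ s^L * (s + L) ≥ s^L * L ≥ s^L * s^3 = s * (s * s^(L+1))
  have h1 : s ^ L * L ≤ s * (s + 1) ^ L :=
    le_trans (Nat.mul_le_mul_left _ (by omega)) (pow_succ_lb s L)
  have h2 : s * (s * s ^ (L + 1)) ≤ s ^ L * L := by
    calc s * (s * s ^ (L + 1)) = s ^ L * s ^ 3 := by ring
    _ ≤ s ^ L * L := Nat.mul_le_mul_left _ hLge
  have h3 : s * (s * s ^ (L + 1)) ≤ s * (s + 1) ^ L := le_trans h2 h1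
  have h4 : s * s ^ (L + 1) ≤ (s + 1) ^ L := Nat.le_of_mul_le_mul_left h3 (by omega)
  have h5 : (s + 1) ^ L ≤ p ^ L := Nat.pow_le_pow_left (by omega) L
  have h6 : p ^ L ≤ cantorInt p s h n := pow_log_le_cantorInt p s h hs hp hmono n hn1
  have h7 : s * (n + 1) ≤ s * s ^ (L + 1) := Nat.mul_le_mul_left _ (by omega)
  omega

/-- Key real inequality via Bernoulli. -/
lemma key_ineq {a x A c d e : ℝ} (ha : 1 ≤ a) (hx : 1 ≤ x) (hc : 0 ≤ c)
    (hd : d ≤ c + e) (he : 0 ≤ e) (hA : e * x < A) :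
    (d + A) * x ^ a < (c + A) * (x + 1) ^ a := by
  have hx0 : 0 < x := lt_of_lt_of_le one_pos hx
  have hA0 : 0 < A := lt_of_le_of_lt (mul_nonneg he hx0.le) hA
  have hinv : 0 < 1 / x := by positivity
  have hxa : 0 < x ^ a := Real.rpow_pos_of_pos hx0 _
  have hb : 1 + a * (1 / x) ≤ (1 + 1 / x) ^ a :=
    one_add_mul_self_le_rpow_one_add (by linarith) ha
  have hmul : (x + 1) ^ a = x ^ a * (1 + 1 / x) ^ a := by
    rw [← Real.mul_rpow (le_of_lt hx0) (by linarith)]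
    congr 1
    field_simp
  have h1 : e < A * (1 / x) := by
    rw [mul_one_div, lt_div_iff₀ hx0]
    exact hA
  have h2 : A * (1 / x) ≤ a * (A * (1 / x)) :=
    le_mul_of_one_le_left (by positivity) ha
  have key : d + A < (c + A) * (1 + a * (1 / x)) := by
    nlinarith [mul_nonneg hc (mul_nonneg (by linarith : (0:ℝ) ≤ a) (by positivity : (0:ℝ) ≤ 1 / x))]
  have hstep : (c + A) * (1 + a * (1 / x)) ≤ (c + A) * (1 + 1 / x) ^ a :=
    mul_le_mul_of_nonneg_left hb (by linarith)
  calc (d + A) * x ^ a < (c + A) * (1 + a * (1 / x)) * x ^ a :=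
        mul_lt_mul_of_pos_right key hxa
    _ ≤ (c + A) * (1 + 1 / x) ^ a * x ^ a := mul_le_mul_of_nonneg_right hstep hxa.le
    _ = (c + A) * (x ^ a * (1 + 1 / x) ^ a) := by ring
    _ = (c + A) * (x + 1) ^ a := by rw [← hmul]

set_option maxHeartbeats 1000000 in
theorem stmt3 (p s : ℕ) (h : ℕ → ℕ) (hs : 2 ≤ s) (hp : s < p)
    (hmono : ∀ i j, i < j → j < s → h i < h j)
    (hrange : ∀ i, i < s → h i < p) :
    (∀ n : ℕ, 1 ≤ n → cantorB p s h n ≤ cantorB p s h (s * n)) ∧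
    ((∀ n : ℕ, 1 ≤ n → cantorB p s h n = cantorB p s h (s * n)) ↔ h 0 = 0) ∧
    (∃ N : ℕ, ∀ n : ℕ, N < n →
      (∀ i : ℕ, 1 ≤ i → i + 1 ≤ s - 1 →
        cantorB p s h (s * n + i + 1) < cantorB p s h (s * n + i)) ∧
      cantorB p s h (s * n + 1) < cantorB p s h n) := by
  have hs1 : (1:ℝ) < s := by exact_mod_cast (by omega : 1 < s)
  have hs2 : (2:ℝ) ≤ s := by exact_mod_cast hs
  have hp0 : (0:ℝ) < p := by exact_mod_cast (by omega : 0 < p)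
  have hp3 : (3:ℝ) ≤ p := by exact_mod_cast (by omega : 3 ≤ p)
  have hsp : (s:ℝ) ^ Real.logb s p = (p:ℝ) :=
    Real.rpow_logb (by linarith) (by linarith) hp0
  have hα1 : 1 ≤ Real.logb s p := by
    have h1 : Real.logb s s = 1 := Real.logb_self_eq_one (by linarith)
    rw [← h1]
    exact Real.logb_le_logb_of_le hs1 (by linarith) (by exact_mod_cast le_of_lt hp)
  have hBrec : ∀ n i : ℕ, 1 ≤ n → i < s →
      cantorB p s h (s * n + i)
        = ((h i : ℝ) + p * cantorInt p s h n) / ((s * n + i : ℕ) : ℝ) ^ Real.logb s p := by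
    intro n i hn hi
    simp only [cantorB, cantorInt_mul_add p s h hs hn hi]
    push_cast
    ring_nf
  have hmulpow : ∀ n : ℕ, 1 ≤ n →
      ((s * n : ℕ) : ℝ) ^ Real.logb s p = p * (n : ℝ) ^ Real.logb s p := by
    intro n hn
    have hn0 : (0:ℝ) < n := by exact_mod_cast hn
    push_cast
    rw [Real.mul_rpow (by linarith) hn0.le, hsp]
  have part1 : ∀ n : ℕ, 1 ≤ n → cantorB p s h n ≤ cantorB p s h (s * n) := by
    intro n hn
    have hn0 : (0:ℝ) < n := by exact_mod_cast hn
    have hnα : 0 < (n:ℝ) ^ Real.logb s p := Real.rpow_pos_of_pos hn0 _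
    have e1 : cantorB p s h (s * n)
        = ((h 0 : ℝ) + p * cantorInt p s h n) / (p * (n:ℝ) ^ Real.logb s p) := by
      have e := hBrec n 0 hn (by omega)
      rw [show s * n + 0 = s * n by ring] at e
      rw [e, hmulpow n hn]
    rw [e1]
    simp only [cantorB]
    rw [div_le_div_iff₀ hnα (by positivity)]
    have h0 : (0:ℝ) ≤ (h 0 : ℝ) := by positivity
    nlinarith [mul_nonneg h0 hnα.le]
  refine ⟨part1, ⟨?_, ?_⟩, ?_⟩
  · intro heq
    have h1s : 1 < s := by omega
    have e1 : cantorB p s h 1 = (h 1 : ℝ) := by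
      simp only [cantorB, cantorInt_lt_base p s h hs le_rfl h1s]
      simp [Real.one_rpow]
    have e2 : cantorB p s h (s * 1) = ((h 0 : ℝ) + p * (h 1 : ℝ)) / p := by
      have e := hBrec 1 0 le_rfl (by omega)
      rw [show s * 1 + 0 = s * 1 by ring] at e
      rw [e, hmulpow 1 le_rfl, cantorInt_lt_base p s h hs le_rfl h1s]
      push_cast
      rw [Real.one_rpow]
      ring_nf
    have heq1 := heq 1 le_rfl
    rw [e1, e2] at heq1
    field_simp at heq1
    have hz : (h 0 : ℝ) = 0 := by nlinarith [heq1]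
    exact_mod_cast hz
  · intro h00 n hn
    have hn0 : (0:ℝ) < n := by exact_mod_cast hn
    have e1 : cantorB p s h (s * n)
        = ((h 0 : ℝ) + p * cantorInt p s h n) / (p * (n:ℝ) ^ Real.logb s p) := by
      have e := hBrec n 0 hn (by omega)
      rw [show s * n + 0 = s * n by ring] at e
      rw [e, hmulpow n hn]
    rw [e1, h00]
    simp only [cantorB]
    push_cast
    rw [zero_add, mul_div_mul_left _ _ (ne_of_gt hp0)]
  · refine ⟨s ^ s ^ 3, fun n hn => ?_⟩
    have hn1 : 1 ≤ n := le_trans (Nat.one_le_pow _ _ (by omega)) (le_of_lt hn)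
    have hn0 : (0:ℝ) < n := by exact_mod_cast hn1
    have hn1r : (1:ℝ) ≤ n := by exact_mod_cast hn1
    have hAlb : s * (n + 1) ≤ cantorInt p s h n :=
      cantorInt_large p s h hs hp hmono (le_of_lt hn)
    set A : ℕ := cantorInt p s h n with hA
    have hAr : (s:ℝ) * ((n:ℝ) + 1) ≤ (A:ℝ) := by exact_mod_cast hAlb
    have he : (0:ℝ) ≤ (p:ℝ) - 1 := by linarith
    constructor
    · intro i hi1 hi2
      have hi : i < s := by omega
      have hi' : i + 1 < s := by omega
      have hi0 : (0:ℝ) ≤ (i:ℝ) := by positivity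
      have hx : (1:ℝ) ≤ (s:ℝ) * n + i := by nlinarith
      have hd : (h (i + 1) : ℝ) ≤ (h i : ℝ) + ((p:ℝ) - 1) := by
        have h1 : h (i + 1) + 1 ≤ p := hrange (i + 1) hi'
        have h2 : ((h (i+1) : ℕ) : ℝ) + 1 ≤ p := by exact_mod_cast h1
        have h3 : (0:ℝ) ≤ (h i : ℝ) := by positivity
        linarith
      have hiub : (i:ℝ) + 2 ≤ (s:ℝ) := by exact_mod_cast (by omega : i + 2 ≤ s)
      have hexp : (s:ℝ) * ((n:ℝ) + 1) = s * n + s := by ring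
      have hxA : (s:ℝ) * n + i < (A:ℝ) := by linarith
      have hA' : ((p:ℝ) - 1) * ((s:ℝ) * n + i) < (p:ℝ) * A := by
        have h5 : (p:ℝ) * ((s:ℝ) * n + i) < p * A := by
          exact mul_lt_mul_of_pos_left hxA hp0
        nlinarith [mul_pos hp0 (show (0:ℝ) < (s:ℝ) * n + i by linarith)]
      have key := key_ineq (a := Real.logb s p) (x := (s:ℝ) * n + i)
        (A := (p:ℝ) * A) (c := (h i : ℝ)) (d := (h (i+1) : ℝ)) (e := (p:ℝ) - 1)
        hα1 hx (by positivity) hd he hA'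
      have c1 : ((s * n + i : ℕ) : ℝ) = (s:ℝ) * n + i := by push_cast; ring
      have c2 : ((s * n + (i + 1) : ℕ) : ℝ) = ((s:ℝ) * n + i) + 1 := by push_cast; ring
      have hxpos : (0:ℝ) < ((s * n + i : ℕ) : ℝ) := by rw [c1]; linarith
      have hxpos' : (0:ℝ) < ((s * n + (i + 1) : ℕ) : ℝ) := by rw [c2]; linarith
      rw [show s * n + i + 1 = s * n + (i + 1) by ring]
      rw [hBrec n i hn1 hi, hBrec n (i + 1) hn1 hi']
      rw [div_lt_div_iff₀ (Real.rpow_pos_of_pos hxpos' _) (Real.rpow_pos_of_pos hxpos _)]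
      rw [c1, c2]
      exact key
    · have hx : (1:ℝ) ≤ (s:ℝ) * n := by nlinarith
      have hd : (h 1 : ℝ) ≤ (0:ℝ) + ((p:ℝ) - 1) := by
        have h1 : h 1 + 1 ≤ p := hrange 1 (by omega)
        have h2 : ((h 1 : ℕ) : ℝ) + 1 ≤ p := by exact_mod_cast h1
        linarith
      have hexp : (s:ℝ) * ((n:ℝ) + 1) = s * n + s := by ring
      have hsnA : (s:ℝ) * n < (A:ℝ) := by linarith
      have hA' : ((p:ℝ) - 1) * ((s:ℝ) * n) < (p:ℝ) * A := by
        have h5 : (p:ℝ) * ((s:ℝ) * n) < p * A := mul_lt_mul_of_pos_left hsnA hp0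
        have hsn0 : (0:ℝ) < (s:ℝ) * n := mul_pos (by linarith) hn0
        linarith
      have key := key_ineq (a := Real.logb s p) (x := (s:ℝ) * n)
        (A := (p:ℝ) * A) (c := (0:ℝ)) (d := (h 1 : ℝ)) (e := (p:ℝ) - 1)
        hα1 hx le_rfl hd he hA'
      have hsn : ((s:ℝ) * n) ^ Real.logb s p = p * (n:ℝ) ^ Real.logb s p := by
        rw [Real.mul_rpow (by linarith) hn0.le, hsp]
      rw [hsn] at key
      have c1 : ((s * n + 1 : ℕ) : ℝ) = (s:ℝ) * n + 1 := by push_cast; ring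
      have hxpos : (0:ℝ) < ((s * n + 1 : ℕ) : ℝ) := by rw [c1]; linarith
      rw [hBrec n 1 hn1 (by omega)]
      simp only [cantorB]
      rw [div_lt_div_iff₀ (Real.rpow_pos_of_pos hxpos _) (Real.rpow_pos_of_pos hn0 _)]
      have goal' : ((h 1 : ℝ) + p * A) * (n:ℝ) ^ Real.logb s p * p
          < (A:ℝ) * (((s * n + 1 : ℕ) : ℝ)) ^ Real.logb s p * p := by
        rw [c1]
        linear_combination key
      exact lt_of_mul_lt_mul_right goal' hp0.le
end

section
/- The infimum m = inf{b_n : n ≥ 1} is not attained: b_n ≠ m for every n ≥ 1, and consequently m is an accumulation point of the sequence (b_n). -/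
open Real Filter Set MeasureTheory Topology
open scoped Classical ENNReal

lemma foldr_shift (p : ℕ) (h : ℕ → ℕ) (L : List ℕ) (A : ℕ) :
    L.foldr (fun d acc => h d + p * acc) A
      = L.foldr (fun d acc => h d + p * acc) 0 + p ^ L.length * A := by
  induction L with
  | nil => simp
  | cons d L ih => simp [ih, pow_succ]; ring

lemma cantorInt_pos (p s : ℕ) (h : ℕ → ℕ) (hs : 2 ≤ s) (hp : 1 ≤ p)
    (hmono : ∀ i j, i < j → j < s → h i < h j) :
    ∀ n, 1 ≤ n → 0 < cantorInt p s h n := by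
  intro n
  induction n using Nat.strong_induction_on with
  | _ n ih =>
    intro hn
    have hds : Nat.digits s n = n % s :: Nat.digits s (n / s) :=
      Nat.digits_def' (by omega) (by omega)
    have : cantorInt p s h n = h (n % s) + p * cantorInt p s h (n / s) := by
      simp [cantorInt, hds]
    rw [this]
    rcases Nat.lt_or_ge n s with hlt | hge
    · have h1 : n % s = n := Nat.mod_eq_of_lt hlt
      have : 0 < h (n % s) := by
        have := hmono 0 (n % s) (by omega) (by rw [h1]; exact hlt)
        omega
      omega
    · have hq : 1 ≤ n / s := Nat.one_le_div_iff (by omega) |>.mpr hge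
      have := ih (n / s) (Nat.div_lt_self (by omega) (by omega)) hq
      nlinarith

lemma cantorInt_double (p s : ℕ) (h : ℕ → ℕ) (hs : 2 ≤ s) (n : ℕ) :
    cantorInt p s h (n + s ^ (Nat.digits s n).length * n)
      = (1 + p ^ (Nat.digits s n).length) * cantorInt p s h n := by
  have hd := Nat.digits_append_digits (b := s) (m := n) (n := n) (by omega)
  rw [cantorInt, ← hd, List.foldr_append, foldr_shift]
  rw [cantorInt]
  ring

lemma key_ineq_s4 (p s : ℕ) (hs : 2 ≤ s) (hp : s < p) (k : ℕ) :
    1 + (p:ℝ)^k < (1 + (s:ℝ)^k) ^ Real.logb s p := by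
  set L := Real.logb s p with hLdef
  have hs0 : (0:ℝ) < s := by positivity
  have hs1 : (1:ℝ) < s := by exact_mod_cast (by omega : 1 < s)
  have hp0 : (0:ℝ) < p := by exact_mod_cast (by omega : 0 < p)
  have hL : 1 < L := by
    rw [hLdef, Real.lt_logb_iff_rpow_lt hs1 hp0, Real.rpow_one]
    exact_mod_cast hp
  have hsL : (s:ℝ) ^ L = p := Real.rpow_logb hs0 (ne_of_gt hs1) hp0
  set S : ℝ := (s:ℝ)^k with hSdef
  set P : ℝ := (p:ℝ)^k with hPdef
  have hS0 : 0 < S := by positivity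
  have hS1 : 1 ≤ S := one_le_pow₀ hs1.le
  have hSP : S ≤ P := by
    exact pow_le_pow_left₀ (by positivity) (by exact_mod_cast hp.le) k
  have hSLP : S ^ L = P := by
    rw [hSdef, hPdef, ← Real.rpow_natCast (s:ℝ) k, ← Real.rpow_mul hs0.le,
      mul_comm, Real.rpow_mul hs0.le, hsL, Real.rpow_natCast]
  have hsplit : (1 + S) = S * (1 + S⁻¹) := by
    field_simp
    ring
  have hmul : (1 + S) ^ L = P * (1 + S⁻¹) ^ L := by
    rw [hsplit, Real.mul_rpow hS0.le (by positivity), hSLP]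
  have hbern : 1 + L * S⁻¹ < (1 + S⁻¹) ^ L :=
    one_add_mul_self_lt_rpow_one_add (neg_one_lt_zero.trans (by positivity)).le
      (by positivity : 0 < S⁻¹).ne' hL
  have hPS : 1 ≤ P * S⁻¹ := by
    rw [le_mul_inv_iff₀ hS0, one_mul]; exact hSP
  rw [hmul]
  nlinarith [mul_lt_mul_of_pos_left hbern (by positivity : (0:ℝ) < P)]

lemma cantorB_step (p s : ℕ) (h : ℕ → ℕ) (hs : 2 ≤ s) (hp : s < p)
    (hmono : ∀ i j, i < j → j < s → h i < h j) (n : ℕ) (hn : 1 ≤ n) :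
    ∃ n', n < n' ∧ cantorB p s h n' < cantorB p s h n := by
  set k := (Nat.digits s n).length with hk
  refine ⟨n + s ^ k * n, ?_, ?_⟩
  · have : 1 ≤ s ^ k := Nat.one_le_pow _ _ (by omega)
    nlinarith
  · have ha := cantorInt_pos p s h hs (by omega) hmono n hn
    have hcd := cantorInt_double p s h hs n
    rw [← hk] at hcd
    unfold cantorB
    rw [hcd]
    have hn0 : (0:ℝ) < n := by exact_mod_cast hn
    set L := Real.logb s p with hL
    have hnL : 0 < (n:ℝ) ^ L := Real.rpow_pos_of_pos hn0 _
    have hcast : ((n + s ^ k * n : ℕ) : ℝ) = (1 + (s:ℝ)^k) * n := by push_cast; ring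
    rw [hcast, Real.mul_rpow (by positivity) hn0.le]
    have hkey : 1 + (p:ℝ)^k < (1 + (s:ℝ)^k) ^ L := key_ineq_s4 p s hs hp k
    have haR : (0:ℝ) < (cantorInt p s h n : ℝ) := by exact_mod_cast ha
    rw [div_lt_div_iff₀ (by positivity) hnL]
    push_cast
    nlinarith [mul_lt_mul_of_pos_right hkey (by positivity : (0:ℝ) < (cantorInt p s h n : ℝ) * (n:ℝ) ^ L)]

theorem stmt4 (p s : ℕ) (h : ℕ → ℕ) (hs : 2 ≤ s) (hp : s < p)
    (hmono : ∀ i j, i < j → j < s → h i < h j)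
    (hrange : ∀ i, i < s → h i < p)
    (m : ℝ) (hm : m = sInf {x : ℝ | ∃ n : ℕ, 1 ≤ n ∧ cantorB p s h n = x}) :
    (∀ n : ℕ, 1 ≤ n → cantorB p s h n ≠ m) ∧
    MapClusterPt m atTop (fun n : ℕ => cantorB p s h n) := by
  set T := {x : ℝ | ∃ n : ℕ, 1 ≤ n ∧ cantorB p s h n = x} with hT
  have hne : T.Nonempty := ⟨cantorB p s h 1, 1, le_refl 1, rfl⟩
  have hbdd : BddBelow T := by
    refine ⟨0, ?_⟩
    rintro x ⟨n, hn, rfl⟩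
    unfold cantorB
    positivity
  have hlb : ∀ n : ℕ, 1 ≤ n → m ≤ cantorB p s h n := by
    intro n hn
    rw [hm]
    exact csInf_le hbdd ⟨n, hn, rfl⟩
  have hne' : ∀ n : ℕ, 1 ≤ n → cantorB p s h n ≠ m := by
    intro n hn heq
    obtain ⟨n', hlt, hblt⟩ := cantorB_step p s h hs hp hmono n hn
    have := hlb n' (by omega)
    rw [heq] at hblt
    linarith
  refine ⟨hne', ?_⟩
  rw [mapClusterPt_iff_frequently]
  intro U hU
  obtain ⟨ε, hε, hball⟩ := Metric.mem_nhds_iff.mp hU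
  rw [frequently_atTop]
  intro N
  have claim : ∀ N : ℕ, ∃ n, N ≤ n ∧ 1 ≤ n ∧ cantorB p s h n < m + ε := by
    intro N
    induction N with
    | zero =>
      have hlt : sInf T < m + ε := by rw [← hm]; linarith
      obtain ⟨x, ⟨n0, hn0, rfl⟩, hx⟩ := exists_lt_of_csInf_lt hne hlt
      exact ⟨n0, Nat.zero_le _, hn0, hx⟩
    | succ N ih =>
      obtain ⟨n, hNn, hn1, hlt⟩ := ih
      rcases Nat.lt_or_ge N n with hc | hc
      · exact ⟨n, by omega, hn1, hlt⟩
      · have hnN : n = N := by omega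
        obtain ⟨n', hlt', hblt⟩ := cantorB_step p s h hs hp hmono n hn1
        exact ⟨n', by omega, by omega, by linarith⟩
  obtain ⟨n, hNn, hn1, hlt⟩ := claim N
  refine ⟨n, hNn, hball ?_⟩
  have := hlb n hn1
  simp only [Metric.mem_ball, Real.dist_eq, abs_lt]
  constructor <;> linarith
end

section
/- The sequence (b_n)_{n≥1} is dense in the interval [m, M], where m = inf{b_n : n ≥ 1} and M = sup{b_n : n ≥ 1}; equivalently, every γ ∈ [m, M] is an accumulation point of (b_n). -/
open Real Filter Set MeasureTheory Topology
open scoped Classical ENNReal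

namespace St5

variable (p s : ℕ) (h : ℕ → ℕ)

lemma a_zero : cantorInt p s h 0 = 0 := by simp [cantorInt]

lemma a_rec (hs : 2 ≤ s) {m : ℕ} (hm : 0 < m) :
    cantorInt p s h m = h (m % s) + p * cantorInt p s h (m / s) := by
  unfold cantorInt
  rw [Nat.digits_def' (by omega : 1 < s) hm]
  simp

lemma a_digit (hs : 2 ≤ s) {d : ℕ} (hd1 : 0 < d) (hd : d < s) :
    cantorInt p s h d = h d := by
  rw [a_rec p s h hs hd1, Nat.mod_eq_of_lt hd, Nat.div_eq_of_lt hd, a_zero]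
  simp

lemma a_child (hs : 2 ≤ s) {n d : ℕ} (hn : 0 < n) (hd : d < s) :
    cantorInt p s h (s * n + d) = h d + p * cantorInt p s h n := by
  have hm : 0 < s * n + d := by positivity
  rw [a_rec p s h hs hm]
  congr 2
  · rw [Nat.mul_add_mod, Nat.mod_eq_of_lt hd]
  · rw [Nat.mul_add_div (by omega : 0 < s), Nat.div_eq_of_lt hd, Nat.add_zero]

lemma hdle (hmono : ∀ i j, i < j → j < s → h i < h j) : ∀ d, d < s → d ≤ h d := by
  intro d
  induction d with
  | zero => intro _; exact Nat.zero_le _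
  | succ d ih =>
    intro hd
    have h1 := hmono d (d + 1) (by omega) hd
    have h2 := ih (by omega)
    omega

lemma a_ge (hs : 2 ≤ s) (hp : s < p) (hmono : ∀ i j, i < j → j < s → h i < h j) :
    ∀ n, n ≤ cantorInt p s h n := by
  intro n
  induction n using Nat.strong_induction_on with
  | _ n ih =>
    rcases Nat.eq_zero_or_pos n with rfl | hn
    · simp [a_zero]
    · rw [a_rec p s h hs hn]
      have h1 : n / s < n := Nat.div_lt_self hn (by omega)
      have h2 := ih (n / s) h1
      have h3 : n % s ≤ h (n % s) := hdle s h hmono _ (Nat.mod_lt n (by omega))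
      have h4 : s * (n / s) ≤ p * cantorInt p s h (n / s) :=
        Nat.mul_le_mul (by omega) h2
      have h5 : n % s + s * (n / s) = n := Nat.mod_add_div n s
      omega

lemma a_lt (hs : 2 ≤ s) (hrange : ∀ i, i < s → h i < p) :
    ∀ K n, n < s ^ K → cantorInt p s h n + 1 ≤ p ^ K := by
  intro K
  induction K with
  | zero =>
    intro n hn
    have hn0 : n = 0 := by simpa using hn
    subst hn0; simp [a_zero]
  | succ K ih =>
    intro n hn
    have hp0 : 0 < p := lt_of_le_of_lt (Nat.zero_le _) (hrange 0 (by omega))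
    rcases Nat.eq_zero_or_pos n with rfl | hn0
    · have : 1 ≤ p ^ (K + 1) := Nat.one_le_pow _ _ hp0
      simpa [a_zero] using this
    · rw [a_rec p s h hs hn0]
      have h1 : n / s < s ^ K := by
        rw [Nat.div_lt_iff_lt_mul (by omega : 0 < s)]
        calc n < s ^ (K + 1) := hn
          _ = s ^ K * s := by ring
      have h2 := ih (n / s) h1
      have h3 : h (n % s) < p := hrange _ (Nat.mod_lt n (by omega))
      have h4 : p * (cantorInt p s h (n / s) + 1) ≤ p * p ^ K :=
        Nat.mul_le_mul_left p h2
      have h5 : p * (cantorInt p s h (n / s) + 1) = p * cantorInt p s h (n / s) + p := by ring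
      have h6 : p ^ (K + 1) = p * p ^ K := by ring
      omega

lemma a_append (hs : 2 ≤ s) (hrange : ∀ i, i < s → h i < p) :
    ∀ (j n r : ℕ), 0 < n → r < s ^ j →
      p ^ j * cantorInt p s h n ≤ cantorInt p s h (n * s ^ j + r) ∧
      cantorInt p s h (n * s ^ j + r) + 1 ≤ p ^ j * (cantorInt p s h n + 1) := by
  intro j
  induction j with
  | zero =>
    intro n r hn hr
    have hr0 : r = 0 := by simpa using hr
    subst hr0; simp
  | succ j ih =>
    intro n r hn hr
    have hs0 : 0 < s := by omega
    have hp0 : 0 < p := lt_of_le_of_lt (Nat.zero_le _) (hrange 0 hs0)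
    have hrs : r / s < s ^ j := by
      rw [Nat.div_lt_iff_lt_mul hs0]
      calc r < s ^ (j + 1) := hr
        _ = s ^ j * s := by ring
    have hinner : 0 < n * s ^ j + r / s := by positivity
    have hmeq : n * s ^ (j + 1) + r = s * (n * s ^ j + r / s) + r % s := by
      have h1 : s * (r / s) + r % s = r := Nat.div_add_mod r s
      have h2 : s * (n * s ^ j) = n * s ^ (j + 1) := by ring
      have h3 : s * (n * s ^ j + r / s) = s * (n * s ^ j) + s * (r / s) := by ring
      omega
    rw [hmeq, a_child p s h hs hinner (Nat.mod_lt r hs0)]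
    obtain ⟨ih1, ih2⟩ := ih n (r / s) hn hrs
    have hbd : h (r % s) < p := hrange _ (Nat.mod_lt r hs0)
    constructor
    · have e1 : p ^ (j + 1) * cantorInt p s h n = p * (p ^ j * cantorInt p s h n) := by ring
      have e2 : p * (p ^ j * cantorInt p s h n) ≤ p * cantorInt p s h (n * s ^ j + r / s) :=
        Nat.mul_le_mul_left p ih1
      omega
    · have e1 : p * (cantorInt p s h (n * s ^ j + r / s) + 1) ≤ p * (p ^ j * (cantorInt p s h n + 1)) :=
        Nat.mul_le_mul_left p ih2
      have e2 : p * (cantorInt p s h (n * s ^ j + r / s) + 1)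
          = p * cantorInt p s h (n * s ^ j + r / s) + p := by ring
      have e3 : p ^ (j + 1) * (cantorInt p s h n + 1) = p * (p ^ j * (cantorInt p s h n + 1)) := by
        ring
      omega

lemma a_tail (hs : 2 ≤ s) :
    ∀ (j n : ℕ), 0 < n →
      cantorInt p s h ((n + 1) * s ^ j - 1)
        = p ^ j * cantorInt p s h n + h (s - 1) * ∑ i ∈ Finset.range j, p ^ i := by
  intro j
  induction j with
  | zero => intro n hn; simp
  | succ j ih =>
    intro n hn
    have hs0 : 0 < s := by omega
    have hX : 0 < (n + 1) * s ^ j := by positivity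
    set q := (n + 1) * s ^ j - 1 with hq
    have hq0 : 0 < q := by
      have : 2 ≤ (n + 1) * s ^ j := by
        have h1 : 1 ≤ s ^ j := Nat.one_le_pow _ _ hs0
        have h2 : 2 ≤ n + 1 := by omega
        calc 2 = 2 * 1 := by ring
          _ ≤ (n + 1) * s ^ j := Nat.mul_le_mul h2 h1
      omega
    have hw : (n + 1) * s ^ (j + 1) - 1 = s * q + (s - 1) := by
      have h1 : s * (q + 1) = s * q + s := by ring
      have h2 : q + 1 = (n + 1) * s ^ j := by omega
      have h3 : s * ((n + 1) * s ^ j) = (n + 1) * s ^ (j + 1) := by ring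
      have h4 : s * (q + 1) = s * ((n + 1) * s ^ j) := by rw [h2]
      omega
    rw [hw, a_child p s h hs hq0 (by omega : s - 1 < s), ih n hn, geom_sum_succ]
    ring

def Cone (s n : ℕ) : Set ℕ := {m | ∃ j r : ℕ, r < s ^ j ∧ m = n * s ^ j + r}

lemma cone_self (s n : ℕ) (hs : 0 < s) : n ∈ Cone s n :=
  ⟨0, 0, by simp, by simp⟩

lemma cone_step (hs : 2 ≤ s) {n m e : ℕ} (hm : m ∈ Cone s n) (he : e < s) :
    s * m + e ∈ Cone s n := by
  obtain ⟨j, r, hr, rfl⟩ := hm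
  refine ⟨j + 1, s * r + e, ?_, ?_⟩
  · have : s * (r + 1) ≤ s * s ^ j := Nat.mul_le_mul_left s (by omega)
    have h2 : s * (r + 1) = s * r + s := by ring
    have h3 : s * s ^ j = s ^ (j + 1) := by ring
    omega
  · ring

lemma cone_tail_mem (s n : ℕ) (hs : 2 ≤ s) (j : ℕ) : (n + 1) * s ^ j - 1 ∈ Cone s n := by
  refine ⟨j, s ^ j - 1, ?_, ?_⟩
  · have : 0 < s ^ j := by positivity
    omega
  · have h1 : 0 < s ^ j := by positivity
    have h2 : (n + 1) * s ^ j = n * s ^ j + s ^ j := by ring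
    omega

lemma cone_split (hs : 2 ≤ s) {n m : ℕ} (hm : m ∈ Cone s n) :
    m = n ∨ ∃ d, d < s ∧ m ∈ Cone s (s * n + d) := by
  obtain ⟨j, r, hr, rfl⟩ := hm
  rcases j with _ | j
  · left; have : r = 0 := by simpa using hr
    simp [this]
  · right
    have hs0 : 0 < s ^ j := by positivity
    refine ⟨r / s ^ j, ?_, j, r % s ^ j, Nat.mod_lt _ hs0, ?_⟩
    · rw [Nat.div_lt_iff_lt_mul hs0]
      calc r < s ^ (j + 1) := hr
        _ = s * s ^ j := by ring
    · have h1 : s ^ j * (r / s ^ j) + r % s ^ j = r := Nat.div_add_mod r (s ^ j)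
      have h2 : (s * n + r / s ^ j) * s ^ j = n * s ^ (j + 1) + s ^ j * (r / s ^ j) := by ring
      omega

lemma cone_lead (hs : 2 ≤ s) : ∀ n, 0 < n → ∃ d, 0 < d ∧ d < s ∧ n ∈ Cone s d := by
  intro n
  induction n using Nat.strong_induction_on with
  | _ n ih =>
    intro hn
    by_cases hns : n < s
    · exact ⟨n, hn, hns, cone_self s n (by omega)⟩
    · push_neg at hns
      have h1 : n / s < n := Nat.div_lt_self hn (by omega)
      have h2 : 0 < n / s := Nat.div_pos hns (by omega)
      obtain ⟨d, hd0, hds, hmem⟩ := ih (n / s) h1 h2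
      have h3 : n = s * (n / s) + n % s := by
        have := Nat.div_add_mod n s; omega
      rw [h3]
      exact ⟨d, hd0, hds, cone_step s hs hmem (Nat.mod_lt n (by omega))⟩

noncomputable def lexp (p s : ℕ) : ℝ := Real.logb s p

lemma sR_pos (hs : 2 ≤ s) : (0:ℝ) < (s:ℝ) := by exact_mod_cast by omega
lemma sR_one (hs : 2 ≤ s) : (1:ℝ) < (s:ℝ) := by exact_mod_cast by omega
lemma pR_one (hs : 2 ≤ s) (hp : s < p) : (1:ℝ) < (p:ℝ) := by exact_mod_cast by omega

lemma lexp_ge_one (hs : 2 ≤ s) (hp : s < p) : 1 ≤ lexp p s := by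
  have h1 : (0:ℝ) < Real.log s := Real.log_pos (sR_one s hs)
  rw [lexp, Real.logb, le_div_iff₀ h1, one_mul]
  exact Real.log_le_log (by exact_mod_cast by omega) (by exact_mod_cast by omega)

lemma lexp_pos (hs : 2 ≤ s) (hp : s < p) : 0 < lexp p s :=
  lt_of_lt_of_le one_pos (lexp_ge_one p s hs hp)

lemma s_rpow_lexp (hs : 2 ≤ s) (hp : s < p) : (s:ℝ) ^ lexp p s = (p:ℝ) :=
  Real.rpow_logb (sR_pos s hs) (by exact_mod_cast by omega : (s:ℝ) ≠ 1)
    (by exact_mod_cast by omega : (0:ℝ) < (p:ℝ))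

lemma spow_rpow (hs : 2 ≤ s) (hp : s < p) (j : ℕ) :
    ((s:ℝ) ^ j) ^ lexp p s = (p:ℝ) ^ j := by
  have h0 : (0:ℝ) ≤ (s:ℝ) := le_of_lt (sR_pos s hs)
  rw [← Real.rpow_natCast (s:ℝ) j, ← Real.rpow_mul h0, mul_comm, Real.rpow_mul h0,
    s_rpow_lexp p s hs hp, Real.rpow_natCast]

lemma b_def (n : ℕ) : cantorB p s h n = (cantorInt p s h n : ℝ) / (n:ℝ) ^ lexp p s := rfl

lemma b_nonneg (n : ℕ) : 0 ≤ cantorB p s h n := by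
  rw [b_def]
  have h1 : (0:ℝ) ≤ (n:ℝ) ^ lexp p s := Real.rpow_nonneg (by positivity) _
  positivity

lemma rpow_pos_nat (hn : 0 < n) (y : ℝ) : (0:ℝ) < (n:ℝ) ^ y :=
  Real.rpow_pos_of_pos (by exact_mod_cast hn) y

lemma cone_bounds (hs : 2 ≤ s) (hp : s < p) (hrange : ∀ i, i < s → h i < p)
    {n : ℕ} (hn : 0 < n) {m : ℕ} (hm : m ∈ Cone s n) :
    (cantorInt p s h n : ℝ) / ((n:ℝ) + 1) ^ lexp p s ≤ cantorB p s h m ∧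
      cantorB p s h m ≤ ((cantorInt p s h n : ℝ) + 1) / (n:ℝ) ^ lexp p s := by
  obtain ⟨j, r, hr, rfl⟩ := hm
  set L := lexp p s with hL
  set A := (cantorInt p s h n : ℝ) with hA
  obtain ⟨hlow, hup⟩ := a_append p s h hs hrange j n r hn hr
  have hpR : (0:ℝ) < (p:ℝ) := lt_trans one_pos (pR_one p s hs hp)
  have hpj : (0:ℝ) < (p:ℝ) ^ j := by positivity
  have h1 : (p:ℝ) ^ j * A ≤ (cantorInt p s h (n * s ^ j + r) : ℝ) := by
    rw [hA]; exact_mod_cast hlow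
  have h2 : (cantorInt p s h (n * s ^ j + r) : ℝ) ≤ (p:ℝ) ^ j * (A + 1) := by
    have := hup
    have hcast : (cantorInt p s h (n * s ^ j + r) : ℝ) + 1 ≤ (p:ℝ) ^ j * (A + 1) := by
      rw [hA]; exact_mod_cast this
    linarith
  have hm1 : ((n:ℝ)) * (s:ℝ) ^ j ≤ ((n * s ^ j + r : ℕ) : ℝ) := by
    push_cast
    have : (0:ℝ) ≤ (r:ℝ) := by positivity
    linarith
  have hm2 : ((n * s ^ j + r : ℕ) : ℝ) ≤ ((n:ℝ) + 1) * (s:ℝ) ^ j := by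
    have hr' : (r:ℝ) + 1 ≤ (s:ℝ) ^ j := by exact_mod_cast hr
    push_cast
    linarith
  have hn0 : (0:ℝ) < (n:ℝ) := by exact_mod_cast hn
  have hn1 : (0:ℝ) < (n:ℝ) + 1 := by linarith
  have hnL : (0:ℝ) < (n:ℝ) ^ L := Real.rpow_pos_of_pos hn0 L
  have hn1L : (0:ℝ) < ((n:ℝ) + 1) ^ L := Real.rpow_pos_of_pos hn1 L
  have hm0 : (0:ℝ) < ((n * s ^ j + r : ℕ) : ℝ) := by
    have : 0 < n * s ^ j + r := by positivity
    exact_mod_cast this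
  have hmL : (0:ℝ) < ((n * s ^ j + r : ℕ) : ℝ) ^ L := Real.rpow_pos_of_pos hm0 L
  have hd1 : (p:ℝ) ^ j * (n:ℝ) ^ L ≤ ((n * s ^ j + r : ℕ) : ℝ) ^ L := by
    calc (p:ℝ) ^ j * (n:ℝ) ^ L = (n:ℝ) ^ L * ((s:ℝ) ^ j) ^ L := by
          rw [spow_rpow p s hs hp]; ring
      _ = ((n:ℝ) * (s:ℝ) ^ j) ^ L := by
          rw [Real.mul_rpow (le_of_lt hn0) (by positivity)]
      _ ≤ ((n * s ^ j + r : ℕ) : ℝ) ^ L :=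
          Real.rpow_le_rpow (by positivity) hm1 (le_of_lt (lexp_pos p s hs hp))
  have hd2 : ((n * s ^ j + r : ℕ) : ℝ) ^ L ≤ (p:ℝ) ^ j * ((n:ℝ) + 1) ^ L := by
    calc ((n * s ^ j + r : ℕ) : ℝ) ^ L ≤ (((n:ℝ) + 1) * (s:ℝ) ^ j) ^ L :=
          Real.rpow_le_rpow (by positivity) hm2 (le_of_lt (lexp_pos p s hs hp))
      _ = ((n:ℝ) + 1) ^ L * ((s:ℝ) ^ j) ^ L := Real.mul_rpow (by linarith) (by positivity)
      _ = (p:ℝ) ^ j * ((n:ℝ) + 1) ^ L := by rw [spow_rpow p s hs hp]; ring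
  have hA0 : (0:ℝ) ≤ A := by rw [hA]; positivity
  constructor
  · rw [b_def]
    calc A / ((n:ℝ) + 1) ^ L = (p:ℝ) ^ j * A / ((p:ℝ) ^ j * ((n:ℝ) + 1) ^ L) := by
          rw [mul_div_mul_left _ _ (ne_of_gt hpj)]
      _ ≤ (cantorInt p s h (n * s ^ j + r) : ℝ) / ((n * s ^ j + r : ℕ) : ℝ) ^ L :=
          div_le_div₀ (by positivity) h1 hmL hd2
  · rw [b_def]
    calc (cantorInt p s h (n * s ^ j + r) : ℝ) / ((n * s ^ j + r : ℕ) : ℝ) ^ L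
        ≤ (p:ℝ) ^ j * (A + 1) / ((p:ℝ) ^ j * (n:ℝ) ^ L) :=
          div_le_div₀ (by positivity) h2 (by positivity) hd1
      _ = (A + 1) / (n:ℝ) ^ L := by rw [mul_div_mul_left _ _ (ne_of_gt hpj)]

noncomputable def SetV (p s : ℕ) (h : ℕ → ℕ) (n : ℕ) : Set ℝ := cantorB p s h '' Cone s n
noncomputable def Ival (p s : ℕ) (h : ℕ → ℕ) (n : ℕ) : ℝ := sInf (SetV p s h n)
noncomputable def Sval (p s : ℕ) (h : ℕ → ℕ) (n : ℕ) : ℝ := sSup (SetV p s h n)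

lemma V_nonempty (hs : 2 ≤ s) (n : ℕ) : (SetV p s h n).Nonempty :=
  ⟨_, ⟨n, cone_self s n (by omega), rfl⟩⟩

lemma V_bddBelow (n : ℕ) : BddBelow (SetV p s h n) := by
  refine ⟨0, fun v hv => ?_⟩
  obtain ⟨m, _, rfl⟩ := hv
  exact b_nonneg p s h m

lemma V_bddAbove (hs : 2 ≤ s) (hp : s < p) (hrange : ∀ i, i < s → h i < p)
    {n : ℕ} (hn : 0 < n) : BddAbove (SetV p s h n) := by
  refine ⟨((cantorInt p s h n : ℝ) + 1) / (n:ℝ) ^ lexp p s, fun v hv => ?_⟩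
  obtain ⟨m, hm, rfl⟩ := hv
  exact (cone_bounds p s h hs hp hrange hn hm).2

lemma Ival_le_mem (hs : 2 ≤ s) {n m : ℕ} (hm : m ∈ Cone s n) :
    Ival p s h n ≤ cantorB p s h m :=
  csInf_le (V_bddBelow p s h n) ⟨m, hm, rfl⟩

lemma mem_le_Sval (hs : 2 ≤ s) (hp : s < p) (hrange : ∀ i, i < s → h i < p)
    {n m : ℕ} (hn : 0 < n) (hm : m ∈ Cone s n) :
    cantorB p s h m ≤ Sval p s h n :=
  le_csSup (V_bddAbove p s h hs hp hrange hn) ⟨m, hm, rfl⟩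

lemma Ival_ge (hs : 2 ≤ s) (hp : s < p) (hrange : ∀ i, i < s → h i < p)
    {n : ℕ} (hn : 0 < n) :
    (cantorInt p s h n : ℝ) / ((n:ℝ) + 1) ^ lexp p s ≤ Ival p s h n := by
  apply le_csInf (V_nonempty p s h hs n)
  rintro v ⟨m, hm, rfl⟩
  exact (cone_bounds p s h hs hp hrange hn hm).1

lemma Sval_le (hs : 2 ≤ s) (hp : s < p) (hrange : ∀ i, i < s → h i < p)
    {n : ℕ} (hn : 0 < n) :
    Sval p s h n ≤ ((cantorInt p s h n : ℝ) + 1) / (n:ℝ) ^ lexp p s := by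
  apply csSup_le (V_nonempty p s h hs n)
  rintro v ⟨m, hm, rfl⟩
  exact (cone_bounds p s h hs hp hrange hn hm).2

lemma Ival_le_Sval (hs : 2 ≤ s) (hp : s < p) (hrange : ∀ i, i < s → h i < p)
    {n : ℕ} (hn : 0 < n) : Ival p s h n ≤ Sval p s h n :=
  le_trans (Ival_le_mem p s h hs (cone_self s n (by omega)))
    (mem_le_Sval p s h hs hp hrange hn (cone_self s n (by omega)))

/-- The key "append (s-1) forever" bound on the infimum. -/
lemma Ival_le_W (hs : 2 ≤ s) (hp : s < p) (hrange : ∀ i, i < s → h i < p)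
    {n : ℕ} (hn : 0 < n) :
    Ival p s h n ≤
      ((cantorInt p s h n : ℝ) + (h (s-1) : ℝ) / ((p:ℝ) - 1)) / ((n:ℝ) + 1) ^ lexp p s := by
  set L := lexp p s with hLdef
  set A := (cantorInt p s h n : ℝ) with hA
  set c := (h (s-1) : ℝ) / ((p:ℝ) - 1) with hc
  have hpR : (1:ℝ) < (p:ℝ) := pR_one p s hs hp
  have hsR : (1:ℝ) < (s:ℝ) := sR_one s hs
  have hn0 : (0:ℝ) < (n:ℝ) := by exact_mod_cast hn
  -- the witness sequence
  have heq : ∀ j : ℕ, cantorB p s h ((n+1) * s ^ j - 1)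
      = (A + c * (1 - ((p:ℝ)⁻¹) ^ j)) / (((n:ℝ) + 1) - ((s:ℝ)⁻¹) ^ j) ^ L := by
    intro j
    have hXpos : 0 < (n+1) * s ^ j := by positivity
    have hXj : (1:ℕ) ≤ (n+1) * s ^ j := hXpos
    have hnum : (cantorInt p s h ((n+1) * s ^ j - 1) : ℝ)
        = (p:ℝ) ^ j * (A + c * (1 - ((p:ℝ)⁻¹) ^ j)) := by
      rw [a_tail p s h hs j n hn]
      push_cast
      rw [geom_sum_eq (ne_of_gt hpR)]
      rw [hc, hA]
      have hp1 : (p:ℝ) - 1 ≠ 0 := by linarith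
      have hpj : ((p:ℝ)) ^ j ≠ 0 := by positivity
      rw [inv_pow]
      field_simp
    have hden : (((n+1) * s ^ j - 1 : ℕ) : ℝ)
        = (s:ℝ) ^ j * (((n:ℝ) + 1) - ((s:ℝ)⁻¹) ^ j) := by
      rw [Nat.cast_sub hXj]
      push_cast
      have hsj : ((s:ℝ)) ^ j ≠ 0 := by positivity
      rw [inv_pow]
      field_simp
    have hy : (0:ℝ) < ((n:ℝ) + 1) - ((s:ℝ)⁻¹) ^ j := by
      have h1 : ((s:ℝ)⁻¹) ^ j ≤ 1 := by
        apply pow_le_one₀ (by positivity)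
        rw [inv_le_one_iff₀]; right; linarith
      linarith
    rw [b_def, hnum, hden, Real.mul_rpow (by positivity) (le_of_lt hy),
      spow_rpow p s hs hp]
    rw [mul_div_mul_left _ _ (by positivity : ((p:ℝ))^j ≠ 0)]
  have hlim : Tendsto (fun j : ℕ => cantorB p s h ((n+1) * s ^ j - 1)) atTop
      (𝓝 ((A + c) / ((n:ℝ) + 1) ^ L)) := by
    rw [show (fun j : ℕ => cantorB p s h ((n+1) * s ^ j - 1))
        = fun j : ℕ => (A + c * (1 - ((p:ℝ)⁻¹) ^ j)) / (((n:ℝ) + 1) - ((s:ℝ)⁻¹) ^ j) ^ L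
      from funext heq]
    have hp0 : Tendsto (fun j : ℕ => ((p:ℝ)⁻¹) ^ j) atTop (𝓝 0) := by
      apply tendsto_pow_atTop_nhds_zero_of_lt_one (by positivity)
      rw [inv_lt_one_iff₀]; right; exact hpR
    have hs0 : Tendsto (fun j : ℕ => ((s:ℝ)⁻¹) ^ j) atTop (𝓝 0) := by
      apply tendsto_pow_atTop_nhds_zero_of_lt_one (by positivity)
      rw [inv_lt_one_iff₀]; right; exact hsR
    have hnum : Tendsto (fun j : ℕ => A + c * (1 - ((p:ℝ)⁻¹) ^ j)) atTop (𝓝 (A + c)) := by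
      have : Tendsto (fun j : ℕ => 1 - ((p:ℝ)⁻¹) ^ j) atTop (𝓝 1) := by
        simpa using (tendsto_const_nhds.sub hp0)
      simpa using tendsto_const_nhds.add ((tendsto_const_nhds (x := c)).mul this)
    have hy : Tendsto (fun j : ℕ => ((n:ℝ) + 1) - ((s:ℝ)⁻¹) ^ j) atTop (𝓝 ((n:ℝ) + 1)) := by
      simpa using (tendsto_const_nhds.sub hs0)
    have hcont : ContinuousAt (fun x : ℝ => x ^ L) ((n:ℝ) + 1) :=
      Real.continuousAt_rpow_const _ _ (Or.inl (by positivity))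
    have hden : Tendsto (fun j : ℕ => (((n:ℝ) + 1) - ((s:ℝ)⁻¹) ^ j) ^ L) atTop
        (𝓝 (((n:ℝ) + 1) ^ L)) := hcont.tendsto.comp hy
    exact hnum.div hden (ne_of_gt (Real.rpow_pos_of_pos (by positivity) L))
  apply ge_of_tendsto hlim
  filter_upwards with j
  exact Ival_le_mem p s h hs (cone_tail_mem s n hs j)

lemma mulsL (hs : 2 ≤ s) (hp : s < p) (x : ℝ) (hx : 0 ≤ x) :
    ((s:ℝ) * x) ^ lexp p s = (p:ℝ) * x ^ lexp p s := by
  rw [Real.mul_rpow (le_of_lt (sR_pos s hs)) hx, s_rpow_lexp p s hs hp]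

lemma c_le_one (hs : 2 ≤ s) (hp : s < p) (hrange : ∀ i, i < s → h i < p) :
    (h (s-1) : ℝ) / ((p:ℝ) - 1) ≤ 1 := by
  have h1 : h (s-1) < p := hrange _ (by omega)
  have h2 : (h (s-1) : ℝ) ≤ (p:ℝ) - 1 := by
    have : (h (s-1) : ℝ) + 1 ≤ (p:ℝ) := by exact_mod_cast h1
    linarith
  have h3 : (0:ℝ) < (p:ℝ) - 1 := by
    have := pR_one p s hs hp; linarith
  rw [div_le_one h3]; exact h2

lemma c_nonneg (hs : 2 ≤ s) (hp : s < p) : 0 ≤ (h (s-1) : ℝ) / ((p:ℝ) - 1) := by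
  have h3 : (0:ℝ) < (p:ℝ) - 1 := by have := pR_one p s hs hp; linarith
  positivity

/-- `(A+1)/(n+1)^L ≤ A/n^L`, the key consequence of `L ≥ 1` and `a n ≥ n`. -/
lemma keyineq (hs : 2 ≤ s) (hp : s < p) (hmono : ∀ i j, i < j → j < s → h i < h j)
    {n : ℕ} (hn : 0 < n) :
    ((cantorInt p s h n : ℝ) + 1) / ((n:ℝ) + 1) ^ lexp p s
      ≤ (cantorInt p s h n : ℝ) / (n:ℝ) ^ lexp p s := by
  set L := lexp p s with hL
  set A := (cantorInt p s h n : ℝ) with hA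
  have hn0 : (0:ℝ) < (n:ℝ) := by exact_mod_cast hn
  have hAn : (n:ℝ) ≤ A := by rw [hA]; exact_mod_cast a_ge p s h hs hp hmono n
  have hnL : (0:ℝ) < (n:ℝ) ^ L := Real.rpow_pos_of_pos hn0 L
  have hn1L : (0:ℝ) < ((n:ℝ) + 1) ^ L := Real.rpow_pos_of_pos (by linarith) L
  have hbase : (1:ℝ) ≤ ((n:ℝ) + 1) / (n:ℝ) := by
    rw [le_div_iff₀ hn0]; linarith
  have h1 : ((n:ℝ) + 1) / (n:ℝ) ≤ (((n:ℝ) + 1) / (n:ℝ)) ^ L := by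
    calc ((n:ℝ) + 1) / (n:ℝ) = (((n:ℝ) + 1) / (n:ℝ)) ^ (1:ℝ) := (Real.rpow_one _).symm
      _ ≤ (((n:ℝ) + 1) / (n:ℝ)) ^ L :=
          Real.rpow_le_rpow_of_exponent_le hbase (lexp_ge_one p s hs hp)
  have h2 : ((n:ℝ) + 1) ^ L = (n:ℝ) ^ L * (((n:ℝ) + 1) / (n:ℝ)) ^ L := by
    rw [← Real.mul_rpow (le_of_lt hn0) (by positivity)]
    congr 1
    field_simp
  rw [div_le_div_iff₀ hn1L hnL]
  have h4 : A * (n:ℝ) ^ L * (((n:ℝ) + 1) / (n:ℝ)) ≤ A * (n:ℝ) ^ L * ((((n:ℝ) + 1) / (n:ℝ)) ^ L) :=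
    mul_le_mul_of_nonneg_left h1 (by positivity)
  have h5 : A * (n:ℝ) ^ L * (((n:ℝ) + 1) / (n:ℝ)) = A * (n:ℝ) ^ L + A * (n:ℝ) ^ L / (n:ℝ) := by
    field_simp
  have h6 : (n:ℝ) ^ L ≤ A * (n:ℝ) ^ L / (n:ℝ) := by
    have h7 : 1 ≤ A / (n:ℝ) := (one_le_div hn0).2 hAn
    calc (n:ℝ) ^ L = 1 * (n:ℝ) ^ L := (one_mul _).symm
      _ ≤ (A / (n:ℝ)) * (n:ℝ) ^ L := mul_le_mul_of_nonneg_right h7 (le_of_lt hnL)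
      _ = A * (n:ℝ) ^ L / (n:ℝ) := by ring
  have h8 : A * ((n:ℝ) + 1) ^ L = A * (n:ℝ) ^ L * ((((n:ℝ) + 1) / (n:ℝ)) ^ L) := by
    rw [h2]; ring
  linarith

/-- `I(sn + (s-1)) ≤ (A_n+1)/(n+1)^L`. -/
lemma Idown (hs : 2 ≤ s) (hp : s < p) (hrange : ∀ i, i < s → h i < p)
    {n : ℕ} (hn : 0 < n) :
    Ival p s h (s * n + (s-1)) ≤ ((cantorInt p s h n : ℝ) + 1) / ((n:ℝ) + 1) ^ lexp p s := by
  set L := lexp p s with hL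
  set A := (cantorInt p s h n : ℝ) with hA
  set c := (h (s-1) : ℝ) / ((p:ℝ) - 1) with hc
  have hn' : 0 < s * n + (s-1) := by positivity
  have hW := Ival_le_W p s h hs hp hrange hn'
  have hA' : (cantorInt p s h (s * n + (s-1)) : ℝ) = (h (s-1) : ℝ) + (p:ℝ) * A := by
    have hnat : cantorInt p s h (s * n + (s-1)) = h (s-1) + p * cantorInt p s h n :=
      a_child p s h hs hn (by omega : s - 1 < s)
    rw [hA, hnat]; push_cast; ring
  have hpR : (1:ℝ) < (p:ℝ) := pR_one p s hs hp
  have hden : ((s * n + (s-1) : ℕ) : ℝ) + 1 = (s:ℝ) * ((n:ℝ) + 1) := by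
    have : (s * n + (s-1) : ℕ) + 1 = s * (n+1) := by
      have h2 : s * (n + 1) = s * n + s := by ring
      omega
    have := congrArg (fun k : ℕ => (k:ℝ)) this
    push_cast at this ⊢
    linarith
  rw [hA', hden] at hW
  rw [mulsL p s hs hp _ (by positivity)] at hW
  have hnum : (h (s-1) : ℝ) + (p:ℝ) * A + c ≤ (p:ℝ) * (A + 1) := by
    have h1 : (h (s-1) : ℝ) ≤ (p:ℝ) - 1 := by
      have := hrange (s-1) (by omega)
      have : (h (s-1) : ℝ) + 1 ≤ (p:ℝ) := by exact_mod_cast this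
      linarith
    have h2 : c ≤ 1 := c_le_one p s h hs hp hrange
    linarith [h1, h2]
  calc Ival p s h (s * n + (s-1)) ≤ ((h (s-1) : ℝ) + (p:ℝ) * A + c) / ((p:ℝ) * ((n:ℝ)+1) ^ L) := by
        have e : ((h (s-1) : ℝ) + (p:ℝ) * A + c) = ((h (s-1) : ℝ) + (p:ℝ) * A) + c := by ring
        rw [e]; exact hW
    _ ≤ ((p:ℝ) * (A + 1)) / ((p:ℝ) * ((n:ℝ)+1) ^ L) := by
        have hd : (0:ℝ) < (p:ℝ) * ((n:ℝ)+1) ^ L :=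
          mul_pos (by linarith) (Real.rpow_pos_of_pos (by positivity) L)
        exact (div_le_div_iff_of_pos_right hd).2 hnum
    _ = (A + 1) / ((n:ℝ)+1) ^ L := by
        rw [mul_div_mul_left _ _ (by linarith : (p:ℝ) ≠ 0)]

/-- `b n ≤ b (s n) ≤ S (s n)`. -/
lemma bn_le_bsn (hs : 2 ≤ s) (hp : s < p) {n : ℕ} (hn : 0 < n) :
    cantorB p s h n ≤ cantorB p s h (s * n) := by
  have hA' : (cantorInt p s h (s * n) : ℝ) = (h 0 : ℝ) + (p:ℝ) * (cantorInt p s h n : ℝ) := by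
    have hnat : cantorInt p s h (s * n) = h 0 + p * cantorInt p s h n := by
      have := a_child p s h hs hn (by omega : 0 < s)
      simpa using this
    rw [hnat]; push_cast; ring
  have hpR : (1:ℝ) < (p:ℝ) := pR_one p s hs hp
  have hn0 : (0:ℝ) < (n:ℝ) := by exact_mod_cast hn
  have hnL : (0:ℝ) < (n:ℝ) ^ lexp p s := Real.rpow_pos_of_pos hn0 _
  rw [b_def, b_def, hA']
  have hsn : ((s * n : ℕ) : ℝ) = (s:ℝ) * (n:ℝ) := by push_cast; ring
  rw [hsn, mulsL p s hs hp _ (le_of_lt hn0)]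
  calc (cantorInt p s h n : ℝ) / (n:ℝ) ^ lexp p s
      = ((p:ℝ) * (cantorInt p s h n : ℝ)) / ((p:ℝ) * (n:ℝ) ^ lexp p s) := by
        rw [mul_div_mul_left _ _ (by linarith : (p:ℝ) ≠ 0)]
    _ ≤ ((h 0 : ℝ) + (p:ℝ) * (cantorInt p s h n : ℝ)) / ((p:ℝ) * (n:ℝ) ^ lexp p s) := by
        have hd : (0:ℝ) < (p:ℝ) * (n:ℝ) ^ lexp p s := mul_pos (by linarith) hnL
        apply (div_le_div_iff_of_pos_right hd).2
        have h00 : (0:ℝ) ≤ (h 0 : ℝ) := by positivity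
        linarith

lemma chainA (hs : 2 ≤ s) (hp : s < p) (hmono : ∀ i j, i < j → j < s → h i < h j)
    (hrange : ∀ i, i < s → h i < p) {n d : ℕ} (hn : 0 < n) (hd : d + 1 < s) :
    Ival p s h (s * n + d) ≤ Sval p s h (s * n + (d + 1)) := by
  set L := lexp p s with hL
  set c := (h (s-1) : ℝ) / ((p:ℝ) - 1) with hc
  have hn' : 0 < s * n + d := by positivity
  have hW := Ival_le_W p s h hs hp hrange hn'
  have hAd : cantorInt p s h (s * n + d) = h d + p * cantorInt p s h n :=
    a_child p s h hs hn (by omega)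
  have hAd1 : cantorInt p s h (s * n + (d + 1)) = h (d + 1) + p * cantorInt p s h n :=
    a_child p s h hs hn hd
  have hmono' : (h d : ℝ) + 1 ≤ (h (d + 1) : ℝ) := by
    have := hmono d (d + 1) (by omega) hd
    exact_mod_cast this
  have hcle : c ≤ 1 := c_le_one p s h hs hp hrange
  have hdenpos : (0:ℝ) < (((s * n + d : ℕ)):ℝ) + 1 := by positivity
  have hdenL : (0:ℝ) < ((((s * n + d : ℕ)):ℝ) + 1) ^ L := Real.rpow_pos_of_pos hdenpos L
  have hcast : ((s * n + (d + 1) : ℕ) : ℝ) = ((s * n + d : ℕ) : ℝ) + 1 := by push_cast; ring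
  calc Ival p s h (s * n + d)
      ≤ ((cantorInt p s h (s * n + d) : ℝ) + c) / (((s * n + d : ℕ) : ℝ) + 1) ^ L := hW
    _ ≤ (cantorInt p s h (s * n + (d + 1)) : ℝ) / (((s * n + d : ℕ) : ℝ) + 1) ^ L := by
        apply (div_le_div_iff_of_pos_right hdenL).2
        rw [hAd, hAd1]
        push_cast
        linarith
    _ = cantorB p s h (s * n + (d + 1)) := by rw [b_def, hcast]
    _ ≤ Sval p s h (s * n + (d + 1)) :=
        mem_le_Sval p s h hs hp hrange (by positivity) (cone_self s _ (by omega))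

lemma chainW (hs : 2 ≤ s) (hp : s < p) (hmono : ∀ i j, i < j → j < s → h i < h j)
    (hrange : ∀ i, i < s → h i < p) {n : ℕ} (hn : 0 < n) :
    Ival p s h (s * n + (s - 1)) ≤ Sval p s h (s * n) := by
  calc Ival p s h (s * n + (s - 1))
      ≤ ((cantorInt p s h n : ℝ) + 1) / ((n:ℝ) + 1) ^ lexp p s :=
        Idown p s h hs hp hrange hn
    _ ≤ (cantorInt p s h n : ℝ) / (n:ℝ) ^ lexp p s := keyineq p s h hs hp hmono hn
    _ = cantorB p s h n := (b_def p s h n).symm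
    _ ≤ cantorB p s h (s * n) := bn_le_bsn p s h hs hp hn
    _ ≤ Sval p s h (s * n) :=
        mem_le_Sval p s h hs hp hrange (by positivity) (cone_self s _ (by omega))

lemma baseA (hs : 2 ≤ s) (hp : s < p) (hmono : ∀ i j, i < j → j < s → h i < h j)
    (hrange : ∀ i, i < s → h i < p) {d : ℕ} (hd0 : 0 < d) (hd : d + 1 < s) :
    Ival p s h d ≤ Sval p s h (d + 1) := by
  set L := lexp p s with hL
  set c := (h (s-1) : ℝ) / ((p:ℝ) - 1) with hc
  have hW := Ival_le_W p s h hs hp hrange hd0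
  have had : cantorInt p s h d = h d := a_digit p s h hs hd0 (by omega)
  have had1 : cantorInt p s h (d + 1) = h (d + 1) := a_digit p s h hs (by omega) hd
  have hmono' : (h d : ℝ) + 1 ≤ (h (d + 1) : ℝ) := by
    exact_mod_cast hmono d (d + 1) (by omega) hd
  have hcle : c ≤ 1 := c_le_one p s h hs hp hrange
  have hdenL : (0:ℝ) < ((d:ℝ) + 1) ^ L := Real.rpow_pos_of_pos (by positivity) L
  have hcast : ((d + 1 : ℕ) : ℝ) = (d:ℝ) + 1 := by push_cast; ring
  calc Ival p s h d ≤ ((cantorInt p s h d : ℝ) + c) / ((d:ℝ) + 1) ^ L := hW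
    _ ≤ (cantorInt p s h (d + 1) : ℝ) / ((d:ℝ) + 1) ^ L := by
        apply (div_le_div_iff_of_pos_right hdenL).2
        rw [had, had1]
        linarith
    _ = cantorB p s h (d + 1) := by rw [b_def, hcast]
    _ ≤ Sval p s h (d + 1) :=
        mem_le_Sval p s h hs hp hrange (by omega) (cone_self s _ (by omega))

lemma baseW (hs : 2 ≤ s) (hp : s < p) (hmono : ∀ i j, i < j → j < s → h i < h j)
    (hrange : ∀ i, i < s → h i < p) :
    Ival p s h (s - 1) ≤ Sval p s h 1 := by
  set L := lexp p s with hL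
  set c := (h (s-1) : ℝ) / ((p:ℝ) - 1) with hc
  have hs10 : 0 < s - 1 := by omega
  have hW := Ival_le_W p s h hs hp hrange hs10
  have had : cantorInt p s h (s - 1) = h (s - 1) := a_digit p s h hs hs10 (by omega)
  have hpR : (1:ℝ) < (p:ℝ) := pR_one p s hs hp
  have hcast : ((s - 1 : ℕ) : ℝ) + 1 = (s:ℝ) := by
    have : (s - 1 : ℕ) + 1 = s := by omega
    exact_mod_cast congrArg (fun k : ℕ => (k:ℝ)) this
  have hsL : ((s:ℝ)) ^ L = (p:ℝ) := s_rpow_lexp p s hs hp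
  have heq : ((h (s-1) : ℝ) + c) / ((s:ℝ)) ^ L = c := by
    rw [hsL, hc]
    have h1 : (p:ℝ) - 1 ≠ 0 := by linarith
    have h2 : (p:ℝ) ≠ 0 := by linarith
    field_simp
    ring
  have h1le : (1:ℝ) ≤ (h 1 : ℝ) := by
    have := hmono 0 1 (by omega) (by omega)
    have : 1 ≤ h 1 := by omega
    exact_mod_cast this
  have hb1 : cantorB p s h 1 = (h 1 : ℝ) := by
    rw [b_def, a_digit p s h hs (by omega) (by omega)]
    simp [Real.one_rpow]
  calc Ival p s h (s - 1) ≤ ((cantorInt p s h (s-1) : ℝ) + c) / (((s - 1 : ℕ) : ℝ) + 1) ^ L := hW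
    _ = ((h (s-1) : ℝ) + c) / ((s:ℝ)) ^ L := by rw [had, hcast]
    _ = c := heq
    _ ≤ 1 := c_le_one p s h hs hp hrange
    _ ≤ (h 1 : ℝ) := h1le
    _ = cantorB p s h 1 := hb1.symm
    _ ≤ Sval p s h 1 :=
        mem_le_Sval p s h hs hp hrange (by omega) (cone_self s _ (by omega))

lemma step_up (hs : 2 ≤ s) (hp : s < p) (hrange : ∀ i, i < s → h i < p)
    {n : ℕ} {γ : ℝ} (hn : 0 < n) (hγ : γ ≤ Sval p s h n) :
    ∃ d, d < s ∧ γ ≤ Sval p s h (s * n + d) := by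
  by_contra hcon
  push_neg at hcon
  have hne : (Finset.range s).Nonempty := ⟨0, Finset.mem_range.2 (by omega)⟩
  set B := (Finset.range s).sup' hne (fun d => Sval p s h (s * n + d)) with hB
  have hBlt : B < γ := by
    rw [hB, Finset.sup'_lt_iff]
    intro d hd
    exact hcon d (Finset.mem_range.1 hd)
  have hSle : Sval p s h n ≤ B := by
    apply csSup_le (V_nonempty p s h hs n)
    rintro v ⟨mm, hmm, rfl⟩
    rcases cone_split s hs hmm with rfl | ⟨d, hd, hmem⟩
    · calc cantorB p s h mm ≤ cantorB p s h (s * mm) := bn_le_bsn p s h hs hp hn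
        _ ≤ Sval p s h (s * mm) :=
            mem_le_Sval p s h hs hp hrange (by positivity) (cone_self s _ (by omega))
        _ ≤ B := by
            rw [hB]
            have h0 := Finset.le_sup' (fun d => Sval p s h (s * mm + d))
              (Finset.mem_range.2 (show 0 < s by omega))
            simp only [Nat.add_zero] at h0
            exact h0
    · calc cantorB p s h mm ≤ Sval p s h (s * n + d) :=
            mem_le_Sval p s h hs hp hrange (by positivity) hmem
        _ ≤ B := by
            rw [hB]
            exact Finset.le_sup' (fun d => Sval p s h (s * n + d)) (Finset.mem_range.2 hd)
  exact absurd (le_trans hγ hSle) (not_le.2 hBlt)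

lemma step_down (hs : 2 ≤ s) (hp : s < p) (hmono : ∀ i j, i < j → j < s → h i < h j)
    (hrange : ∀ i, i < s → h i < p) {n : ℕ} {γ : ℝ} (hn : 0 < n) (hγ : Ival p s h n ≤ γ) :
    ∃ d, d < s ∧ Ival p s h (s * n + d) ≤ γ := by
  by_contra hcon
  push_neg at hcon
  have hne : (Finset.range s).Nonempty := ⟨0, Finset.mem_range.2 (by omega)⟩
  set B := (Finset.range s).inf' hne (fun d => Ival p s h (s * n + d)) with hB
  have hBgt : γ < B := by
    rw [hB, Finset.lt_inf'_iff]
    intro d hd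
    exact hcon d (Finset.mem_range.1 hd)
  have hIle : B ≤ Ival p s h n := by
    apply le_csInf (V_nonempty p s h hs n)
    rintro v ⟨mm, hmm, rfl⟩
    rcases cone_split s hs hmm with rfl | ⟨d, hd, hmem⟩
    · calc B ≤ Ival p s h (s * mm + (s - 1)) := by
            rw [hB]
            exact Finset.inf'_le (fun d => Ival p s h (s * mm + d))
              (Finset.mem_range.2 (show s - 1 < s by omega))
        _ ≤ ((cantorInt p s h mm : ℝ) + 1) / ((mm:ℝ) + 1) ^ lexp p s :=
            Idown p s h hs hp hrange hn
        _ ≤ (cantorInt p s h mm : ℝ) / (mm:ℝ) ^ lexp p s := keyineq p s h hs hp hmono hn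
        _ = cantorB p s h mm := (b_def p s h mm).symm
    · calc B ≤ Ival p s h (s * n + d) := by
            rw [hB]
            exact Finset.inf'_le (fun d => Ival p s h (s * n + d)) (Finset.mem_range.2 hd)
        _ ≤ cantorB p s h mm := Ival_le_mem p s h hs hmem
  exact absurd (le_trans hIle hγ) (not_le.2 hBgt)

lemma cyclic (t : ℕ) (ht : 0 < t) (I S : ℕ → ℝ) (γ : ℝ)
    (hIS : ∀ i, i < t → I i ≤ S i)
    (hchain : ∀ i, i < t → I i ≤ S ((i + 1) % t))
    (h1 : ∃ i, i < t ∧ I i ≤ γ) (h2 : ∃ i, i < t ∧ γ ≤ S i) :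
    ∃ i, i < t ∧ I i ≤ γ ∧ γ ≤ S i := by
  by_contra hc
  push_neg at hc
  obtain ⟨i1, hi1, hS1⟩ := h2
  obtain ⟨i0, hi0, hI0⟩ := h1
  have hU : ∀ k, γ < I ((i1 + k) % t) := by
    intro k
    induction k with
    | zero =>
      rw [Nat.add_zero, Nat.mod_eq_of_lt hi1]
      by_contra hle
      push_neg at hle
      exact absurd hS1 (not_le.2 (hc i1 hi1 hle))
    | succ k ih =>
      have hik : (i1 + k) % t < t := Nat.mod_lt _ ht
      have hstep := hchain _ hik
      have hmod : ((i1 + k) % t + 1) % t = (i1 + (k + 1)) % t := by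
        rw [Nat.mod_add_mod]
        have he : i1 + k + 1 = i1 + (k + 1) := by omega
        rw [he]
      have hSnew : γ < S ((i1 + (k + 1)) % t) := by
        rw [← hmod]; exact lt_of_lt_of_le ih hstep
      have hnew : (i1 + (k + 1)) % t < t := Nat.mod_lt _ ht
      by_contra hle
      push_neg at hle
      exact absurd hSnew (not_lt.2 (le_of_lt (hc _ hnew hle)))
  have hk : (i1 + (i0 + t - i1)) % t = i0 := by
    have he : i1 + (i0 + t - i1) = i0 + t := by omega
    rw [he, Nat.add_mod_right]
    exact Nat.mod_eq_of_lt hi0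
  exact absurd hI0 (not_le.2 (hk ▸ hU (i0 + t - i1)))

lemma step_exists (hs : 2 ≤ s) (hp : s < p) (hmono : ∀ i j, i < j → j < s → h i < h j)
    (hrange : ∀ i, i < s → h i < p) {n : ℕ} {γ : ℝ} (hn : 0 < n)
    (hI : Ival p s h n ≤ γ) (hS : γ ≤ Sval p s h n) :
    ∃ d, d < s ∧ Ival p s h (s * n + d) ≤ γ ∧ γ ≤ Sval p s h (s * n + d) := by
  obtain ⟨d1, hd1, hI1⟩ := step_down p s h hs hp hmono hrange hn hI
  obtain ⟨d2, hd2, hS2⟩ := step_up p s h hs hp hrange hn hS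
  exact cyclic s (by omega) (fun i => Ival p s h (s * n + i)) (fun i => Sval p s h (s * n + i)) γ
    (fun i hi => Ival_le_Sval p s h hs hp hrange (by positivity))
    (fun i hi => by
      show Ival p s h (s * n + i) ≤ Sval p s h (s * n + (i + 1) % s)
      by_cases hcase : i + 1 < s
      · rw [Nat.mod_eq_of_lt hcase]
        exact chainA p s h hs hp hmono hrange hn hcase
      · have hieq : i = s - 1 := by omega
        have h1 : s * n + (i + 1) % s = s * n := by
          have he : i + 1 = s := by omega
          rw [he, Nat.mod_self, Nat.add_zero]
        rw [h1, hieq]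
        exact chainW p s h hs hp hmono hrange hn)
    ⟨d1, hd1, hI1⟩ ⟨d2, hd2, hS2⟩

lemma aP (hs : 2 ≤ s) (hp : s < p) (hrange : ∀ i, i < s → h i < p) {n : ℕ} (hn : 0 < n) :
    (cantorInt p s h n : ℝ) + 1 ≤ (p:ℝ) * (n:ℝ) ^ lexp p s := by
  set K := Nat.log s n with hK
  have h1 : n < s ^ (K + 1) := Nat.lt_pow_succ_log_self (by omega) n
  have h2 : s ^ K ≤ n := Nat.pow_log_le_self s (by omega)
  have h3 := a_lt p s h hs hrange (K + 1) n h1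
  have hpR : (1:ℝ) < (p:ℝ) := pR_one p s hs hp
  have h4 : ((s:ℝ) ^ K) ^ lexp p s ≤ (n:ℝ) ^ lexp p s :=
    Real.rpow_le_rpow (by positivity) (by exact_mod_cast h2) (le_of_lt (lexp_pos p s hs hp))
  rw [spow_rpow p s hs hp] at h4
  have h5 : (cantorInt p s h n : ℝ) + 1 ≤ (p:ℝ) ^ (K + 1) := by exact_mod_cast h3
  calc (cantorInt p s h n : ℝ) + 1 ≤ (p:ℝ) ^ (K + 1) := h5
    _ = (p:ℝ) * (p:ℝ) ^ K := by ring
    _ ≤ (p:ℝ) * (n:ℝ) ^ lexp p s := mul_le_mul_of_nonneg_left h4 (by positivity)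

lemma diam_le (hs : 2 ≤ s) (hp : s < p) (hrange : ∀ i, i < s → h i < p) {n : ℕ} (hn : 0 < n) :
    Sval p s h n - Ival p s h n
      ≤ (p:ℝ) * (1 - ((n:ℝ) / ((n:ℝ) + 1)) ^ lexp p s) + 1 / ((n:ℝ) + 1) ^ lexp p s := by
  set L := lexp p s with hL
  set A := (cantorInt p s h n : ℝ) with hA
  have hn0 : (0:ℝ) < (n:ℝ) := by exact_mod_cast hn
  have hu : (0:ℝ) < (n:ℝ) ^ L := Real.rpow_pos_of_pos hn0 L
  have hv : (0:ℝ) < ((n:ℝ) + 1) ^ L := Real.rpow_pos_of_pos (by linarith) L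
  have hS := Sval_le p s h hs hp hrange hn
  have hI := Ival_ge p s h hs hp hrange hn
  have hap : A + 1 ≤ (p:ℝ) * (n:ℝ) ^ L := aP p s h hs hp hrange hn
  have hA0 : (0:ℝ) ≤ A := by rw [hA]; positivity
  have huv : (n:ℝ) ^ L ≤ ((n:ℝ) + 1) ^ L :=
    Real.rpow_le_rpow (le_of_lt hn0) (by linarith) (le_of_lt (lexp_pos p s hs hp))
  have hsub : 0 ≤ 1 / (n:ℝ) ^ L - 1 / ((n:ℝ) + 1) ^ L := by
    have := one_div_le_one_div_of_le hu huv
    linarith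
  have h2 : (A + 1) * (1 / (n:ℝ) ^ L - 1 / ((n:ℝ) + 1) ^ L)
      ≤ ((p:ℝ) * (n:ℝ) ^ L) * (1 / (n:ℝ) ^ L - 1 / ((n:ℝ) + 1) ^ L) :=
    mul_le_mul_of_nonneg_right hap hsub
  have h3 : ((p:ℝ) * (n:ℝ) ^ L) * (1 / (n:ℝ) ^ L - 1 / ((n:ℝ) + 1) ^ L)
      = (p:ℝ) * (1 - (n:ℝ) ^ L / ((n:ℝ) + 1) ^ L) := by
    field_simp
  have h4 : (n:ℝ) ^ L / ((n:ℝ) + 1) ^ L = ((n:ℝ) / ((n:ℝ) + 1)) ^ L :=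
    (Real.div_rpow (le_of_lt hn0) (by linarith) L).symm
  have he : (A + 1) / (n:ℝ) ^ L - A / ((n:ℝ) + 1) ^ L
      = (A + 1) * (1 / (n:ℝ) ^ L - 1 / ((n:ℝ) + 1) ^ L) + 1 / ((n:ℝ) + 1) ^ L := by
    field_simp
    ring
  have hgoal : (A + 1) / (n:ℝ) ^ L - A / ((n:ℝ) + 1) ^ L
      ≤ (p:ℝ) * (1 - ((n:ℝ) / ((n:ℝ) + 1)) ^ L) + 1 / ((n:ℝ) + 1) ^ L := by
    rw [he, ← h4]
    linarith [h2, h3]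
  linarith [hS, hI, hgoal]

lemma E_tendsto (hs : 2 ≤ s) (hp : s < p) :
    Tendsto (fun n : ℕ => (p:ℝ) * (1 - ((n:ℝ) / ((n:ℝ) + 1)) ^ lexp p s)
      + 1 / ((n:ℝ) + 1) ^ lexp p s) atTop (𝓝 0) := by
  have t1 : Tendsto (fun n : ℕ => (n:ℝ) / ((n:ℝ) + 1)) atTop (𝓝 1) :=
    tendsto_natCast_div_add_atTop (1:ℝ)
  have hcont : ContinuousAt (fun x : ℝ => x ^ lexp p s) 1 :=
    Real.continuousAt_rpow_const _ _ (Or.inl one_ne_zero)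
  have t2 : Tendsto (fun n : ℕ => ((n:ℝ) / ((n:ℝ) + 1)) ^ lexp p s) atTop (𝓝 1) := by
    have := hcont.tendsto.comp t1
    simpa [Real.one_rpow, Function.comp_def] using this
  have t3 : Tendsto (fun n : ℕ => (p:ℝ) * (1 - ((n:ℝ) / ((n:ℝ) + 1)) ^ lexp p s)) atTop
      (𝓝 0) := by
    have hsub : Tendsto (fun n : ℕ => 1 - ((n:ℝ) / ((n:ℝ) + 1)) ^ lexp p s) atTop (𝓝 0) := by
      have := tendsto_const_nhds (x := (1:ℝ)) (f := atTop (α := ℕ))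
      simpa using this.sub t2
    simpa using hsub.const_mul (p:ℝ)
  have t4 : Tendsto (fun n : ℕ => 1 / ((n:ℝ) + 1) ^ lexp p s) atTop (𝓝 0) := by
    apply squeeze_zero (g := fun n : ℕ => 1 / ((n:ℝ) + 1))
    · intro n
      positivity
    · intro n
      apply one_div_le_one_div_of_le (by positivity)
      have h0 : (0:ℝ) ≤ (n:ℝ) := Nat.cast_nonneg n
      calc (n:ℝ) + 1 = ((n:ℝ) + 1) ^ (1:ℝ) := (Real.rpow_one _).symm
        _ ≤ ((n:ℝ) + 1) ^ lexp p s :=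
            Real.rpow_le_rpow_of_exponent_le (by linarith) (lexp_ge_one p s hs hp)
    · exact tendsto_one_div_add_atTop_nhds_zero_nat
  simpa using t3.add t4

lemma reach (hs : 2 ≤ s) (hp : s < p) (hmono : ∀ i j, i < j → j < s → h i < h j)
    (hrange : ∀ i, i < s → h i < p) (γ : ℝ)
    (base : ∃ n, 0 < n ∧ Ival p s h n ≤ γ ∧ γ ≤ Sval p s h n) :
    ∀ N : ℕ, ∃ n, N ≤ n ∧ 0 < n ∧ Ival p s h n ≤ γ ∧ γ ≤ Sval p s h n := by
  intro N
  induction N with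
  | zero =>
    obtain ⟨n, hn, hI, hS⟩ := base
    exact ⟨n, Nat.zero_le _, hn, hI, hS⟩
  | succ N ihN =>
    obtain ⟨n, hNn, hn, hI, hS⟩ := ihN
    obtain ⟨d, hd, hI', hS'⟩ := step_exists p s h hs hp hmono hrange hn hI hS
    refine ⟨s * n + d, ?_, by positivity, hI', hS'⟩
    have : 2 * n ≤ s * n := Nat.mul_le_mul_right n hs
    omega

lemma base_exists (hs : 2 ≤ s) (hp : s < p) (hmono : ∀ i j, i < j → j < s → h i < h j)
    (hrange : ∀ i, i < s → h i < p) (γ : ℝ)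
    (hγI : sInf {x : ℝ | ∃ n : ℕ, 1 ≤ n ∧ cantorB p s h n = x} ≤ γ)
    (hγS : γ ≤ sSup {x : ℝ | ∃ n : ℕ, 1 ≤ n ∧ cantorB p s h n = x}) :
    ∃ n, 0 < n ∧ Ival p s h n ≤ γ ∧ γ ≤ Sval p s h n := by
  have hTne : {x : ℝ | ∃ n : ℕ, 1 ≤ n ∧ cantorB p s h n = x}.Nonempty :=
    ⟨cantorB p s h 1, 1, le_refl 1, rfl⟩
  have hne : (Finset.Icc 1 (s - 1)).Nonempty := ⟨1, Finset.mem_Icc.2 (by omega)⟩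
  have hmin : (Finset.Icc 1 (s - 1)).inf' hne (fun d => Ival p s h d)
      ≤ sInf {x : ℝ | ∃ n : ℕ, 1 ≤ n ∧ cantorB p s h n = x} := by
    apply le_csInf hTne
    rintro x ⟨n, hn1, rfl⟩
    obtain ⟨d, hd0, hds, hmem⟩ := cone_lead s hs n (by omega)
    calc (Finset.Icc 1 (s - 1)).inf' hne (fun d => Ival p s h d) ≤ Ival p s h d :=
          Finset.inf'_le (fun d => Ival p s h d) (Finset.mem_Icc.2 (by omega))
      _ ≤ cantorB p s h n := Ival_le_mem p s h hs hmem
  have hmax : sSup {x : ℝ | ∃ n : ℕ, 1 ≤ n ∧ cantorB p s h n = x}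
      ≤ (Finset.Icc 1 (s - 1)).sup' hne (fun d => Sval p s h d) := by
    apply csSup_le hTne
    rintro x ⟨n, hn1, rfl⟩
    obtain ⟨d, hd0, hds, hmem⟩ := cone_lead s hs n (by omega)
    calc cantorB p s h n ≤ Sval p s h d := mem_le_Sval p s h hs hp hrange (by omega) hmem
      _ ≤ (Finset.Icc 1 (s - 1)).sup' hne (fun d => Sval p s h d) :=
          Finset.le_sup' (fun d => Sval p s h d) (Finset.mem_Icc.2 (by omega))
  obtain ⟨d0, hd0mem, hd0eq⟩ := Finset.exists_mem_eq_inf' hne (fun d => Ival p s h d)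
  obtain ⟨d1, hd1mem, hd1eq⟩ := Finset.exists_mem_eq_sup' hne (fun d => Sval p s h d)
  have hd0' := Finset.mem_Icc.1 hd0mem
  have hd1' := Finset.mem_Icc.1 hd1mem
  have hw1 : ∃ i, i < s - 1 ∧ Ival p s h (i + 1) ≤ γ := by
    refine ⟨d0 - 1, by omega, ?_⟩
    have he : d0 - 1 + 1 = d0 := by omega
    rw [he]
    calc Ival p s h d0 = (Finset.Icc 1 (s - 1)).inf' hne (fun d => Ival p s h d) := hd0eq.symm
      _ ≤ sInf {x : ℝ | ∃ n : ℕ, 1 ≤ n ∧ cantorB p s h n = x} := hmin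
      _ ≤ γ := hγI
  have hw2 : ∃ i, i < s - 1 ∧ γ ≤ Sval p s h (i + 1) := by
    refine ⟨d1 - 1, by omega, ?_⟩
    have he : d1 - 1 + 1 = d1 := by omega
    rw [he]
    calc γ ≤ sSup {x : ℝ | ∃ n : ℕ, 1 ≤ n ∧ cantorB p s h n = x} := hγS
      _ ≤ (Finset.Icc 1 (s - 1)).sup' hne (fun d => Sval p s h d) := hmax
      _ = Sval p s h d1 := hd1eq
  obtain ⟨i, hi, hIi, hSi⟩ := cyclic (s - 1) (by omega) (fun i => Ival p s h (i + 1))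
    (fun i => Sval p s h (i + 1)) γ
    (fun i hi => Ival_le_Sval p s h hs hp hrange (by omega))
    (fun i hi => by
      show Ival p s h (i + 1) ≤ Sval p s h ((i + 1) % (s - 1) + 1)
      by_cases hcase : i + 1 < s - 1
      · rw [Nat.mod_eq_of_lt hcase]
        exact baseA p s h hs hp hmono hrange (by omega) (by omega)
      · have h1 : (i + 1) % (s - 1) = 0 := by
          have he : i + 1 = s - 1 := by omega
          rw [he, Nat.mod_self]
        rw [h1]
        have h2 : i + 1 = s - 1 := by omega
        rw [h2]
        simpa using baseW p s h hs hp hmono hrange)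
    hw1 hw2
  exact ⟨i + 1, by omega, hIi, hSi⟩

end St5

theorem stmt5 (p s : ℕ) (h : ℕ → ℕ) (hs : 2 ≤ s) (hp : s < p)
    (hmono : ∀ i j, i < j → j < s → h i < h j)
    (hrange : ∀ i, i < s → h i < p)
    (m M : ℝ) (hm : m = sInf {x : ℝ | ∃ n : ℕ, 1 ≤ n ∧ cantorB p s h n = x})
    (hM : M = sSup {x : ℝ | ∃ n : ℕ, 1 ≤ n ∧ cantorB p s h n = x}) :
    ∀ γ ∈ Set.Icc m M, MapClusterPt γ atTop (fun n : ℕ => cantorB p s h n) := by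
  intro γ hγ
  obtain ⟨hγm, hγM⟩ := hγ
  rw [hm] at hγm
  rw [hM] at hγM
  have base := St5.base_exists p s h hs hp hmono hrange γ hγm hγM
  rw [mapClusterPt_iff_frequently]
  intro U hU
  rw [Metric.mem_nhds_iff] at hU
  obtain ⟨ε, hε, hball⟩ := hU
  rw [Filter.frequently_atTop]
  intro N
  obtain ⟨N1, hN1⟩ := (Metric.tendsto_atTop.1 (St5.E_tendsto p s hs hp)) ε hε
  obtain ⟨n, hNn, hn, hI, hS⟩ :=
    St5.reach p s h hs hp hmono hrange γ base (max N N1)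
  refine ⟨n, le_trans (le_max_left _ _) hNn, ?_⟩
  refine hball ?_
  have hb1 : St5.Ival p s h n ≤ cantorB p s h n :=
    St5.Ival_le_mem p s h hs (St5.cone_self s n (by omega))
  have hb2 : cantorB p s h n ≤ St5.Sval p s h n :=
    St5.mem_le_Sval p s h hs hp hrange hn (St5.cone_self s n (by omega))
  have hdiam := St5.diam_le p s h hs hp hrange hn
  have hEn := hN1 n (le_trans (le_max_right _ _) hNn)
  rw [Real.dist_eq, sub_zero] at hEn
  have hEn' : (p:ℝ) * (1 - ((n:ℝ) / ((n:ℝ) + 1)) ^ St5.lexp p s)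
      + 1 / ((n:ℝ) + 1) ^ St5.lexp p s < ε :=
    lt_of_le_of_lt (le_abs_self _) hEn
  have hdist : dist (cantorB p s h n) γ < ε := by
    rw [Real.dist_eq]
    have habs : |cantorB p s h n - γ| ≤ St5.Sval p s h n - St5.Ival p s h n := by
      rw [abs_sub_le_iff]
      constructor <;> linarith
    linarith
  exact Metric.mem_ball.2 hdist
end

section
/- For every γ ∈ (m, M) there exists an integer n₁ ≥ s^{k₀} such that b_{n₁+1} < γ ≤ b_{n₁}, where k₀ is any index beyond which the monotonicity b_{sn+s-1} < ... < b_{sn+1} < b_n ≤ b_{sn} holds for all n ≥ s^{k₀-1}. -/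
open Real Filter Set MeasureTheory Topology
open scoped Classical ENNReal

theorem stmt6 (p s : ℕ) (h : ℕ → ℕ) (hs : 2 ≤ s) (hp : s < p)
    (hmono : ∀ i j, i < j → j < s → h i < h j)
    (hrange : ∀ i, i < s → h i < p)
    (m M : ℝ) (hm : m = sInf {x : ℝ | ∃ n : ℕ, 1 ≤ n ∧ cantorB p s h n = x})
    (hM : M = sSup {x : ℝ | ∃ n : ℕ, 1 ≤ n ∧ cantorB p s h n = x})
    (hmacc : MapClusterPt m atTop (fun n : ℕ => cantorB p s h n))
    (hMacc : MapClusterPt M atTop (fun n : ℕ => cantorB p s h n))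
    (k₀ : ℕ) (hk₀ : 1 ≤ k₀)
    (hmon : ∀ n : ℕ, s ^ (k₀ - 1) ≤ n →
      (∀ i : ℕ, 1 ≤ i → i + 1 ≤ s - 1 →
        cantorB p s h (s * n + i + 1) < cantorB p s h (s * n + i)) ∧
      cantorB p s h (s * n + 1) < cantorB p s h n ∧
      cantorB p s h n ≤ cantorB p s h (s * n)) :
    ∀ γ : ℝ, m < γ → γ < M →
      ∃ n₁ : ℕ, s ^ k₀ ≤ n₁ ∧ cantorB p s h (n₁ + 1) < γ ∧ γ ≤ cantorB p s h n₁ := by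
  intro γ hmγ hγM
  set b : ℕ → ℝ := fun n => cantorB p s h n with hb
  -- find n ≥ s^k₀ with γ < b n
  have hfreqM : ∃ᶠ n in atTop, b n ∈ Ioi γ :=
    (mapClusterPt_iff_frequently.mp hMacc) (Ioi γ) (Ioi_mem_nhds hγM)
  obtain ⟨n, hn, hγbn⟩ := Filter.frequently_atTop.mp hfreqM (s ^ k₀)
  -- find n₂ ≥ n+1 with b n₂ < γ
  have hfreqm : ∃ᶠ k in atTop, b k ∈ Iio γ :=
    (mapClusterPt_iff_frequently.mp hmacc) (Iio γ) (Iio_mem_nhds hmγ)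
  obtain ⟨n₂, hn₂, hbn₂⟩ := Filter.frequently_atTop.mp hfreqm (n + 1)
  simp only [mem_Ioi] at hγbn
  simp only [mem_Iio] at hbn₂
  have hnlt : n ≤ n₂ - 1 := by omega
  set P : ℕ → Prop := fun k => γ ≤ b k with hP
  set n₁ : ℕ := Nat.findGreatest P (n₂ - 1) with hn₁
  have hPn : P n := le_of_lt hγbn
  have hle : n ≤ n₁ := Nat.le_findGreatest hnlt hPn
  have hspec : P n₁ := Nat.findGreatest_spec hnlt hPn
  refine ⟨n₁, le_trans hn hle, ?_, hspec⟩
  have hn₁le : n₁ ≤ n₂ - 1 := Nat.findGreatest_le _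
  by_cases hcase : n₁ + 1 ≤ n₂ - 1
  · by_contra hcon
    push_neg at hcon
    exact Nat.findGreatest_is_greatest (Nat.lt_succ_self n₁) hcase hcon
  · have : n₁ + 1 = n₂ := by omega
    rw [this]; exact hbn₂
end

section
/- For any x > 0, writing x = [x] + Σ_{j≥1} d_j s^{-j} with s-ary digits d_j, the limit λ(x) := lim_{k→∞} a(s^k x)/(s^k x)^{log_s p} exists, where a(y) := a_{⌊y⌋}. Moreover λ(sx) = λ(x) and λ(x) ∈ [m, M] for every x > 0. -/
open Real Filter Set MeasureTheory Topology
open scoped Classical ENNReal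

lemma cantorInt_rec (p s : ℕ) (h : ℕ → ℕ) (hs : 2 ≤ s) {n : ℕ} (hn : 0 < n) :
    cantorInt p s h n = h (n % s) + p * cantorInt p s h (n / s) := by
  unfold cantorInt
  rw [Nat.digits_def' (by omega : 1 < s) hn]
  simp [List.foldr]

lemma foldr_lt (p s : ℕ) (h : ℕ → ℕ) (hrange : ∀ i, i < s → h i < p) (hp : 0 < p) :
    ∀ l : List ℕ, (∀ d ∈ l, d < s) →
      l.foldr (fun d acc => h d + p * acc) 0 + 1 ≤ p ^ l.length := by
  intro l
  induction l with
  | nil => simp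
  | cons d t ih =>
    intro hd
    have h1 : h d < p := hrange d (hd d (by simp))
    have h2 := ih (fun e he => hd e (by simp [he]))
    simp only [List.foldr_cons, List.length_cons, pow_succ]
    nlinarith [pow_pos hp t.length]

lemma cantorInt_lt (p s : ℕ) (h : ℕ → ℕ) (hrange : ∀ i, i < s → h i < p)
    (hs : 2 ≤ s) (hp : 0 < p) (n : ℕ) :
    cantorInt p s h n + 1 ≤ p ^ (Nat.digits s n).length :=
  foldr_lt p s h hrange hp _ (fun _ hd => Nat.digits_lt_base (by omega) hd)

theorem stmt7 (p s : ℕ) (h : ℕ → ℕ) (hs : 2 ≤ s) (hp : s < p)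
    (hmono : ∀ i j, i < j → j < s → h i < h j)
    (hrange : ∀ i, i < s → h i < p)
    (m M : ℝ) (hm : m = sInf {x : ℝ | ∃ n : ℕ, 1 ≤ n ∧ cantorB p s h n = x})
    (hM : M = sSup {x : ℝ | ∃ n : ℕ, 1 ≤ n ∧ cantorB p s h n = x}) :
    ∃ lam : ℝ → ℝ, ∀ x : ℝ, 0 < x →
      Tendsto (fun k : ℕ => cantorA p s h ((s : ℝ) ^ k * x) / ((s : ℝ) ^ k * x) ^ Real.logb s p)
        atTop (nhds (lam x)) ∧
      lam ((s : ℝ) * x) = lam x ∧ lam x ∈ Set.Icc m M := by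
  set L := Real.logb s p with hL
  have hs1 : (1:ℝ) < (s:ℝ) := by exact_mod_cast (by omega : 1 < s)
  have hs0 : (0:ℝ) < (s:ℝ) := by linarith
  have hp1 : (1:ℝ) < (p:ℝ) := by exact_mod_cast (by omega : 1 < p)
  have hp0 : (0:ℝ) < (p:ℝ) := by linarith
  have hsL : (s:ℝ) ^ L = (p:ℝ) := Real.rpow_logb hs0 (by linarith) hp0
  have hL0 : 0 ≤ L := Real.logb_nonneg hs1 (le_of_lt hp1)
  -- (s^k)^L = p^k
  have hpow : ∀ k : ℕ, ((s:ℝ)^k) ^ L = (p:ℝ)^k := by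
    intro k
    rw [← Real.rpow_natCast (s:ℝ) k, ← Real.rpow_mul hs0.le, mul_comm,
      Real.rpow_mul hs0.le, hsL, Real.rpow_natCast]
  set S : Set ℝ := {x : ℝ | ∃ n : ℕ, 1 ≤ n ∧ cantorB p s h n = x} with hS
  have hSne : S.Nonempty := ⟨cantorB p s h 1, 1, le_refl 1, rfl⟩
  have hBnonneg : ∀ n : ℕ, 0 ≤ cantorB p s h n := fun n =>
    div_nonneg (Nat.cast_nonneg _) (Real.rpow_nonneg (Nat.cast_nonneg _) _)
  have hBle : ∀ n : ℕ, 1 ≤ n → cantorB p s h n ≤ p := by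
    intro n hn
    set len := (Nat.digits s n).length with hlen
    have hnlow : s ^ len ≤ s * n := Nat.base_pow_length_digits_le s n (by omega) (by omega)
    have hnlowR : (s:ℝ) ^ len / s ≤ (n:ℝ) := by
      rw [div_le_iff₀ hs0]
      calc (s:ℝ) ^ len = ((s ^ len : ℕ) : ℝ) := by push_cast; ring
        _ ≤ ((s * n : ℕ) : ℝ) := by exact_mod_cast hnlow
        _ = (n:ℝ) * s := by push_cast; ring
    have h1 : ((s:ℝ) ^ len / s) ^ L ≤ (n:ℝ) ^ L :=
      Real.rpow_le_rpow (by positivity) hnlowR hL0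
    have h2 : ((s:ℝ) ^ len / s) ^ L = (p:ℝ) ^ len / p := by
      rw [Real.div_rpow (by positivity) hs0.le, hpow, Real.rpow_logb hs0 (by linarith) hp0]
    have ha : (cantorInt p s h n : ℝ) ≤ (p:ℝ) ^ len := by
      have h4 : cantorInt p s h n + 1 ≤ p ^ len := by
        rw [hlen]; exact cantorInt_lt p s h hrange hs (by omega) n
      calc (cantorInt p s h n : ℝ) ≤ ((p ^ len : ℕ) : ℝ) := by
            exact_mod_cast Nat.le_of_succ_le h4
        _ = (p:ℝ) ^ len := by push_cast; ring
    have hnL : (0:ℝ) < (n:ℝ) ^ L :=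
      Real.rpow_pos_of_pos (by exact_mod_cast (by omega : 0 < n)) L
    rw [cantorB, div_le_iff₀ hnL]
    have h3 : (p:ℝ) ^ len / p ≤ (n:ℝ) ^ L := by rw [← h2]; exact h1
    calc (cantorInt p s h n : ℝ) ≤ (p:ℝ) ^ len := ha
      _ = (p:ℝ) * ((p:ℝ) ^ len / p) := by field_simp
      _ ≤ (p:ℝ) * (n:ℝ) ^ L := by nlinarith
  have hmem_Icc : ∀ n : ℕ, 1 ≤ n → cantorB p s h n ∈ Set.Icc m M := by
    intro n hn
    have hmemS : cantorB p s h n ∈ S := ⟨n, hn, rfl⟩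
    constructor
    · rw [hm]
      exact csInf_le ⟨0, fun y hy => by obtain ⟨k, _, rfl⟩ := hy; exact hBnonneg k⟩ hmemS
    · rw [hM]
      exact le_csSup ⟨(p:ℝ), fun y hy => by obtain ⟨k, hk, rfl⟩ := hy; exact hBle k hk⟩ hmemS
  -- the main sequence
  set G : ℝ → ℕ → ℝ := fun x k =>
    cantorA p s h ((s : ℝ) ^ k * x) / ((s : ℝ) ^ k * x) ^ L with hGdef
  have key : ∀ x : ℝ, 0 < x → ∃ l, Tendsto (G x) atTop (nhds l) ∧ l ∈ Set.Icc m M := by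
    intro x hx
    set F : ℕ → ℝ := fun k => (cantorInt p s h ⌊(s:ℝ)^k * x⌋₊ : ℝ) / (p:ℝ)^k with hF
    -- floor recursion
    have hfloor : ∀ k : ℕ, ⌊(s:ℝ)^k * x⌋₊ = ⌊(s:ℝ)^(k+1) * x⌋₊ / s := by
      intro k
      have : (s:ℝ)^k * x = ((s:ℝ)^(k+1) * x) / (s:ℕ) := by
        field_simp
        ring
      rw [this, Nat.floor_div_natCast]
    have hFc : CauchySeq F := by
      apply cauchySeq_of_le_geometric ((p:ℝ)⁻¹) 1 (by rw [inv_lt_one_iff₀]; right; exact hp1)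
      intro k
      set n1 := ⌊(s:ℝ)^(k+1) * x⌋₊ with hn1
      rcases Nat.eq_zero_or_pos n1 with h0 | hpos
      · have h0' : ⌊(s:ℝ)^k * x⌋₊ = 0 := by rw [hfloor k, ← hn1, h0]; simp
        have e1 : F (k+1) = 0 := by simp [hF, ← hn1, h0, cantorInt]
        have e2 : F k = 0 := by simp [hF, h0', cantorInt]
        rw [e1, e2, dist_self]
        positivity
      · have hrec := cantorInt_rec p s h hs hpos
        have hd : h (n1 % s) < p := hrange _ (Nat.mod_lt _ (by omega))
        have : F (k+1) = F k + (h (n1 % s) : ℝ) / (p:ℝ)^(k+1) := by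
          simp only [hF, ← hn1, hfloor k, hrec]
          push_cast
          field_simp
          ring
        rw [dist_eq, this]
        have hpk : (0:ℝ) < (p:ℝ)^(k+1) := by positivity
        have habs : |F k - (F k + (h (n1 % s) : ℝ) / (p:ℝ)^(k+1))|
            = (h (n1 % s) : ℝ) / (p:ℝ)^(k+1) := by
          rw [abs_sub_comm]
          have : F k + (h (n1 % s) : ℝ) / (p:ℝ)^(k+1) - F k
              = (h (n1 % s) : ℝ) / (p:ℝ)^(k+1) := by ring
          rw [this, abs_of_nonneg (by positivity)]
        rw [habs, one_mul]
        rw [div_le_iff₀ hpk]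
        have : ((p:ℝ)⁻¹)^k * (p:ℝ)^(k+1) = p := by
          rw [pow_succ]
          field_simp
          rw [one_div, inv_pow, inv_mul_cancel₀ (by positivity)]
        rw [this]
        exact_mod_cast hd.le
    obtain ⟨l0, hl0⟩ := cauchySeq_tendsto_of_complete hFc
    have hxL : (0:ℝ) < x ^ L := Real.rpow_pos_of_pos hx L
    have hGF : ∀ k : ℕ, G x k = F k / x ^ L := by
      intro k
      have hmul : ((s:ℝ)^k * x) ^ L = (p:ℝ)^k * x ^ L := by
        rw [Real.mul_rpow (by positivity) hx.le, hpow]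
      simp only [hGdef, hF, cantorA, hmul]
      rw [div_div]
    have hG : Tendsto (G x) atTop (nhds (l0 / x ^ L)) := by
      have := hl0.div_const (x ^ L)
      exact this.congr (fun k => (hGF k).symm)
    refine ⟨l0 / x ^ L, hG, ?_⟩
    -- membership in Icc
    have hsx : Tendsto (fun k : ℕ => (s:ℝ)^k * x) atTop atTop :=
      (tendsto_pow_atTop_atTop_of_one_lt hs1).atTop_mul_const hx
    have hnfl : Tendsto (fun k : ℕ => ⌊(s:ℝ)^k * x⌋₊) atTop atTop :=
      (tendsto_nat_floor_atTop (α := ℝ)).comp hsx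
    have hev1 : ∀ᶠ k : ℕ in atTop, 1 ≤ ⌊(s:ℝ)^k * x⌋₊ := hnfl.eventually_ge_atTop 1
    set u : ℕ → ℝ := fun k => ((s:ℝ)^k * x) / (⌊(s:ℝ)^k * x⌋₊ : ℝ) with hu
    have hu1 : Tendsto u atTop (nhds 1) := by
      have h1 : Tendsto (fun k : ℕ => (⌊(s:ℝ)^k * x⌋₊ : ℝ) / ((s:ℝ)^k * x)) atTop (nhds 1) :=
        tendsto_nat_floor_div_atTop.comp hsx
      have h2 := h1.inv₀ one_ne_zero
      simp only [inv_div, inv_one] at h2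
      exact h2
    have huL : Tendsto (fun k => u k ^ L) atTop (nhds 1) := by
      have hc := (Real.continuousAt_rpow_const 1 L (Or.inl one_ne_zero)).tendsto
      have := hc.comp hu1
      simpa [Real.one_rpow, Function.comp_def] using this
    have hβ : Tendsto (fun k => cantorB p s h ⌊(s:ℝ)^k * x⌋₊) atTop (nhds (l0 / x ^ L)) := by
      have hmul : Tendsto (fun k => G x k * u k ^ L) atTop (nhds (l0 / x ^ L * 1)) :=
        hG.mul huL
      rw [mul_one] at hmul
      apply hmul.congr'
      filter_upwards [hev1] with k hk
      have hnpos : (0:ℝ) < (⌊(s:ℝ)^k * x⌋₊ : ℝ) := by exact_mod_cast (by omega : 0 < ⌊(s:ℝ)^k * x⌋₊)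
      have hsxpos : (0:ℝ) < (s:ℝ)^k * x := by positivity
      have hsxL : (0:ℝ) < ((s:ℝ)^k * x) ^ L := Real.rpow_pos_of_pos hsxpos L
      have hnL : (0:ℝ) < ((⌊(s:ℝ)^k * x⌋₊ : ℝ)) ^ L := Real.rpow_pos_of_pos hnpos L
      simp only [hGdef, hu, cantorA, cantorB]
      rw [Real.div_rpow hsxpos.le hnpos.le]
      field_simp
      rfl
    apply isClosed_Icc.mem_of_tendsto hβ
    filter_upwards [hev1] with k hk
    exact hmem_Icc _ hk
  -- define lam via limUnder
  refine ⟨fun x => limUnder atTop (G x), ?_⟩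
  intro x hx
  obtain ⟨l, hl, hmem⟩ := key x hx
  have hlam : limUnder atTop (G x) = l := hl.limUnder_eq
  refine ⟨?_, ?_, ?_⟩
  case refine_1 =>
    show Tendsto (G x) atTop (nhds (limUnder atTop (G x)))
    rw [hlam]; exact hl
  case refine_3 =>
    show limUnder atTop (G x) ∈ Set.Icc m M
    rw [hlam]; exact hmem
  -- scale invariance
  have hshift : G ((s:ℝ) * x) = fun k => G x (k + 1) := by
    funext k
    simp only [hGdef]
    have : (s:ℝ)^k * ((s:ℝ) * x) = (s:ℝ)^(k+1) * x := by ring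
    rw [this]
  have hG2 : Tendsto (G ((s:ℝ) * x)) atTop (nhds l) := by
    rw [hshift]
    exact hl.comp (Filter.tendsto_add_atTop_nat 1)
  show limUnder atTop (G ((s:ℝ) * x)) = limUnder atTop (G x)
  rw [hG2.limUnder_eq, hlam]
end

section
/- For every α ∈ [m, M], the level set S_α = {x > 0 : λ(x) = α} has Lebesgue measure zero. -/
open Real Filter Set MeasureTheory Topology
open scoped Classical ENNReal

section natlem
variable (p s : ℕ) (h : ℕ → ℕ) (hs : 2 ≤ s) (hp : s < p)
    (hmono : ∀ i j, i < j → j < s → h i < h j)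
    (hrange : ∀ i, i < s → h i < p)

include hs in
lemma cInt_rec {n : ℕ} (hn : 0 < n) :
    cantorInt p s h n = h (n % s) + p * cantorInt p s h (n / s) := by
  unfold cantorInt
  rw [Nat.digits_def' (by omega : 1 < s) hn]
  simp [List.foldr]

include hs hmono in
lemma cInt_log_le {n : ℕ} (hn : 1 ≤ n) : p ^ (Nat.log s n) ≤ cantorInt p s h n := by
  induction n using Nat.strong_induction_on with
  | _ n ih =>
    rw [cInt_rec p s h hs (by omega)]
    by_cases hns : n < s
    · have h1 : Nat.log s n = 0 := Nat.log_eq_zero_iff.2 (Or.inl hns)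
      have h2 : 1 ≤ h n := by have := hmono 0 n (by omega) hns; omega
      have h3 : n % s = n := Nat.mod_eq_of_lt hns
      simp [h1, h3]; omega
    · push_neg at hns
      have hq1 : 1 ≤ n / s := (Nat.one_le_div_iff (by omega)).2 hns
      have hqlt : n / s < n := Nat.div_lt_self (by omega) (by omega)
      have hIH := ih (n / s) hqlt hq1
      have hl : Nat.log s n = Nat.log s (n / s) + 1 := by
        rw [Nat.log_div_base]
        have : 1 ≤ Nat.log s n := (Nat.one_le_iff_ne_zero.2 (Nat.log_pos (by omega) hns).ne')
        omega
      have hmul : p * p ^ Nat.log s (n/s) ≤ p * cantorInt p s h (n/s) :=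
        Nat.mul_le_mul_left p hIH
      have hcomm : p ^ Nat.log s (n/s) * p = p * p ^ Nat.log s (n/s) := Nat.mul_comm _ _
      rw [hl, pow_succ]
      omega

include hs hp hmono hrange in
lemma cInt_strictMono : StrictMono (cantorInt p s h) := by
  intro n m hnm
  induction m using Nat.strong_induction_on generalizing n with
  | _ m ih =>
    have hm1 : 1 ≤ m := by omega
    rcases Nat.eq_zero_or_pos n with hn0 | hn0
    · subst hn0
      have h0 : cantorInt p s h 0 = 0 := by simp [cantorInt]
      rw [h0]
      calc 0 < p ^ Nat.log s m := Nat.pow_pos (by omega)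
      _ ≤ _ := cInt_log_le p s h hs hmono hm1
    · have en := cInt_rec p s h hs hn0
      have em := cInt_rec p s h hs (show 0 < m by omega)
      have hqle : n / s ≤ m / s := Nat.div_le_div_right hnm.le
      rcases lt_or_eq_of_le hqle with hql | hqe
      · have hqlt : m / s < m := Nat.div_lt_self (by omega) (by omega)
        have hrecIH : cantorInt p s h (n/s) < cantorInt p s h (m/s) := ih (m/s) hqlt hql
        have h1 : h (n % s) < p := hrange _ (Nat.mod_lt _ (by omega))
        have h2 : p * (cantorInt p s h (n/s) + 1) ≤ p * cantorInt p s h (m/s) :=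
          Nat.mul_le_mul_left p hrecIH
        have h3 : p * (cantorInt p s h (n/s) + 1) = p * cantorInt p s h (n/s) + p := by ring
        omega
      · have hd1 := Nat.div_add_mod n s
        have hd2 := Nat.div_add_mod m s
        have hrm : m % s < s := Nat.mod_lt _ (by omega)
        have hrlt : n % s < m % s := by
          have : s * (n / s) = s * (m / s) := by rw [hqe]
          omega
        have hh := hmono _ _ hrlt hrm
        have : p * cantorInt p s h (n/s) = p * cantorInt p s h (m/s) := by rw [hqe]
        omega

include hs hrange in
lemma cInt_cylinder (N : ℕ) (hN : 1 ≤ N) (r : ℕ) :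
    cantorInt p s h (s ^ r * (N + 1) - 1) ≤ cantorInt p s h (s ^ r * N) + (p ^ r - 1) := by
  induction r with
  | zero => simp
  | succ r ih =>
    have hsp : 1 ≤ s ^ r := Nat.one_le_iff_ne_zero.2 (by positivity)
    have h1 : 1 ≤ s ^ r * (N+1) := by nlinarith
    set X := s ^ r * (N+1) - 1 with hX
    have hXval : s ^ r * (N+1) = X + 1 := by omega
    have hkey : s ^ (r+1) * (N + 1) - 1 = s * X + (s - 1) := by
      have e1 : s ^ (r+1) * (N+1) = s * (s ^ r * (N+1)) := by ring
      have e2 : s * (s ^ r * (N+1)) = s * X + s := by rw [hXval]; ring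
      omega
    have hpos : 0 < s * X + (s - 1) := by omega
    rw [hkey, cInt_rec p s h hs hpos]
    have hm : (s * X + (s - 1)) % s = s - 1 := by
      rw [Nat.mul_add_mod, Nat.mod_eq_of_lt (by omega)]
    have hdv : (s * X + (s - 1)) / s = X := by
      rw [Nat.mul_add_div (by omega), Nat.div_eq_of_lt (by omega)]
      omega
    rw [hm, hdv]
    -- RHS expansion
    have hmod2 : (s * (s ^ r * N)) % s = 0 := Nat.mul_mod_right _ _
    have hdiv2 : (s * (s ^ r * N)) / s = s ^ r * N := Nat.mul_div_cancel_left _ (by omega)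
    have hbigpos : 0 < s * (s ^ r * N) := by
      have : 0 < s ^ r * N := by nlinarith
      nlinarith
    have hbig : cantorInt p s h (s ^ (r+1) * N) = h 0 + p * cantorInt p s h (s ^ r * N) := by
      have e : s ^ (r+1) * N = s * (s ^ r * N) := by ring
      rw [e, cInt_rec p s h hs hbigpos, hmod2, hdiv2]
    have hhs1 : h (s-1) < p := hrange _ (by omega)
    have hppos : 0 < p := lt_of_le_of_lt (Nat.zero_le _) (hrange 0 (by omega))
    have hp1 : 1 ≤ p ^ r := Nat.one_le_iff_ne_zero.2 (pow_ne_zero _ (by omega))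
    have hpr : p ^ (r+1) = p * p ^ r := by rw [pow_succ]; ring
    have hmul : p * cantorInt p s h X ≤ p * (cantorInt p s h (s^r * N) + (p^r - 1)) :=
      Nat.mul_le_mul_left p ih
    have hmul2 : p * (cantorInt p s h (s^r * N) + (p^r - 1)) =
        p * cantorInt p s h (s^r * N) + p * (p^r - 1) := by ring
    have hp3 : p * (p ^ r - 1) + p = p * p ^ r := by
      have hge : p * 1 ≤ p * p ^ r := Nat.mul_le_mul_left p hp1
      rw [Nat.mul_sub]
      omega
    rw [hbig]
    omega
end natlem

section reallem
variable {p s : ℕ}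

lemma theta_gt_one (hs : 2 ≤ s) (hp : s < p) : 1 < Real.logb s p := by
  have hs1 : (1:ℝ) < (s:ℝ) := by exact_mod_cast (by omega : 1 < s)
  have hp0 : (0:ℝ) < (p:ℝ) := by exact_mod_cast (by omega : 0 < p)
  rw [Real.lt_logb_iff_rpow_lt hs1 hp0, Real.rpow_one]
  exact_mod_cast hp

lemma spow_rpow (hs : 2 ≤ s) (hp : s < p) (j : ℕ) :
    ((s:ℝ) ^ j) ^ Real.logb s p = (p:ℝ) ^ j := by
  have hs0 : (0:ℝ) < (s:ℝ) := by exact_mod_cast (by omega : 0 < s)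
  have hs1 : (1:ℝ) < (s:ℝ) := by exact_mod_cast (by omega : 1 < s)
  have hp0 : (0:ℝ) < (p:ℝ) := by exact_mod_cast (by omega : 0 < p)
  rw [← Real.rpow_natCast (s:ℝ) j, ← Real.rpow_mul hs0.le, mul_comm,
    Real.rpow_mul hs0.le, Real.rpow_logb hs0 hs1.ne' hp0, Real.rpow_natCast]

lemma rpow_gap {θ x y : ℝ} (hθ : 1 < θ) (hx : 0 < x) (hxy : x ≤ y) :
    θ * x ^ (θ - 1) * (y - x) ≤ y ^ θ - x ^ θ := by
  have hy : 0 < y := lt_of_lt_of_le hx hxy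
  have ht0 : 0 ≤ (y - x)/x := div_nonneg (by linarith) hx.le
  have hb := one_add_mul_self_le_rpow_one_add (by linarith : (-1:ℝ) ≤ (y-x)/x) hθ.le
  have h1 : 1 + (y - x)/x = y/x := by field_simp; ring
  rw [h1] at hb
  have h2 : (y/x)^θ = y^θ / x^θ := Real.div_rpow hy.le hx.le θ
  rw [h2] at hb
  have hxθ : (0:ℝ) < x^θ := Real.rpow_pos_of_pos hx θ
  have h3 := mul_le_mul_of_nonneg_left hb hxθ.le
  have h4 : x^θ * (y^θ/x^θ) = y^θ := by field_simp
  have h5 : x ^ (θ-1) = x^θ / x := by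
    rw [Real.rpow_sub hx, Real.rpow_one]
  have h6 : x^θ * (1 + θ * ((y-x)/x)) = x^θ + θ * (x^θ/x) * (y - x) := by
    field_simp
  rw [h4, h6] at h3
  rw [h5]
  linarith
end reallem

section main
variable {p s : ℕ} {h : ℕ → ℕ} {lam : ℝ → ℝ}

lemma tendA (hs : 2 ≤ s) (hp : s < p)
    (hlam : ∀ x : ℝ, 0 < x →
      Tendsto (fun k : ℕ => cantorA p s h ((s : ℝ) ^ k * x) / ((s : ℝ) ^ k * x) ^ Real.logb s p)
        atTop (nhds (lam x)))
    {x : ℝ} (hx : 0 < x) :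
    Tendsto (fun j : ℕ => (cantorInt p s h ⌊(s:ℝ)^j * x⌋₊ : ℝ) / (p:ℝ)^j) atTop
      (𝓝 (lam x * x ^ Real.logb s p)) := by
  have h1 := (hlam x hx).mul_const (x ^ Real.logb s p)
  refine h1.congr (fun j => ?_)
  have hs0 : (0:ℝ) ≤ (s:ℝ)^j := by positivity
  have hp0 : (0:ℝ) < (p:ℝ) := by exact_mod_cast (by omega : 0 < p)
  have e1 : ((s:ℝ)^j * x) ^ Real.logb s p = (p:ℝ)^j * x ^ Real.logb s p := by
    rw [Real.mul_rpow hs0 hx.le, spow_rpow hs hp]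
  unfold cantorA
  rw [e1]
  have hxθ : (0:ℝ) < x ^ Real.logb s p := Real.rpow_pos_of_pos hx _
  have hpj : (0:ℝ) < (p:ℝ)^j := by positivity
  field_simp

lemma keyBound (hs : 2 ≤ s) (hp : s < p)
    (hmono : ∀ i j, i < j → j < s → h i < h j)
    (hrange : ∀ i, i < s → h i < p)
    (hlam : ∀ x : ℝ, 0 < x →
      Tendsto (fun k : ℕ => cantorA p s h ((s : ℝ) ^ k * x) / ((s : ℝ) ^ k * x) ^ Real.logb s p)
        atTop (nhds (lam x)))
    (k N : ℕ) (hN : 1 ≤ N) {x y : ℝ} (hx : 0 < x) (hxy : x ≤ y)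
    (hxN : (N:ℝ) ≤ (s:ℝ)^k * x) (hyN : (s:ℝ)^k * y < (N:ℝ) + 1) :
    lam y * y ^ Real.logb s p - lam x * x ^ Real.logb s p ≤ ((p:ℝ)^k)⁻¹ := by
  have hy : 0 < y := lt_of_lt_of_le hx hxy
  have hT := (tendA hs hp hlam hy).sub (tendA hs hp hlam hx)
  have hp0 : (0:ℝ) < (p:ℝ) := by exact_mod_cast (by omega : 0 < p)
  have hs0 : (0:ℝ) < (s:ℝ) := by exact_mod_cast (by omega : 0 < s)
  refine le_of_tendsto hT ?_
  filter_upwards [eventually_ge_atTop k] with j hj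
  set r := j - k with hr
  have hjr : j = k + r := by omega
  have hsplit : (s:ℝ)^j = (s:ℝ)^r * (s:ℝ)^k := by rw [hjr, pow_add]; ring
  have hflx : (s:ℕ)^r * N ≤ ⌊(s:ℝ)^j * x⌋₊ := by
    apply Nat.le_floor
    push_cast
    calc ((s:ℝ)^r * N) ≤ (s:ℝ)^r * ((s:ℝ)^k * x) := by
          apply mul_le_mul_of_nonneg_left hxN (by positivity)
    _ = (s:ℝ)^j * x := by rw [hsplit]; ring
  have hfly : ⌊(s:ℝ)^j * y⌋₊ < (s:ℕ)^r * (N + 1) := by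
    rw [Nat.floor_lt (by positivity)]
    push_cast
    calc (s:ℝ)^j * y = (s:ℝ)^r * ((s:ℝ)^k * y) := by rw [hsplit]; ring
    _ < (s:ℝ)^r * ((N:ℝ) + 1) := by
          apply mul_lt_mul_of_pos_left hyN (by positivity)
    _ = _ := by ring
  have hfly' : ⌊(s:ℝ)^j * y⌋₊ ≤ s^r * (N + 1) - 1 := by omega
  have hamono := (cInt_strictMono p s h hs hp hmono hrange).monotone
  have ha1 : cantorInt p s h ⌊(s:ℝ)^j * y⌋₊ ≤ cantorInt p s h (s^r * (N+1) - 1) :=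
    hamono hfly'
  have ha2 := cInt_cylinder p s h hs hrange N hN r
  have ha3 : cantorInt p s h (s^r * N) ≤ cantorInt p s h ⌊(s:ℝ)^j * x⌋₊ := hamono hflx
  have hkey : (cantorInt p s h ⌊(s:ℝ)^j * y⌋₊ : ℝ) ≤
      (cantorInt p s h ⌊(s:ℝ)^j * x⌋₊ : ℝ) + (p:ℝ)^r := by
    have hppos : 0 < p := by omega
    have h1 : 1 ≤ p ^ r := Nat.one_le_iff_ne_zero.2 (pow_ne_zero _ (by omega))
    have : cantorInt p s h ⌊(s:ℝ)^j * y⌋₊ ≤ cantorInt p s h ⌊(s:ℝ)^j * x⌋₊ + p^r := by omega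
    exact_mod_cast this
  have hpj : (0:ℝ) < (p:ℝ)^j := by positivity
  have goal2 : ((cantorInt p s h ⌊(s:ℝ)^j * y⌋₊ : ℝ) - (cantorInt p s h ⌊(s:ℝ)^j * x⌋₊ : ℝ))
      / (p:ℝ)^j ≤ ((p:ℝ)^k)⁻¹ := by
    rw [div_le_iff₀ hpj]
    have hsplit2 : (p:ℝ)^j = (p:ℝ)^k * (p:ℝ)^r := by rw [hjr, pow_add]
    rw [hsplit2]
    have hpk : (0:ℝ) < (p:ℝ)^k := by positivity
    calc (cantorInt p s h ⌊(s:ℝ)^j * y⌋₊ : ℝ) - (cantorInt p s h ⌊(s:ℝ)^j * x⌋₊ : ℝ)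
        ≤ (p:ℝ)^r := by linarith
    _ = ((p:ℝ)^k)⁻¹ * ((p:ℝ)^k * (p:ℝ)^r) := by field_simp
  calc (cantorInt p s h ⌊(s:ℝ)^j * y⌋₊ : ℝ) / (p:ℝ)^j
        - (cantorInt p s h ⌊(s:ℝ)^j * x⌋₊ : ℝ) / (p:ℝ)^j
      = ((cantorInt p s h ⌊(s:ℝ)^j * y⌋₊ : ℝ) - (cantorInt p s h ⌊(s:ℝ)^j * x⌋₊ : ℝ))
        / (p:ℝ)^j := by rw [sub_div]
  _ ≤ _ := goal2

lemma cantorB_ge (hs : 2 ≤ s) (hp : s < p)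
    (hmono : ∀ i j, i < j → j < s → h i < h j)
    {n : ℕ} (hn : 1 ≤ n) : 1/(p:ℝ) ≤ cantorB p s h n := by
  have hp0 : (0:ℝ) < (p:ℝ) := by exact_mod_cast (by omega : 0 < p)
  have hn0 : (0:ℝ) < (n:ℝ) := by exact_mod_cast hn
  have hnθ : (0:ℝ) < (n:ℝ) ^ Real.logb s p := Real.rpow_pos_of_pos hn0 _
  unfold cantorB
  rw [le_div_iff₀ hnθ]
  have h1 : (n:ℝ) ^ Real.logb s p ≤ (p:ℝ)^(Nat.log s n + 1) := by
    have hlt : n < s ^ (Nat.log s n + 1) := Nat.lt_pow_succ_log_self (by omega) n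
    have hltR : (n:ℝ) ≤ ((s:ℝ) ^ (Nat.log s n + 1)) := by exact_mod_cast hlt.le
    calc (n:ℝ) ^ Real.logb s p ≤ ((s:ℝ) ^ (Nat.log s n + 1)) ^ Real.logb s p := by
          apply Real.rpow_le_rpow hn0.le hltR
          have := theta_gt_one hs hp; linarith
    _ = (p:ℝ)^(Nat.log s n + 1) := spow_rpow hs hp _
  have h2 : (p:ℝ)^(Nat.log s n) ≤ (cantorInt p s h n : ℝ) := by
    exact_mod_cast cInt_log_le p s h hs hmono hn
  calc 1/(p:ℝ) * (n:ℝ) ^ Real.logb s p ≤ 1/(p:ℝ) * (p:ℝ)^(Nat.log s n + 1) := by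
        apply mul_le_mul_of_nonneg_left h1 (by positivity)
  _ = (p:ℝ)^(Nat.log s n) := by
        rw [pow_succ]; field_simp
  _ ≤ _ := h2
end main
theorem stmt12 (p s : ℕ) (h : ℕ → ℕ) (hs : 2 ≤ s) (hp : s < p)
    (hmono : ∀ i j, i < j → j < s → h i < h j)
    (hrange : ∀ i, i < s → h i < p)
    (m M : ℝ) (hm : m = sInf {x : ℝ | ∃ n : ℕ, 1 ≤ n ∧ cantorB p s h n = x})
    (hM : M = sSup {x : ℝ | ∃ n : ℕ, 1 ≤ n ∧ cantorB p s h n = x})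
    (lam : ℝ → ℝ)
    (hlam : ∀ x : ℝ, 0 < x →
      Tendsto (fun k : ℕ => cantorA p s h ((s : ℝ) ^ k * x) / ((s : ℝ) ^ k * x) ^ Real.logb s p)
        atTop (nhds (lam x))) :
    ∀ α ∈ Set.Icc m M, volume {x : ℝ | 0 < x ∧ lam x = α} = 0 := by

  intro α hα
  have hθ : 1 < Real.logb s p := theta_gt_one hs hp
  have hp0 : (0:ℝ) < (p:ℝ) := by exact_mod_cast (by omega : 0 < p)
  have hs0 : (0:ℝ) < (s:ℝ) := by exact_mod_cast (by omega : 0 < s)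
  have hs1R : (1:ℝ) < (s:ℝ) := by exact_mod_cast (by omega : 1 < s)
  set θ := Real.logb s p with hθdef
  -- α is positive
  have hm' : 1/(p:ℝ) ≤ m := by
    rw [hm]
    refine le_csInf ⟨cantorB p s h 1, 1, le_refl 1, rfl⟩ ?_
    rintro b ⟨n, hn1, rfl⟩
    exact cantorB_ge hs hp hmono hn1
  have hα0 : 0 < α := lt_of_lt_of_le (by positivity) (hm'.trans hα.1)
  set E := {x : ℝ | 0 < x ∧ lam x = α} with hE
  -- main claim on windows
  have main : ∀ n : ℕ, 1 ≤ n → volume (E ∩ Icc (1/(n:ℝ)) (n:ℝ)) = 0 := by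
    intro n hn
    have hn0 : (0:ℝ) < (n:ℝ) := by exact_mod_cast hn
    set K : ℝ := (n:ℝ) ^ (θ - 1) / (α * θ) with hK
    have hnθ : (0:ℝ) < (n:ℝ) ^ (θ - 1) := Real.rpow_pos_of_pos hn0 _
    have hθ0 : (0:ℝ) < θ := by linarith
    have hK0 : 0 < K := by positivity
    set E' := E ∩ Icc (1/(n:ℝ)) (n:ℝ) with hE'
    -- pairwise closeness inside a cylinder
    have pair : ∀ k N : ℕ, 1 ≤ N → ∀ x ∈ E' ∩ Ico ((N:ℝ)/(s:ℝ)^k) (((N:ℝ)+1)/(s:ℝ)^k),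
        ∀ y ∈ E' ∩ Ico ((N:ℝ)/(s:ℝ)^k) (((N:ℝ)+1)/(s:ℝ)^k), x ≤ y →
        y - x ≤ K / (p:ℝ)^k := by
      intro k N hN x hxmem y hymem hxy
      obtain ⟨⟨⟨hx0, hlx⟩, hxc, -⟩, hxI⟩ := hxmem
      obtain ⟨⟨⟨hy0, hly⟩, -⟩, hyI⟩ := hymem
      have hsk : (0:ℝ) < (s:ℝ)^k := by positivity
      have hpk : (0:ℝ) < (p:ℝ)^k := by positivity
      have hxN : (N:ℝ) ≤ (s:ℝ)^k * x := by
        have := hxI.1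
        rw [div_le_iff₀ hsk] at this
        linarith [this]
      have hyN : (s:ℝ)^k * y < (N:ℝ) + 1 := by
        have := hyI.2
        rw [lt_div_iff₀ hsk] at this
        linarith [this]
      have hkb := keyBound hs hp hmono hrange hlam k N hN hx0 hxy hxN hyN
      rw [hlx, hly] at hkb
      have hgap := rpow_gap hθ hx0 hxy
      have h3 : α * (θ * x ^ (θ-1) * (y - x)) ≤ ((p:ℝ)^k)⁻¹ := by
        have h4 : α * (θ * x ^ (θ-1) * (y-x)) ≤ α * (y ^ θ - x ^ θ) :=
          mul_le_mul_of_nonneg_left hgap hα0.le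
        have h5 : α * (y ^ θ - x ^ θ) = α * y ^ θ - α * x ^ θ := by ring
        linarith
      -- lower bound on x^(θ-1)
      have hx1n : 1/(n:ℝ) ≤ x := hxc
      have hxpow : ((n:ℝ) ^ (θ-1))⁻¹ ≤ x ^ (θ-1) := by
        have e : ((n:ℝ)⁻¹) ^ (θ-1) = ((n:ℝ) ^ (θ-1))⁻¹ := Real.inv_rpow hn0.le _
        rw [← e]
        apply Real.rpow_le_rpow (by positivity) (by rw [one_div] at hx1n; exact hx1n)
          (by linarith)
      have hc0 : (0:ℝ) < α * θ * ((n:ℝ) ^ (θ-1))⁻¹ := by positivity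
      have h6 : α * θ * ((n:ℝ) ^ (θ-1))⁻¹ * (y - x) ≤ ((p:ℝ)^k)⁻¹ := by
        have h7 : α * θ * ((n:ℝ) ^ (θ-1))⁻¹ * (y - x) ≤ α * θ * x ^ (θ-1) * (y - x) := by
          apply mul_le_mul_of_nonneg_right _ (by linarith)
          apply mul_le_mul_of_nonneg_left hxpow (by positivity)
        calc α * θ * ((n:ℝ) ^ (θ-1))⁻¹ * (y - x) ≤ α * θ * x ^ (θ-1) * (y - x) := h7
        _ = α * (θ * x ^ (θ-1) * (y - x)) := by ring
        _ ≤ _ := h3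
      have h8 : y - x ≤ ((p:ℝ)^k)⁻¹ / (α * θ * ((n:ℝ) ^ (θ-1))⁻¹) :=
        (le_div_iff₀ hc0).mpr (by linarith [h6])
      calc y - x ≤ ((p:ℝ)^k)⁻¹ / (α * θ * ((n:ℝ) ^ (θ-1))⁻¹) := h8
      _ = K / (p:ℝ)^k := by rw [hK]; field_simp
    -- volume bound for each k with n ≤ s^k
    have hvol : ∀ k : ℕ, (n:ℝ) ≤ (s:ℝ)^k →
        volume E' ≤ ENNReal.ofReal ((s:ℝ)^k * n * (2*(K/(p:ℝ)^k))) := by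
      intro k hk
      have hsk : (0:ℝ) < (s:ℝ)^k := by positivity
      have hpk : (0:ℝ) < (p:ℝ)^k := by positivity
      set Mk : ℕ := ⌊(s:ℝ)^k * n⌋₊ with hMk
      have cover : E' ⊆ ⋃ N ∈ Finset.Icc 1 Mk,
          (E' ∩ Ico ((N:ℝ)/(s:ℝ)^k) (((N:ℝ)+1)/(s:ℝ)^k)) := by
        intro x hx
        obtain ⟨⟨hx0, hlamx⟩, hxc, hxC⟩ := hx
        have hx1 : (1:ℝ) ≤ (s:ℝ)^k * x := by
          have : (s:ℝ)^k * (1/(n:ℝ)) ≤ (s:ℝ)^k * x := mul_le_mul_of_nonneg_left hxc hsk.le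
          have h2 : (1:ℝ) ≤ (s:ℝ)^k * (1/(n:ℝ)) := by
            rw [mul_one_div, le_div_iff₀ hn0]
            linarith
          linarith
        set N : ℕ := ⌊(s:ℝ)^k * x⌋₊ with hN
        have hN1 : 1 ≤ N := Nat.le_floor (by exact_mod_cast hx1)
        have hNM : N ≤ Mk := Nat.floor_le_floor (by nlinarith)
        have hfl : (N:ℝ) ≤ (s:ℝ)^k * x := Nat.floor_le (by positivity)
        have hfu : (s:ℝ)^k * x < (N:ℝ) + 1 := Nat.lt_floor_add_one _
        refine Set.mem_biUnion (Finset.mem_Icc.2 ⟨hN1, hNM⟩) ?_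
        refine ⟨⟨⟨hx0, hlamx⟩, hxc, hxC⟩, ?_, ?_⟩
        · rw [div_le_iff₀ hsk]; linarith
        · rw [lt_div_iff₀ hsk]; linarith
      have piece : ∀ N ∈ Finset.Icc 1 Mk,
          volume (E' ∩ Ico ((N:ℝ)/(s:ℝ)^k) (((N:ℝ)+1)/(s:ℝ)^k))
            ≤ ENNReal.ofReal (2*(K/(p:ℝ)^k)) := by
        intro N hNmem
        have hN1 : 1 ≤ N := (Finset.mem_Icc.1 hNmem).1
        rcases (E' ∩ Ico ((N:ℝ)/(s:ℝ)^k) (((N:ℝ)+1)/(s:ℝ)^k)).eq_empty_or_nonempty with he | hne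
        · rw [he]; simp
        · obtain ⟨x₀, hx₀⟩ := hne
          have hsub : E' ∩ Ico ((N:ℝ)/(s:ℝ)^k) (((N:ℝ)+1)/(s:ℝ)^k)
              ⊆ Icc (x₀ - K/(p:ℝ)^k) (x₀ + K/(p:ℝ)^k) := by
            intro y hy
            rcases le_total y x₀ with hc | hc
            · have := pair k N hN1 y hy x₀ hx₀ hc
              constructor <;> [linarith; linarith [hK0, inv_pos.2 (show (0:ℝ) < (p:ℝ)^k by positivity), div_pos hK0 (show (0:ℝ) < (p:ℝ)^k by positivity)]]
            · have := pair k N hN1 x₀ hx₀ y hy hc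
              constructor <;> [linarith [div_pos hK0 (show (0:ℝ) < (p:ℝ)^k by positivity)]; linarith]
          calc volume _ ≤ volume (Icc (x₀ - K/(p:ℝ)^k) (x₀ + K/(p:ℝ)^k)) :=
                measure_mono hsub
          _ = ENNReal.ofReal (2*(K/(p:ℝ)^k)) := by
                rw [Real.volume_Icc]; ring_nf
      calc volume E' ≤ volume (⋃ N ∈ Finset.Icc 1 Mk,
            (E' ∩ Ico ((N:ℝ)/(s:ℝ)^k) (((N:ℝ)+1)/(s:ℝ)^k))) := measure_mono cover
      _ ≤ ∑ N ∈ Finset.Icc 1 Mk,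
            volume (E' ∩ Ico ((N:ℝ)/(s:ℝ)^k) (((N:ℝ)+1)/(s:ℝ)^k)) :=
            measure_biUnion_finset_le _ _
      _ ≤ ∑ N ∈ Finset.Icc 1 Mk, ENNReal.ofReal (2*(K/(p:ℝ)^k)) :=
            Finset.sum_le_sum piece
      _ = (Mk : ℝ≥0∞) * ENNReal.ofReal (2*(K/(p:ℝ)^k)) := by
            rw [Finset.sum_const, Nat.card_Icc]; simp [nsmul_eq_mul]
      _ = ENNReal.ofReal ((Mk:ℝ) * (2*(K/(p:ℝ)^k))) := by
            rw [← ENNReal.ofReal_natCast Mk, ← ENNReal.ofReal_mul (by positivity)]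
      _ ≤ ENNReal.ofReal ((s:ℝ)^k * n * (2*(K/(p:ℝ)^k))) := by
            apply ENNReal.ofReal_le_ofReal
            apply mul_le_mul_of_nonneg_right (Nat.floor_le (by positivity)) (by positivity)
    -- limit of the bound is zero
    have hlim : Tendsto (fun k : ℕ => ENNReal.ofReal ((s:ℝ)^k * n * (2*(K/(p:ℝ)^k))))
        atTop (𝓝 0) := by
      have heq : ∀ k : ℕ, (s:ℝ)^k * n * (2*(K/(p:ℝ)^k)) = (2*K*n) * ((s:ℝ)/(p:ℝ))^k := by
        intro k
        have hpk : ((p:ℝ))^k ≠ 0 := by positivity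
        rw [div_pow]
        field_simp
      have hr : Tendsto (fun k : ℕ => (2*K*n) * ((s:ℝ)/(p:ℝ))^k) atTop (𝓝 0) := by
        have h01 : (s:ℝ)/(p:ℝ) < 1 := (div_lt_one hp0).2 (by exact_mod_cast hp)
        have h00 : (0:ℝ) ≤ (s:ℝ)/(p:ℝ) := by positivity
        have := (tendsto_pow_atTop_nhds_zero_of_lt_one h00 h01).const_mul (2*K*n)
        simpa using this
      have := ENNReal.tendsto_ofReal hr
      rw [ENNReal.ofReal_zero] at this
      refine this.congr (fun k => ?_)
      rw [heq k]
    -- conclude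
    have hfin : volume E' ≤ 0 := by
      apply ge_of_tendsto hlim
      filter_upwards [(tendsto_pow_atTop_atTop_of_one_lt hs1R).eventually_ge_atTop (n:ℝ)]
        with k hk using hvol k hk
    exact le_antisymm hfin zero_le
  -- cover (0,∞) by the windows
  have hsub : E ⊆ ⋃ n : ℕ, (E ∩ Icc (1/(((n:ℕ)+1:ℕ):ℝ)) (((n:ℕ)+1:ℕ):ℝ)) := by
    intro x hx
    have hx0 : 0 < x := hx.1
    obtain ⟨n1, h1⟩ := exists_nat_ge x
    obtain ⟨n2, h2⟩ := exists_nat_ge (1/x)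
    refine mem_iUnion.2 ⟨n1 + n2, hx, ?_, ?_⟩
    · have hc : (0:ℝ) < ((n1+n2+1:ℕ):ℝ) := by positivity
      have h2' : 1/x ≤ ((n1+n2+1:ℕ):ℝ) := by
        push_cast
        push_cast at h2
        have : (0:ℝ) ≤ (n1:ℝ) := Nat.cast_nonneg _
        linarith
      rw [div_le_iff₀ hx0] at h2'
      rw [div_le_iff₀ hc]
      push_cast
      push_cast at h2'
      linarith
    · push_cast
      have : (0:ℝ) ≤ (n2:ℝ) := Nat.cast_nonneg _
      linarith
  refine measure_mono_null hsub (measure_iUnion_null fun n => ?_)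
  exact main (n+1) (by omega)
end

section
/- For every α ∈ [m, M], the function x ↦ 𝟙_{E_α}(x)/x is Riemann integrable on [1/s, 1), where E_α = {x ∈ [1/s, 1) : λ(x) ≤ α}; equivalently, the set of discontinuity points of 𝟙_{E_α}(x)/x in [1/s,1) has Lebesgue measure zero. -/
open Real Filter Set MeasureTheory Topology
open scoped Classical ENNReal

section NatLemmas
variable {p s : ℕ} {h : ℕ → ℕ}

lemma ci_zero : cantorInt p s h 0 = 0 := by simp [cantorInt]

lemma ci_rec (hs : 2 ≤ s) {q d : ℕ} (hd : d < s) (hpos : 0 < s * q + d) :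
    cantorInt p s h (s * q + d) = h d + p * cantorInt p s h q := by
  unfold cantorInt
  rw [Nat.digits_def' (by omega : 1 < s) hpos]
  have h1 : (s * q + d) % s = d := by
    rw [mul_comm, add_comm, Nat.add_mul_mod_self_right, Nat.mod_eq_of_lt hd]
  have h2 : (s * q + d) / s = q := by
    rw [mul_comm, add_comm, Nat.add_mul_div_right _ _ (by omega : 0 < s),
      Nat.div_eq_of_lt hd, zero_add]
  rw [h1, h2]
  rfl

lemma ci_succ_lt (hs : 2 ≤ s) (hmono : ∀ i j, i < j → j < s → h i < h j)
    (hrange : ∀ i, i < s → h i < p) (hp : s < p) :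
    ∀ n, cantorInt p s h n < cantorInt p s h (n + 1) := by
  intro n
  induction n using Nat.strong_induction_on with
  | _ n ih =>
    rcases Nat.eq_zero_or_pos n with rfl | hn
    · rw [ci_zero, (by omega : 0 + 1 = s * 0 + 1), ci_rec hs (by omega) (by omega), ci_zero]
      have : h 0 < h 1 := hmono 0 1 (by omega) (by omega)
      omega
    · obtain ⟨q, d, hds, hnqd⟩ : ∃ q d, d < s ∧ n = s * q + d :=
        ⟨n / s, n % s, Nat.mod_lt _ (by omega), (Nat.div_add_mod n s).symm⟩
      rcases Nat.lt_or_ge (d + 1) s with hd1 | hd1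
      · have e1 : cantorInt p s h n = h d + p * cantorInt p s h q := by
          rw [hnqd] at hn ⊢; exact ci_rec hs hds hn
        have e2 : cantorInt p s h (n + 1) = h (d + 1) + p * cantorInt p s h q := by
          have : n + 1 = s * q + (d + 1) := by omega
          rw [this]; exact ci_rec hs hd1 (by omega)
        rw [e1, e2]
        have := hmono d (d + 1) (by omega) hd1
        omega
      · -- d = s - 1
        have hdval : d = s - 1 := by omega
        have e1 : cantorInt p s h n = h d + p * cantorInt p s h q := by
          rw [hnqd] at hn ⊢; exact ci_rec hs hds hn
        have hsq : s * (q + 1) = s * q + s := by ring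
        have e2 : cantorInt p s h (n + 1) = h 0 + p * cantorInt p s h (q + 1) := by
          have : n + 1 = s * (q + 1) + 0 := by omega
          rw [this]; exact ci_rec hs (by omega) (by omega)
        have hq' : q < n := by
          rcases Nat.eq_zero_or_pos q with hq0 | hqpos
          · omega
          · have : q < s * q := by nlinarith
            omega
        have hih : cantorInt p s h q < cantorInt p s h (q + 1) :=
          if hq0 : q = 0 then by
            rw [hq0, ci_zero, (by omega : 0 + 1 = s * 0 + 1), ci_rec hs (by omega) (by omega),
              ci_zero]
            have := hmono 0 1 (by omega) (by omega); omega
          else ih q (by omega)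
        have hds' : h d < p := hrange d hds
        rw [e1, e2]
        nlinarith [hih, hds']

lemma ci_strictMono (hs : 2 ≤ s) (hmono : ∀ i j, i < j → j < s → h i < h j)
    (hrange : ∀ i, i < s → h i < p) (hp : s < p) :
    StrictMono (cantorInt p s h) :=
  strictMono_nat_of_lt_succ (ci_succ_lt hs hmono hrange hp)

lemma ci_spow (hs : 2 ≤ s) (hmono : ∀ i j, i < j → j < s → h i < h j) :
    ∀ k : ℕ, p ^ k ≤ cantorInt p s h (s ^ k) := by
  intro k
  induction k with
  | zero =>
    rw [pow_zero, pow_zero, (by omega : 1 = s * 0 + 1), ci_rec hs (by omega) (by omega), ci_zero]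
    have := hmono 0 1 (by omega) (by omega); omega
  | succ k ihk =>
    have e : cantorInt p s h (s ^ (k + 1)) = h 0 + p * cantorInt p s h (s ^ k) := by
      have : s ^ (k + 1) = s * s ^ k + 0 := by ring
      rw [this]; exact ci_rec hs (by omega) (by positivity)
    rw [e, pow_succ, mul_comm (p ^ k) p]
    have : p * p ^ k ≤ p * cantorInt p s h (s ^ k) := Nat.mul_le_mul_left p ihk
    omega

end NatLemmas

set_option maxHeartbeats 4000000 in
theorem stmt13 (p s : ℕ) (h : ℕ → ℕ) (hs : 2 ≤ s) (hp : s < p)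
    (hmono : ∀ i j, i < j → j < s → h i < h j)
    (hrange : ∀ i, i < s → h i < p)
    (m M : ℝ) (hm : m = sInf {x : ℝ | ∃ n : ℕ, 1 ≤ n ∧ cantorB p s h n = x})
    (hM : M = sSup {x : ℝ | ∃ n : ℕ, 1 ≤ n ∧ cantorB p s h n = x})
    (lam : ℝ → ℝ)
    (hlam : ∀ x : ℝ, 0 < x →
      Tendsto (fun k : ℕ => cantorA p s h ((s : ℝ) ^ k * x) / ((s : ℝ) ^ k * x) ^ Real.logb s p)
        atTop (nhds (lam x))) :
    ∀ α ∈ Set.Icc m M,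
      volume {x : ℝ | x ∈ Set.Ico ((s : ℝ)⁻¹) 1 ∧
        ¬ ContinuousWithinAt
            (Set.indicator {y : ℝ | y ∈ Set.Ico ((s : ℝ)⁻¹) 1 ∧ lam y ≤ α} (fun y => 1 / y))
            (Set.Ico ((s : ℝ)⁻¹) 1) x} = 0 := by
  intro α hα
  obtain ⟨hαm, hαM⟩ := hα
  have hs0 : (0:ℝ) < s := by positivity
  have hs1 : (1:ℝ) < s := by exact_mod_cast (by omega : 1 < s)
  have hp1 : (1:ℝ) < p := by exact_mod_cast (by omega : 1 < p)
  have hp0 : (0:ℝ) < p := by positivity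
  have hsp : (s:ℝ) < p := by exact_mod_cast hp
  set θ := Real.logb s p with hθdef
  have hθ1 : 1 < θ := by
    rw [hθdef, ← Real.logb_self_eq_one hs1]
    exact Real.logb_lt_logb hs1 hs0 hsp
  have hθpos : (0:ℝ) < θ := by linarith
  have hsθ : (s:ℝ) ^ θ = p := Real.rpow_logb hs0 hs1.ne' hp0
  set c : ℝ := θ⁻¹ with hcdef
  have hc0 : 0 < c := by positivity
  have hc1 : c < 1 := by
    rw [hcdef]; rw [inv_lt_one_iff₀]; right; exact hθ1
  have hpc : (p:ℝ) ^ c = s := by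
    rw [hcdef, hθdef, Real.inv_logb]
    exact Real.rpow_logb hp0 hp1.ne' hs0
  have hpkθ : ∀ k : ℕ, ((s:ℝ) ^ k) ^ θ = (p:ℝ) ^ k := by
    intro k
    rw [← Real.rpow_natCast (s:ℝ) k, ← Real.rpow_natCast (p:ℝ) k, ← hsθ,
      ← Real.rpow_mul hs0.le, ← Real.rpow_mul hs0.le, mul_comm]
  have hpkc : ∀ k : ℕ, ((p:ℝ) ^ k) ^ c = (s:ℝ) ^ k := by
    intro k
    rw [← Real.rpow_natCast (p:ℝ) k, ← Real.rpow_natCast (s:ℝ) k, ← hpc,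
      ← Real.rpow_mul hp0.le, ← Real.rpow_mul hp0.le, mul_comm]
  -- F1: convergence of a(s^k x)/p^k to x^θ * lam x
  have F1 : ∀ x : ℝ, 0 < x → Tendsto
      (fun k : ℕ => (cantorInt p s h ⌊(s:ℝ) ^ k * x⌋₊ : ℝ) / (p:ℝ) ^ k)
      atTop (nhds (x ^ θ * lam x)) := by
    intro x hx
    have := (hlam x hx).mul_const (x ^ θ)
    rw [mul_comm] at this
    refine this.congr (fun k => ?_)
    have hsk : (0:ℝ) < (s:ℝ) ^ k := by positivity
    have hxθ : (0:ℝ) < x ^ θ := Real.rpow_pos_of_pos hx θ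
    have he : ((s:ℝ) ^ k * x) ^ θ = (p:ℝ) ^ k * x ^ θ := by
      rw [Real.mul_rpow hsk.le hx.le, hpkθ]
    rw [cantorA, he]
    field_simp
  -- monotonicity of x ↦ x^θ * lam x on positives
  have F2 : ∀ x y : ℝ, 0 < x → x ≤ y → x ^ θ * lam x ≤ y ^ θ * lam y := by
    intro x y hx hxy
    refine le_of_tendsto_of_tendsto' (F1 x hx) (F1 y (lt_of_lt_of_le hx hxy)) (fun k => ?_)
    have hmonoSM := ci_strictMono (p := p) (h := h) hs hmono hrange hp
    have : cantorInt p s h ⌊(s:ℝ) ^ k * x⌋₊ ≤ cantorInt p s h ⌊(s:ℝ) ^ k * y⌋₊ :=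
      hmonoSM.monotone (Nat.floor_mono (by nlinarith [pow_pos hs0 k]))
    have hpk : (0:ℝ) < (p:ℝ) ^ k := by positivity
    have hcast : (cantorInt p s h ⌊(s:ℝ) ^ k * x⌋₊ : ℝ) ≤ (cantorInt p s h ⌊(s:ℝ) ^ k * y⌋₊ : ℝ) := by
      exact_mod_cast this
    gcongr

  -- F3: sandwich
  have F3 : ∀ x : ℝ, (s:ℝ)⁻¹ ≤ x → ∀ k : ℕ, 1 ≤ k →
      (cantorInt p s h ⌊(s:ℝ) ^ k * x⌋₊ : ℝ) / (p:ℝ) ^ k ≤ x ^ θ * lam x ∧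
      x ^ θ * lam x ≤ ((cantorInt p s h ⌊(s:ℝ) ^ k * x⌋₊ : ℝ) + 1) / (p:ℝ) ^ k := by
    intro x hx1 k hk
    have hx : 0 < x := lt_of_lt_of_le (by positivity) hx1
    set C : ℕ → ℝ := fun j => (cantorInt p s h ⌊(s:ℝ) ^ j * x⌋₊ : ℝ) / (p:ℝ) ^ j with hC
    have hstep : ∀ j : ℕ, 1 ≤ j → C j ≤ C (j+1) ∧
        C (j+1) ≤ C j + ((p:ℝ) - 1)/(p:ℝ)^(j+1) := by
      intro j hj
      set y := (s:ℝ) ^ j * x with hy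
      have hy1 : 1 ≤ y := by
        have h1 : (s:ℝ) ≤ (s:ℝ) ^ j := by
          calc (s:ℝ) = (s:ℝ)^1 := (pow_one _).symm
          _ ≤ (s:ℝ)^j := pow_le_pow_right₀ hs1.le hj
        have h2 : (s:ℝ) * (s:ℝ)⁻¹ ≤ (s:ℝ)^j * x := by
          apply mul_le_mul h1 hx1 (by positivity) (by positivity)
        rwa [mul_inv_cancel₀ hs0.ne'] at h2
      have hy0 : 0 < y := by linarith
      have hsy1 : 1 ≤ (s:ℝ) * y := by nlinarith
      set N := ⌊(s:ℝ) * y⌋₊ with hN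
      set q := ⌊y⌋₊ with hq
      have hq1 : 1 ≤ q := Nat.le_floor (by exact_mod_cast hy1)
      have hNq : N / s = q := by
        rw [hN, hq, ← Nat.floor_div_natCast ((s:ℝ) * y) s, mul_div_cancel_left₀ _ (by exact_mod_cast hs0.ne' : (s:ℝ) ≠ 0)]
      have hN1 : 1 ≤ N := Nat.le_floor (by exact_mod_cast hsy1)
      set d := N % s with hd
      have hds : d < s := Nat.mod_lt _ (by omega)
      have hNqd : N = s * q + d := by rw [← hNq]; exact (Nat.div_add_mod N s).symm
      have hciN : cantorInt p s h N = h d + p * cantorInt p s h q := by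
        rw [hNqd]; exact ci_rec hs hds (by omega)
      have hfloor : ⌊(s:ℝ)^(j+1) * x⌋₊ = N := by
        rw [hN, hy]; congr 1; rw [pow_succ]; ring
      have hCj1 : C (j+1) = C j + (h d : ℝ) / (p:ℝ)^(j+1) := by
        rw [hC]
        simp only [hfloor, hciN]
        have hfj : ⌊(s:ℝ)^j * x⌋₊ = q := by rw [hq, hy]
        rw [hfj]
        push_cast
        have hpk : ((p:ℝ)) ^ (j+1) = p * (p:ℝ)^j := by ring
        field_simp
        ring
      constructor
      · rw [hCj1]
        have : (0:ℝ) ≤ (h d : ℝ) / (p:ℝ)^(j+1) := by positivity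
        linarith
      · rw [hCj1]
        have hhd : (h d : ℝ) ≤ (p:ℝ) - 1 := by
          have := hrange d hds
          have : (h d : ℝ) < p := by exact_mod_cast this
          have hnat : h d + 1 ≤ p := hrange d hds
          have : (h d : ℝ) + 1 ≤ p := by exact_mod_cast hnat
          linarith
        have hpj : (0:ℝ) < (p:ℝ)^(j+1) := by positivity
        have hdiv : (h d : ℝ) / (p:ℝ)^(j+1) ≤ ((p:ℝ) - 1) / (p:ℝ)^(j+1) := by gcongr
        linarith
    have hiter : ∀ j : ℕ, k ≤ j → C k ≤ C j ∧ C j ≤ C k + 1/(p:ℝ)^k - 1/(p:ℝ)^j := by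
      intro j hkj
      induction j, hkj using Nat.le_induction with
      | base => constructor <;> simp
      | succ j hkj ih =>
        obtain ⟨ih1, ih2⟩ := ih
        obtain ⟨st1, st2⟩ := hstep j (le_trans hk hkj)
        constructor
        · linarith
        · have hgeom : ((p:ℝ) - 1)/(p:ℝ)^(j+1) = 1/(p:ℝ)^j - 1/(p:ℝ)^(j+1) := by
            have hpj : ((p:ℝ))^j ≠ 0 := by positivity
            field_simp
            ring
          linarith
    constructor
    · refine ge_of_tendsto (F1 x hx) ?_
      filter_upwards [eventually_ge_atTop k] with j hj
      exact (hiter j hj).1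
    · have : x ^ θ * lam x ≤ C k + 1/(p:ℝ)^k := by
        refine le_of_tendsto (F1 x hx) ?_
        filter_upwards [eventually_ge_atTop k] with j hj
        have := (hiter j hj).2
        have hpj : (0:ℝ) < 1/(p:ℝ)^j := by positivity
        linarith
      have hCk : C k = (cantorInt p s h ⌊(s:ℝ) ^ k * x⌋₊ : ℝ) / (p:ℝ) ^ k := rfl
      rw [hCk] at this
      rw [add_div]
      linarith
  -- α is positive
  have hSne : {x : ℝ | ∃ n : ℕ, 1 ≤ n ∧ cantorB p s h n = x}.Nonempty :=
    ⟨cantorB p s h 1, 1, le_refl 1, rfl⟩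
  have hlow : ∀ b ∈ {x : ℝ | ∃ n : ℕ, 1 ≤ n ∧ cantorB p s h n = x}, 1/(p:ℝ) ≤ b := by
    rintro b ⟨n, hn1, rfl⟩
    set k := Nat.log s n with hk
    have hkn : s ^ k ≤ n := Nat.pow_log_le_self s (by omega)
    have hnk : n < s ^ (k+1) := Nat.lt_pow_succ_log_self (by omega) n
    have han : (p:ℝ)^k ≤ (cantorInt p s h n : ℝ) := by
      have h1 : p ^ k ≤ cantorInt p s h (s ^ k) := ci_spow hs hmono k
      have h2 : cantorInt p s h (s ^ k) ≤ cantorInt p s h n :=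
        (ci_strictMono hs hmono hrange hp).monotone hkn
      exact_mod_cast le_trans h1 h2
    have hnθ : (n:ℝ) ^ θ ≤ (p:ℝ)^(k+1) := by
      have h1 : (n:ℝ) ^ θ ≤ ((s:ℝ)^(k+1)) ^ θ := by
        apply Real.rpow_le_rpow (by positivity) _ hθpos.le
        exact_mod_cast hnk.le
      rwa [hpkθ (k+1)] at h1
    have hnθ0 : (0:ℝ) < (n:ℝ) ^ θ := Real.rpow_pos_of_pos (by exact_mod_cast hn1) θ
    rw [cantorB, div_le_div_iff₀ hp0 hnθ0]
    calc 1 * (n:ℝ)^θ = (n:ℝ)^θ := one_mul _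
    _ ≤ (p:ℝ)^(k+1) := hnθ
    _ = (p:ℝ)^k * p := by ring
    _ ≤ (cantorInt p s h n : ℝ) * p := by
        apply mul_le_mul_of_nonneg_right han hp0.le
  have hmlow : 1/(p:ℝ) ≤ m := by
    rw [hm]; exact le_csInf hSne hlow
  have hα0 : 0 < α := lt_of_lt_of_le (by positivity) (le_trans hmlow hαm)
  have hαc0 : (0:ℝ) < α ^ c := Real.rpow_pos_of_pos hα0 c
  -- the level set is null
  set Nset := {x : ℝ | x ∈ Set.Ico ((s:ℝ)⁻¹) 1 ∧ lam x = α} with hNset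
  have hNnull : volume Nset = 0 := by
    have hcover : ∀ K : ℕ, Nset ⊆ ⋃ n ∈ Finset.Ico (s^K) (s^(K+1)),
        Set.Icc (((cantorInt p s h n : ℝ)/(α * (p:ℝ)^(K+1)))^c)
          ((((cantorInt p s h n : ℝ)+1)/(α * (p:ℝ)^(K+1)))^c) := by
      intro K x hxN
      obtain ⟨⟨hx1, hx2⟩, hxα⟩ := hxN
      have hx : (0:ℝ) < x := lt_of_lt_of_le (by positivity) hx1
      set k := K + 1 with hkdef
      set n := ⌊(s:ℝ) ^ k * x⌋₊ with hn
      obtain ⟨hlo, hhi⟩ := F3 x hx1 k (by omega)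
      rw [hxα] at hlo hhi
      have hnlow : s ^ K ≤ n := by
        apply Nat.le_floor
        push_cast
        calc ((s:ℝ))^K = (s:ℝ)^(K+1) * (s:ℝ)⁻¹ := by
              rw [pow_succ]; field_simp
        _ ≤ (s:ℝ)^(K+1) * x := by
              apply mul_le_mul_of_nonneg_left hx1 (by positivity)
      have hnhigh : n < s ^ (K+1) := by
        rw [hn, Nat.floor_lt (by positivity)]
        push_cast
        nlinarith [pow_pos hs0 (K+1)]
      simp only [Set.mem_iUnion, Finset.mem_Ico]
      refine ⟨n, ⟨hnlow, hnhigh⟩, ?_, ?_⟩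
      · -- lower endpoint ≤ x
        have h1 : (cantorInt p s h n : ℝ)/(α * (p:ℝ)^k) ≤ x ^ θ := by
          rw [mul_comm α ((p:ℝ)^k), ← div_div, div_le_iff₀ hα0]
          exact hlo
        calc ((cantorInt p s h n : ℝ)/(α * (p:ℝ)^(K+1)))^c
            ≤ (x ^ θ) ^ c := Real.rpow_le_rpow (by positivity) h1 hc0.le
        _ = x := by rw [hcdef]; exact Real.rpow_rpow_inv hx.le hθpos.ne'
      · -- x ≤ upper endpoint
        have h2 : x ^ θ ≤ ((cantorInt p s h n : ℝ)+1)/(α * (p:ℝ)^k) := by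
          rw [mul_comm α ((p:ℝ)^k), ← div_div, le_div_iff₀ hα0]
          exact hhi
        calc x = (x ^ θ) ^ c := by rw [hcdef]; exact (Real.rpow_rpow_inv hx.le hθpos.ne').symm
        _ ≤ (((cantorInt p s h n : ℝ)+1)/(α * (p:ℝ)^(K+1)))^c :=
            Real.rpow_le_rpow (by positivity) h2 hc0.le
    have hbound : ∀ K : ℕ, volume Nset ≤ ENNReal.ofReal (((s:ℝ)/p)^K / α^c) := by
      intro K
      have hterm : ∀ n ∈ Finset.Ico (s^K) (s^(K+1)),
          volume (Set.Icc (((cantorInt p s h n : ℝ)/(α * (p:ℝ)^(K+1)))^c)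
            ((((cantorInt p s h n : ℝ)+1)/(α * (p:ℝ)^(K+1)))^c))
          ≤ ENNReal.ofReal (((s:ℝ)/p)^K / (α^c * (s:ℝ)^(K+1))) := by
        intro n hnmem
        rw [Finset.mem_Ico] at hnmem
        set a : ℝ := (cantorInt p s h n : ℝ) with ha
        have hage : (p:ℝ)^K ≤ a := by
          have h1 : p ^ K ≤ cantorInt p s h (s ^ K) := ci_spow hs hmono K
          have h2 : cantorInt p s h (s ^ K) ≤ cantorInt p s h n :=
            (ci_strictMono hs hmono hrange hp).monotone hnmem.1
          rw [ha]; exact_mod_cast le_trans h1 h2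
        have ha1 : (1:ℝ) ≤ a := le_trans (one_le_pow₀ hp1.le) hage
        have ha0 : (0:ℝ) < a := by linarith
        rw [Real.volume_Icc]
        apply ENNReal.ofReal_le_ofReal
        have hden : (α * (p:ℝ)^(K+1))^c = α^c * (s:ℝ)^(K+1) := by
          rw [Real.mul_rpow hα0.le (by positivity), hpkc (K+1)]
        rw [Real.div_rpow (by linarith) (by positivity), Real.div_rpow ha0.le (by positivity),
          hden, div_sub_div_same]
        -- key: (a+1)^c - a^c ≤ (s/p)^K
        have key : (a+1)^c - a^c ≤ ((s:ℝ)/p)^K := by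
          have ht : (a+1)^c ≤ a^c + c * (a^c / a) := by
            have htc : (1 + 1/a)^c * 1^(1-c) ≤ c * (1 + 1/a) + (1-c) * 1 :=
              Real.geom_mean_le_arith_mean2_weighted hc0.le (by linarith) (by positivity)
                zero_le_one (by ring)
            rw [Real.one_rpow, mul_one] at htc
            have hsplit : a + 1 = a * (1 + 1/a) := by field_simp
            rw [hsplit, Real.mul_rpow ha0.le (by positivity)]
            have hacpos : (0:ℝ) < a^c := Real.rpow_pos_of_pos ha0 c
            calc a^c * (1+1/a)^c ≤ a^c * (c * (1 + 1/a) + (1-c)) := by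
                  apply mul_le_mul_of_nonneg_left _ hacpos.le
                  linarith
            _ = a^c + c * (a^c / a) := by field_simp; ring
          have hmono2 : a^c / a ≤ ((p:ℝ)^K)^c / (p:ℝ)^K := by
            have hpK0 : (0:ℝ) < (p:ℝ)^K := by positivity
            have hbase : (1:ℝ) ≤ a / (p:ℝ)^K := (one_le_div hpK0).mpr hage
            have := Real.rpow_le_rpow_of_exponent_le hbase (le_of_lt hc1)
            rw [Real.rpow_one, Real.div_rpow ha0.le hpK0.le] at this
            rw [div_le_div_iff₀ ha0 hpK0]
            rw [div_le_div_iff₀ (by positivity) hpK0] at this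
            nlinarith [Real.rpow_pos_of_pos hpK0 c, Real.rpow_pos_of_pos ha0 c]
          have hfin : ((p:ℝ)^K)^c / (p:ℝ)^K = ((s:ℝ)/p)^K := by
            rw [hpkc K, div_pow]
          have hc_le : c * (a^c/a) ≤ a^c/a := by
            have : (0:ℝ) ≤ a^c/a := by positivity
            nlinarith
          linarith [le_trans hc_le (le_of_le_of_eq hmono2 hfin)]
        gcongr
      calc volume Nset
          ≤ volume (⋃ n ∈ Finset.Ico (s^K) (s^(K+1)),
              Set.Icc (((cantorInt p s h n : ℝ)/(α * (p:ℝ)^(K+1)))^c)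
                ((((cantorInt p s h n : ℝ)+1)/(α * (p:ℝ)^(K+1)))^c)) :=
            measure_mono (hcover K)
      _ ≤ ∑ n ∈ Finset.Ico (s^K) (s^(K+1)),
            volume (Set.Icc (((cantorInt p s h n : ℝ)/(α * (p:ℝ)^(K+1)))^c)
              ((((cantorInt p s h n : ℝ)+1)/(α * (p:ℝ)^(K+1)))^c)) :=
            measure_biUnion_finset_le _ _
      _ ≤ ∑ n ∈ Finset.Ico (s^K) (s^(K+1)),
            ENNReal.ofReal (((s:ℝ)/p)^K / (α^c * (s:ℝ)^(K+1))) :=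
            Finset.sum_le_sum hterm
      _ = (Finset.Ico (s^K) (s^(K+1))).card •
            ENNReal.ofReal (((s:ℝ)/p)^K / (α^c * (s:ℝ)^(K+1))) := by
            rw [Finset.sum_const]
      _ ≤ (s^(K+1)) • ENNReal.ofReal (((s:ℝ)/p)^K / (α^c * (s:ℝ)^(K+1))) := by
            exact nsmul_le_nsmul_left (zero_le) (by rw [Nat.card_Ico]; omega)
      _ = ENNReal.ofReal (((s:ℝ)/p)^K / α^c) := by
            rw [nsmul_eq_mul, ← ENNReal.ofReal_natCast (s^(K+1)),
              ← ENNReal.ofReal_mul (by positivity)]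
            congr 1
            push_cast
            have hsK : ((s:ℝ))^(K+1) ≠ 0 := by positivity
            field_simp
    have htend : Tendsto (fun K : ℕ => ENNReal.ofReal (((s:ℝ)/p)^K / α^c)) atTop (𝓝 0) := by
      have hr : Tendsto (fun K : ℕ => ((s:ℝ)/p)^K / α^c) atTop (𝓝 0) := by
        have h0 : Tendsto (fun K : ℕ => ((s:ℝ)/p)^K) atTop (𝓝 0) := by
          apply tendsto_pow_atTop_nhds_zero_of_lt_one (by positivity)
          rw [div_lt_one hp0]; exact hsp
        simpa using h0.div_const (α^c)
      have h2 := (ENNReal.continuous_ofReal.tendsto 0).comp hr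
      simpa [Function.comp_def] using h2
    exact le_antisymm (ge_of_tendsto' htend hbound) (zero_le)
  -- monotone extension
  set clamp : ℝ → ℝ := fun y => min (max y ((s:ℝ)⁻¹)) 1 with hclamp
  have hsinv1 : (s:ℝ)⁻¹ ≤ 1 := by
    rw [inv_le_one_iff₀]; right; linarith
  have hclamp_mem : ∀ y : ℝ, (s:ℝ)⁻¹ ≤ clamp y ∧ clamp y ≤ 1 := by
    intro y
    refine ⟨le_min (le_max_right _ _) hsinv1, min_le_right _ _⟩
  have hclamp_id : ∀ y ∈ Set.Ico ((s:ℝ)⁻¹) 1, clamp y = y := by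
    rintro y ⟨hy1, hy2⟩
    rw [hclamp]
    simp only
    rw [max_eq_left hy1, min_eq_left hy2.le]
  set gam : ℝ → ℝ := fun y => (clamp y)^θ * lam (clamp y) with hgam
  have hgam_mono : Monotone gam := by
    intro u v huv
    have hcu := hclamp_mem u
    have hcv := hclamp_mem v
    have hcuv : clamp u ≤ clamp v := by
      apply min_le_min _ (le_refl 1)
      exact max_le_max huv (le_refl _)
    exact F2 _ _ (lt_of_lt_of_le (by positivity) hcu.1) hcuv
  have hgam_eq : ∀ y ∈ Set.Ico ((s:ℝ)⁻¹) 1, gam y = y^θ * lam y := by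
    intro y hy
    rw [hgam]; simp only; rw [hclamp_id y hy]
  have hDnull : volume {x : ℝ | ¬ContinuousAt gam x} = 0 :=
    (hgam_mono.countable_not_continuousAt).measure_zero _
  -- final assembly
  set S : Set ℝ := Set.Ico ((s:ℝ)⁻¹) 1 with hSdef
  set E : Set ℝ := {y : ℝ | y ∈ S ∧ lam y ≤ α} with hEdef
  set F : ℝ → ℝ := Set.indicator E (fun y => 1/y) with hFdef
  have hsub : {x : ℝ | x ∈ S ∧ ¬ ContinuousWithinAt F S x} ⊆
      {x : ℝ | ¬ContinuousAt gam x} ∪ Nset := by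
    intro x hx
    obtain ⟨hxS, hxbad⟩ := hx
    by_contra hxn
    rw [Set.mem_union] at hxn
    push_neg at hxn
    obtain ⟨hxc, hxN⟩ := hxn
    rw [Set.mem_setOf_eq, not_not] at hxc
    have hxα : lam x ≠ α := by
      intro hcontra
      exact hxN ⟨hxS, hcontra⟩
    have hx0 : 0 < x := lt_of_lt_of_le (by positivity) hxS.1
    have hxθ0 : 0 < x ^ θ := Real.rpow_pos_of_pos hx0 θ
    have hrpowc : ContinuousAt (fun y : ℝ => α * y^θ) x :=
      continuousAt_const.mul (Real.continuousAt_rpow_const x θ (Or.inr hθpos.le))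
    rcases lt_or_gt_of_ne hxα with hxlt | hxgt
    · -- lam x < α : x is in the "interior" of E
      have hglt : gam x < α * x^θ := by
        rw [hgam_eq x hxS, mul_comm α]
        exact mul_lt_mul_of_pos_left hxlt hxθ0
      have hev : ∀ᶠ y in 𝓝 x, gam y < α * y^θ := hxc.eventually_lt hrpowc hglt
      apply hxbad
      have hcw : ContinuousWithinAt (fun y : ℝ => 1/y) S x :=
        (continuousAt_const.div continuousAt_id hx0.ne').continuousWithinAt
      apply hcw.congr_of_eventuallyEq
      · filter_upwards [mem_nhdsWithin_of_mem_nhds hev, eventually_mem_nhdsWithin] with y h1 h2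
        have hyθ0 : 0 < y ^ θ := Real.rpow_pos_of_pos
          (lt_of_lt_of_le (by positivity) h2.1) θ
        have hylam : lam y < α := by
          rw [hgam_eq y h2, mul_comm α] at h1
          exact lt_of_mul_lt_mul_left h1 hyθ0.le
        rw [hFdef]
        have hyE : y ∈ E := by rw [hEdef]; exact ⟨h2, hylam.le⟩
        exact Set.indicator_of_mem hyE _
      · rw [hFdef]
        have hxE : x ∈ E := by rw [hEdef]; exact ⟨hxS, hxlt.le⟩
        exact Set.indicator_of_mem hxE _
    · -- α < lam x : x is outside E
      have hglt : α * x^θ < gam x := by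
        rw [hgam_eq x hxS, mul_comm α]
        exact mul_lt_mul_of_pos_left hxgt hxθ0
      have hev : ∀ᶠ y in 𝓝 x, α * y^θ < gam y := hrpowc.eventually_lt hxc hglt
      apply hxbad
      apply (continuousWithinAt_const (b := (0:ℝ))).congr_of_eventuallyEq
      · filter_upwards [mem_nhdsWithin_of_mem_nhds hev, eventually_mem_nhdsWithin] with y h1 h2
        have hyθ0 : 0 < y ^ θ := Real.rpow_pos_of_pos
          (lt_of_lt_of_le (by positivity) h2.1) θ
        have hylam : α < lam y := by
          rw [hgam_eq y h2, mul_comm α] at h1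
          exact lt_of_mul_lt_mul_left h1 hyθ0.le
        rw [hFdef]
        have hyE : y ∉ E := by
          rw [hEdef]; intro hmem; exact absurd hmem.2 (not_le.mpr hylam)
        exact Set.indicator_of_notMem hyE _
      · rw [hFdef]
        have hxE : x ∉ E := by
          rw [hEdef]; intro hmem; exact absurd hmem.2 (not_le.mpr hxgt)
        exact Set.indicator_of_notMem hxE _
  refine le_antisymm ?_ (zero_le)
  calc volume {x : ℝ | x ∈ S ∧ ¬ ContinuousWithinAt F S x}
      ≤ volume ({x : ℝ | ¬ContinuousAt gam x} ∪ Nset) := measure_mono hsub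
  _ ≤ volume {x : ℝ | ¬ContinuousAt gam x} + volume Nset := measure_union_le _ _
  _ = 0 := by rw [hDnull, hNnull, add_zero]
end
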